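/- arXiv:1602.07839 — 5 statements merged into one kernel-verified Lean document; each statement's English description precedes it below -/
import Mathlib

section
/- The polytope P_n = conv([-1,0]^n ∪ [0,1]^n) in R^n has exactly 2^{n+1} - 2 vertices, and the only integer point of P_n that is not a vertex is the origin. -/
open Set

namespace Stmt0Aux

variable {n : ℕ}

def Cm (n : ℕ) : Set (Fin n → ℝ) := {x | ∀ i, x i ∈ Set.Icc (-1 : ℝ) 0}
def Cp (n : ℕ) : Set (Fin n → ℝ) := {x | ∀ i, x i ∈ Set.Icc (0 : ℝ) 1}
def Pset (n : ℕ) : Set (Fin n → ℝ) := convexHull ℝ (Cm n ∪ Cp n)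

lemma convex_Cm : Convex ℝ (Cm n) := by
  intro x hx y hy a b ha hb hab i
  exact (convex_Icc (-1 : ℝ) 0) (hx i) (hy i) ha hb hab

lemma convex_Cp : Convex ℝ (Cp n) := by
  intro x hx y hy a b ha hb hab i
  exact (convex_Icc (0 : ℝ) 1) (hx i) (hy i) ha hb hab

lemma zero_mem_Cm : (0 : Fin n → ℝ) ∈ Cm n := fun i => by norm_num [Cm]
lemma zero_mem_Cp : (0 : Fin n → ℝ) ∈ Cp n := fun i => by norm_num [Cp]

lemma mem_P_iff {w : Fin n → ℝ} :
    w ∈ Pset n ↔ ∃ u ∈ Cm n, ∃ v ∈ Cp n, ∃ t s : ℝ,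
      0 ≤ t ∧ 0 ≤ s ∧ t + s = 1 ∧ t • u + s • v = w := by
  rw [Pset, convex_Cm.convexHull_union convex_Cp ⟨0, zero_mem_Cm⟩ ⟨0, zero_mem_Cp⟩,
    mem_convexJoin]
  constructor
  · rintro ⟨u, hu, v, hv, t, s, ht, hs, hts, hw⟩
    exact ⟨u, hu, v, hv, t, s, ht, hs, hts, hw⟩
  · rintro ⟨u, hu, v, hv, t, s, ht, hs, hts, hw⟩
    exact ⟨u, hu, v, hv, t, s, ht, hs, hts, hw⟩

lemma Cm_subset_P : Cm n ⊆ Pset n := (subset_union_left).trans (subset_convexHull ℝ _)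
lemma Cp_subset_P : Cp n ⊆ Pset n := (subset_union_right).trans (subset_convexHull ℝ _)

end Stmt0Aux

namespace Stmt0Aux

lemma extreme_plus {n : ℕ} {x : Fin n → ℝ} (hx : ∀ i, x i = 0 ∨ x i = 1) (hx0 : x ≠ 0) :
    x ∈ Set.extremePoints ℝ (Pset n) := by
  classical
  set c : Fin n → ℝ := fun i => if x i = 1 then 1 else -(1/(n+1)) with hc
  set f : (Fin n → ℝ) → ℝ := fun w => ∑ i, c i * w i with hf
  have hlin : ∀ (t s : ℝ) (u v : Fin n → ℝ), f (t • u + s • v) = t * f u + s * f v := by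
    intro t s u v
    simp only [hf, Pi.add_apply, Pi.smul_apply, smul_eq_mul, Finset.mul_sum,
      ← Finset.sum_add_distrib]
    exact Finset.sum_congr rfl fun i _ => by ring
  have hn1 : (0:ℝ) < 1/(n+1) := by positivity
  obtain ⟨i0, hi0⟩ : ∃ i, x i = 1 := by
    by_contra h
    push_neg at h
    exact hx0 (funext fun i => (hx i).resolve_right (h i))
  have hfx1 : (1:ℝ) ≤ f x := by
    have hnn : ∀ i ∈ Finset.univ, (0:ℝ) ≤ c i * x i := by
      intro i _
      rcases hx i with h | h <;> simp [hc, h]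
    calc (1:ℝ) = c i0 * x i0 := by simp [hc, hi0]
    _ ≤ f x := Finset.single_le_sum hnn (Finset.mem_univ i0)
  have hterm : ∀ v ∈ Cp n, ∀ i, c i * v i ≤ c i * x i := by
    intro v hv i
    rcases hx i with h | h
    · have h1 : c i = -(1/(n+1)) := by
        simp only [hc]
        rw [if_neg (by rw [h]; norm_num)]
      rw [h1, h]
      nlinarith [(hv i).1]
    · have h1 : c i = 1 := by simp [hc, h]
      rw [h1, h]
      simpa using (hv i).2
  have hCp_le : ∀ v ∈ Cp n, f v ≤ f x := fun v hv =>
    Finset.sum_le_sum (fun i _ => hterm v hv i)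
  have hCp_eq : ∀ v ∈ Cp n, f v = f x → v = x := by
    intro v hv hfv
    have := (Finset.sum_eq_sum_iff_of_le (fun i _ => hterm v hv i)).1 hfv
    funext i
    have hi := this i (Finset.mem_univ i)
    have hci : c i ≠ 0 := by
      rcases hx i with h | h
      · simp only [hc]
        rw [if_neg (by rw [h]; norm_num)]
        exact neg_ne_zero.2 (by positivity)
      · simp [hc, h]
    exact mul_left_cancel₀ hci hi
  have hCm_lt : ∀ u ∈ Cm n, f u < f x := by
    intro u hu
    have hle : f u ≤ (n : ℝ) * (1/(n+1)) := by
      have step : ∀ i ∈ Finset.univ, c i * u i ≤ 1/(n+1) := by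
        intro i _
        rcases hx i with h | h
        · have h1 : c i = -(1/(n+1)) := by
            simp only [hc]; rw [if_neg (by rw [h]; norm_num)]
          rw [h1]
          nlinarith [(hu i).1, (hu i).2]
        · have h1 : c i = 1 := by simp [hc, h]
          rw [h1, one_mul]
          nlinarith [(hu i).2]
      calc f u ≤ Finset.univ.card • (1/(n+1) : ℝ) := Finset.sum_le_card_nsmul _ _ _ step
      _ = (n : ℝ) * (1/(n+1)) := by simp [nsmul_eq_mul]
    have : (n : ℝ) * (1/(n+1)) < 1 := by
      rw [mul_one_div, div_lt_one (by positivity)]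
      linarith
    linarith
  have hP_le : ∀ w ∈ Pset n, f w ≤ f x := by
    intro w hw
    obtain ⟨u, hu, v, hv, t, s, ht, hs, hts, rfl⟩ := mem_P_iff.1 hw
    rw [hlin]
    nlinarith [hCm_lt u hu, hCp_le v hv]
  have hP_eq : ∀ w ∈ Pset n, f w = f x → w = x := by
    intro w hw hfw
    obtain ⟨u, hu, v, hv, t, s, ht, hs, hts, rfl⟩ := mem_P_iff.1 hw
    rw [hlin] at hfw
    have hfu := hCm_lt u hu
    have hfv := hCp_le v hv
    have ht0 : t = 0 := by
      by_contra h
      have htpos : 0 < t := lt_of_le_of_ne ht (Ne.symm h)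
      nlinarith [mul_pos htpos (sub_pos.2 hfu), mul_nonneg hs (sub_nonneg.2 hfv)]
    subst ht0
    have hs1 : s = 1 := by linarith
    subst hs1
    simp only [zero_smul, one_smul, zero_add, zero_mul, one_mul] at hfw ⊢
    exact hCp_eq v hv hfw
  refine mem_extremePoints.2 ⟨Cp_subset_P (fun i => ?_), ?_⟩
  · rcases hx i with h | h <;> rw [h] <;> norm_num
  · intro y hy z hz hseg
    obtain ⟨a, b, ha, hb, hab, hxy⟩ := hseg
    have h1 : f y ≤ f x := hP_le y hy
    have h2 : f z ≤ f x := hP_le z hz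
    have heq : a * f y + b * f z = f x := by rw [← hlin, hxy]
    have hfy : f y = f x := by nlinarith
    have hfz : f z = f x := by nlinarith
    exact ⟨hP_eq y hy hfy, hP_eq z hz hfz⟩

end Stmt0Aux

namespace Stmt0Aux

lemma neg_mem_P {n : ℕ} {w : Fin n → ℝ} (hw : w ∈ Pset n) : -w ∈ Pset n := by
  obtain ⟨u, hu, v, hv, t, s, ht, hs, hts, rfl⟩ := mem_P_iff.1 hw
  refine mem_P_iff.2 ⟨-v, fun i => ?_, -u, fun i => ?_, s, t, hs, ht, by linarith, ?_⟩
  · have := hv i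
    constructor <;> simp only [Pi.neg_apply] <;> [linarith [this.2]; linarith [this.1]]
  · have := hu i
    constructor <;> simp only [Pi.neg_apply] <;> [linarith [this.2]; linarith [this.1]]
  · rw [neg_add, ← smul_neg, ← smul_neg, add_comm]

lemma extreme_minus {n : ℕ} {x : Fin n → ℝ} (hx : ∀ i, x i = -1 ∨ x i = 0) (hx0 : x ≠ 0) :
    x ∈ Set.extremePoints ℝ (Pset n) := by
  have hnx : (-x) ∈ Set.extremePoints ℝ (Pset n) := by
    refine extreme_plus (fun i => ?_) (fun h => hx0 (by simpa using congrArg Neg.neg h))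
    rcases hx i with h | h <;> simp [h]
  refine mem_extremePoints.2 ⟨Cm_subset_P (fun i => ?_), ?_⟩
  · rcases hx i with h | h <;> rw [h] <;> norm_num
  · intro y hy z hz hseg
    obtain ⟨a, b, ha, hb, hab, hxy⟩ := hseg
    have hseg' : -x ∈ openSegment ℝ (-y) (-z) :=
      ⟨a, b, ha, hb, hab, by rw [smul_neg, smul_neg, ← neg_add, hxy]⟩
    obtain ⟨h1, h2⟩ := (mem_extremePoints.1 hnx).2 (-y) (neg_mem_P hy) (-z) (neg_mem_P hz) hseg'
    exact ⟨neg_injective h1, neg_injective h2⟩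

lemma not_extreme_of_pm {n : ℕ} {A : Set (Fin n → ℝ)} {x v : Fin n → ℝ}
    (hx : x ∈ Set.extremePoints ℝ A) (hv : v ≠ 0)
    (h1 : x + v ∈ A) (h2 : x - v ∈ A) : False := by
  have hseg : x ∈ openSegment ℝ (x + v) (x - v) := by
    refine ⟨1/2, 1/2, by norm_num, by norm_num, by norm_num, ?_⟩
    funext i
    simp only [Pi.add_apply, Pi.smul_apply, Pi.sub_apply, smul_eq_mul]
    ring
  have := ((mem_extremePoints.1 hx).2 (x + v) h1 (x - v) h2 hseg).1
  apply hv
  have : x + v - x = x - x := by rw [this]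
  simpa using this

end Stmt0Aux

namespace Stmt0Aux

def Vert (n : ℕ) : Set (Fin n → ℝ) :=
  ({x | ∀ i, x i = -1 ∨ x i = 0} ∪ {x | ∀ i, x i = 0 ∨ x i = 1}) \ {0}

lemma extreme_subset {n : ℕ} (hn : 1 ≤ n) :
    Set.extremePoints ℝ (Pset n) ⊆ Vert n := by
  classical
  intro x hx
  have hxS : x ∈ Cm n ∪ Cp n := extremePoints_convexHull_subset hx
  have hx0 : x ≠ 0 := by
    rintro rfl
    refine not_extreme_of_pm hx (v := fun _ => (1:ℝ)) ?_ ?_ ?_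
    · intro h
      have := congrFun h ⟨0, hn⟩
      norm_num at this
    · exact Cp_subset_P (fun i => by norm_num)
    · exact Cm_subset_P (fun i => by norm_num)
  constructor
  · rcases hxS with h | h
    · left
      intro i
      by_contra hcon
      push_neg at hcon
      obtain ⟨hne1, hne0⟩ := hcon
      have hlt1 : -1 < x i := lt_of_le_of_ne (h i).1 (Ne.symm hne1)
      have hlt0 : x i < 0 := lt_of_le_of_ne (h i).2 hne0
      set ε : ℝ := min (x i + 1) (-x i) with hε
      have hεpos : 0 < ε := by
        apply lt_min <;> linarith
      refine not_extreme_of_pm hx (v := Pi.single i ε) ?_ (Cm_subset_P (fun j => ?_))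
        (Cm_subset_P (fun j => ?_))
      · intro hc
        have := congrFun hc i
        rw [Pi.single_eq_same] at this
        simp only [Pi.zero_apply] at this
        linarith
      · simp only [Pi.add_apply, Pi.single_apply]
        rcases eq_or_ne j i with rfl | hji
        · rw [if_pos rfl]
          constructor
          · linarith [min_le_left (x j + 1) (-x j)]
          · linarith [min_le_right (x j + 1) (-x j)]
        · rw [if_neg hji]
          simpa using h j
      · simp only [Pi.sub_apply, Pi.single_apply]
        rcases eq_or_ne j i with rfl | hji
        · rw [if_pos rfl]
          constructor
          · linarith [min_le_left (x j + 1) (-x j)]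
          · linarith [min_le_right (x j + 1) (-x j)]
        · rw [if_neg hji]
          simpa using h j
    · right
      intro i
      by_contra hcon
      push_neg at hcon
      obtain ⟨hne0, hne1⟩ := hcon
      have hlt0 : 0 < x i := lt_of_le_of_ne (h i).1 (Ne.symm hne0)
      have hlt1 : x i < 1 := lt_of_le_of_ne (h i).2 hne1
      set ε : ℝ := min (x i) (1 - x i) with hε
      have hεpos : 0 < ε := by
        apply lt_min <;> linarith
      refine not_extreme_of_pm hx (v := Pi.single i ε) ?_ (Cp_subset_P (fun j => ?_))
        (Cp_subset_P (fun j => ?_))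
      · intro hc
        have := congrFun hc i
        rw [Pi.single_eq_same] at this
        simp only [Pi.zero_apply] at this
        linarith
      · simp only [Pi.add_apply, Pi.single_apply]
        rcases eq_or_ne j i with rfl | hji
        · rw [if_pos rfl]
          constructor
          · linarith [min_le_left (x j) (1 - x j)]
          · linarith [min_le_right (x j) (1 - x j)]
        · rw [if_neg hji]
          simpa using h j
      · simp only [Pi.sub_apply, Pi.single_apply]
        rcases eq_or_ne j i with rfl | hji
        · rw [if_pos rfl]
          constructor
          · linarith [min_le_left (x j) (1 - x j)]
          · linarith [min_le_right (x j) (1 - x j)]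
        · rw [if_neg hji]
          simpa using h j
  · simpa using hx0

lemma extreme_eq {n : ℕ} (hn : 1 ≤ n) :
    Set.extremePoints ℝ (Pset n) = Vert n := by
  refine (extreme_subset hn).antisymm ?_
  rintro x ⟨h | h, h0⟩
  · exact extreme_minus h (by simpa using h0)
  · exact extreme_plus h (by simpa using h0)

end Stmt0Aux

namespace Stmt0Aux

lemma ncard_level {n : ℕ} {a : ℝ} (ha : a ≠ 0) :
    ({x : Fin n → ℝ | ∀ i, x i = 0 ∨ x i = a}).ncard = 2 ^ n := by
  classical
  set g : (Fin n → Bool) → (Fin n → ℝ) := fun b i => if b i then a else 0 with hg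
  have hinj : Function.Injective g := by
    intro b b' hb
    funext i
    have := congrFun hb i
    simp only [hg] at this
    cases hbi : b i <;> cases hbi' : b' i <;> rw [hbi, hbi'] at this <;> simp_all
  have hrange : Set.range g = {x : Fin n → ℝ | ∀ i, x i = 0 ∨ x i = a} := by
    ext x
    constructor
    · rintro ⟨b, rfl⟩ i
      simp only [hg]
      cases b i <;> simp
    · intro hx
      refine ⟨fun i => if x i = a then true else false, funext fun i => ?_⟩
      simp only [hg]
      rcases hx i with h | h
      · simp [h, (Ne.symm ha : (0:ℝ) ≠ a)]
      · simp [h]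
  rw [← hrange, ← Set.image_univ, Set.ncard_image_of_injective _ hinj, Set.ncard_univ]
  simp [Nat.card_eq_fintype_card]

lemma finite_level {n : ℕ} (a : ℝ) :
    ({x : Fin n → ℝ | ∀ i, x i = 0 ∨ x i = a}).Finite := by
  classical
  set g : (Fin n → Bool) → (Fin n → ℝ) := fun b i => if b i then a else 0 with hg
  have : {x : Fin n → ℝ | ∀ i, x i = 0 ∨ x i = a} ⊆ Set.range g := by
    intro x hx
    refine ⟨fun i => if x i = a then true else false, funext fun i => ?_⟩
    simp only [hg]
    rcases hx i with h | h
    · by_cases hxa : x i = a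
      · simp [hxa]
      · simp [hxa, h]
        exact fun h' => absurd h' (by rw [h] at hxa; exact hxa)
    · simp [h]
  exact (Set.finite_range g).subset this

lemma minus_set_eq {n : ℕ} :
    {x : Fin n → ℝ | ∀ i, x i = -1 ∨ x i = 0} = {x : Fin n → ℝ | ∀ i, x i = 0 ∨ x i = -1} := by
  ext x; exact forall_congr' fun i => or_comm

lemma ncard_Vert {n : ℕ} : (Vert n).ncard = 2 ^ (n + 1) - 2 := by
  have hB := finite_level (n := n) (-1 : ℝ)
  have hA := finite_level (n := n) (1 : ℝ)
  have hBf : ({x : Fin n → ℝ | ∀ i, x i = -1 ∨ x i = 0}).Finite := by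
    rw [minus_set_eq]; exact hB
  have h0B : (0 : Fin n → ℝ) ∈ {x : Fin n → ℝ | ∀ i, x i = -1 ∨ x i = 0} :=
    fun i => Or.inr rfl
  have h0A : (0 : Fin n → ℝ) ∈ {x : Fin n → ℝ | ∀ i, x i = 0 ∨ x i = 1} :=
    fun i => Or.inl rfl
  have hdisj : Disjoint ({x : Fin n → ℝ | ∀ i, x i = -1 ∨ x i = 0} \ {0})
      ({x : Fin n → ℝ | ∀ i, x i = 0 ∨ x i = 1} \ {0}) := by
    rw [Set.disjoint_left]
    rintro x ⟨hxB, hx0⟩ ⟨hxA, _⟩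
    apply hx0
    have : x = 0 := funext fun i => by
      rcases hxB i with h | h
      · rcases hxA i with h' | h'
        · simpa using h'
        · exfalso; rw [h] at h'; norm_num at h'
      · simpa using h
    simpa using this
  have : Vert n = ({x : Fin n → ℝ | ∀ i, x i = -1 ∨ x i = 0} \ {0}) ∪
      ({x : Fin n → ℝ | ∀ i, x i = 0 ∨ x i = 1} \ {0}) := by
    rw [Vert, Set.union_diff_distrib]
  rw [this, Set.ncard_union_eq hdisj hBf.diff hA.diff,
    Set.ncard_diff_singleton_of_mem h0B, Set.ncard_diff_singleton_of_mem h0A]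
  rw [minus_set_eq, ncard_level (by norm_num : (-1:ℝ) ≠ 0), ncard_level (by norm_num : (1:ℝ) ≠ 0)]
  have h1 : 1 ≤ 2 ^ n := Nat.one_le_two_pow
  have : 2 ^ (n + 1) = 2 ^ n + 2 ^ n := by ring
  omega

end Stmt0Aux

namespace Stmt0Aux

lemma coord_bounds {n : ℕ} {w : Fin n → ℝ} (hw : w ∈ Pset n) (i : Fin n) :
    -1 ≤ w i ∧ w i ≤ 1 := by
  obtain ⟨u, hu, v, hv, t, s, ht, hs, hts, rfl⟩ := mem_P_iff.1 hw
  have h1 := (hu i).1; have h2 := (hu i).2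
  have h3 := (hv i).1; have h4 := (hv i).2
  simp only [Pi.add_apply, Pi.smul_apply, smul_eq_mul]
  constructor <;> nlinarith

lemma pair_bound {n : ℕ} {w : Fin n → ℝ} (hw : w ∈ Pset n) (i j : Fin n) :
    w i - w j ≤ 1 := by
  obtain ⟨u, hu, v, hv, t, s, ht, hs, hts, rfl⟩ := mem_P_iff.1 hw
  have h1 := (hu i).1; have h2 := (hu i).2
  have h3 := (hv i).1; have h4 := (hv i).2
  have h5 := (hu j).1; have h6 := (hu j).2
  have h7 := (hv j).1; have h8 := (hv j).2
  simp only [Pi.add_apply, Pi.smul_apply, smul_eq_mul]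
  nlinarith

lemma int_points {n : ℕ} (hn : 1 ≤ n) :
    {x : Fin n → ℝ | (∀ i, ∃ m : ℤ, x i = (m : ℝ)) ∧ x ∈ Pset n} \
      Set.extremePoints ℝ (Pset n) = {0} := by
  rw [extreme_eq hn]
  ext x
  simp only [Set.mem_diff, Set.mem_setOf_eq, Set.mem_singleton_iff]
  constructor
  · rintro ⟨⟨hint, hxP⟩, hnv⟩
    have hcoord : ∀ i, x i = -1 ∨ x i = 0 ∨ x i = 1 := by
      intro i
      obtain ⟨m, hm⟩ := hint i
      obtain ⟨hlo, hhi⟩ := coord_bounds hxP i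
      rw [hm] at hlo hhi ⊢
      have hlo' : (-1 : ℤ) ≤ m := by exact_mod_cast hlo
      have hhi' : m ≤ (1 : ℤ) := by exact_mod_cast hhi
      interval_cases m <;> norm_num
    have hmem : x ∈ ({y : Fin n → ℝ | ∀ i, y i = -1 ∨ y i = 0} ∪
        {y : Fin n → ℝ | ∀ i, y i = 0 ∨ y i = 1}) := by
      by_cases h1 : ∃ i, x i = 1
      · obtain ⟨i, hi⟩ := h1
        right
        intro j
        rcases hcoord j with h | h | h
        · exfalso
          have := pair_bound hxP i j
          rw [hi, h] at this
          norm_num at this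
        · exact Or.inl h
        · exact Or.inr h
      · left
        intro j
        rcases hcoord j with h | h | h
        · exact Or.inl h
        · exact Or.inr h
        · exact absurd ⟨j, h⟩ h1
    by_contra hx0
    exact hnv ⟨hmem, by simpa using hx0⟩
  · rintro rfl
    refine ⟨⟨fun i => ⟨0, by norm_num⟩, Cp_subset_P zero_mem_Cp⟩, ?_⟩
    rintro ⟨-, h0⟩
    exact h0 rfl

end Stmt0Aux


/-- The polytope `P_n = conv([-1,0]^n ∪ [0,1]^n)` in `ℝ^n` has exactly
`2^(n+1) - 2` vertices, and the only integer point of `P_n` that is not a vertex is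
the origin. -/
theorem stmt0 (n : ℕ) (hn : 1 ≤ n)
    (P : Set (Fin n → ℝ))
    (hP : P = convexHull ℝ
      ({x : Fin n → ℝ | ∀ i, x i ∈ Set.Icc (-1 : ℝ) 0} ∪
       {x : Fin n → ℝ | ∀ i, x i ∈ Set.Icc (0 : ℝ) 1})) :
    (Set.extremePoints ℝ P).ncard = 2 ^ (n + 1) - 2 ∧
    {x : Fin n → ℝ | (∀ i, ∃ m : ℤ, x i = (m : ℝ)) ∧ x ∈ P} \ Set.extremePoints ℝ P
      = {0} := by
  have hP' : P = Stmt0Aux.Pset n := hP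
  subst hP'
  exact ⟨by rw [Stmt0Aux.extreme_eq hn, Stmt0Aux.ncard_Vert], Stmt0Aux.int_points hn⟩
end

section
/- For all n ≥ 2 and k ≥ 1, g(Z^n, k) ≥ 2^{n+1} - 2, where g(Z^n,k) is the maximum number of vertices of a polytope with vertices in Z^n that contains exactly k integer points which are not vertices. -/
/-- The set of integer points of `ℝ^n`. -/
def intLat (n : ℕ) : Set (Fin n → ℝ) := {x | ∀ i, ∃ m : ℤ, x i = (m : ℝ)}

namespace Stmt1Aux

variable {n : ℕ}

/-- dot product functional -/
def dot (a x : Fin n → ℝ) : ℝ := ∑ i, a i * x i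

lemma isLinearMap_dot (a : Fin n → ℝ) : IsLinearMap ℝ (dot a) := by
  constructor
  · intro x y; simp [dot, mul_add, Finset.sum_add_distrib]
  · intro c x; simp [dot, Finset.mul_sum]; apply Finset.sum_congr rfl; intros; ring

lemma dot_le_hull {s : Set (Fin n → ℝ)} {a : Fin n → ℝ} {c : ℝ}
    (hs : ∀ y ∈ s, dot a y ≤ c) {x : Fin n → ℝ} (hx : x ∈ convexHull ℝ s) :
    dot a x ≤ c :=
  convexHull_min hs (convex_halfSpace_le (isLinearMap_dot a) c) hx

lemma dot_single (i : Fin n) (w : ℝ) (x : Fin n → ℝ) :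
    dot (fun j => if j = i then w else 0) x = w * x i := by
  simp [dot, ite_mul, Finset.sum_ite_eq']

lemma dot_pair {i j : Fin n} (hij : i ≠ j) (w1 w2 : ℝ) (x : Fin n → ℝ) :
    dot (fun t => if t = i then w1 else if t = j then w2 else 0) x = w1 * x i + w2 * x j := by
  have h : ∀ t, (if t = i then w1 else if t = j then w2 else 0) * x t
      = (if t = i then w1 * x i else 0) + (if t = j then w2 * x j else 0) := by
    intro t
    by_cases h1 : t = i
    · subst h1; simp [hij, Ne.symm hij]
    · by_cases h2 : t = j
      · subst h2; simp [Ne.symm hij, h1]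
      · simp [h1, h2]
  rw [dot]
  simp only [h, Finset.sum_add_distrib, Finset.sum_ite_eq', Finset.mem_univ, if_pos]

/-- a vertex at which a linear functional is strictly maximized is an extreme point -/
lemma extreme_of_strict (s : Finset (Fin n → ℝ)) (v : Fin n → ℝ) (hv : v ∈ s)
    (a : Fin n → ℝ) (h : ∀ u ∈ s, u ≠ v → dot a u < dot a v) :
    v ∈ Set.extremePoints ℝ (convexHull ℝ (s : Set (Fin n → ℝ))) := by
  have hle : ∀ y ∈ (s : Set (Fin n → ℝ)), dot a y ≤ dot a v := by
    intro y hy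
    rcases eq_or_ne y v with rfl | hne
    · exact le_refl _
    · exact (h y (by exact_mod_cast hy) hne).le
  -- key: any point of the hull where dot a equals dot a v must be v
  have key : ∀ x ∈ convexHull ℝ (s : Set (Fin n → ℝ)), dot a x = dot a v → x = v := by
    intro x hx hxv
    rw [Finset.mem_convexHull] at hx
    obtain ⟨w, hw0, hw1, hwx⟩ := hx
    rw [Finset.centerMass_eq_of_sum_1 _ _ hw1] at hwx
    simp only [id] at hwx
    have hdx : dot a x = ∑ y ∈ s, w y * dot a y := by
      subst hwx
      rw [show dot a = (IsLinearMap.mk' _ (isLinearMap_dot a) : (Fin n → ℝ) →ₗ[ℝ] ℝ) from rfl,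
        map_sum]
      apply Finset.sum_congr rfl
      intro y _
      simp [map_smul, smul_eq_mul]
    have hterm : ∀ y ∈ s, 0 ≤ w y * (dot a v - dot a y) := by
      intro y hy
      apply mul_nonneg (hw0 y hy)
      rcases eq_or_ne y v with rfl | hne
      · simp
      · linarith [h y hy hne]
    have hsum0 : ∑ y ∈ s, w y * (dot a v - dot a y) = 0 := by
      have : ∑ y ∈ s, w y * (dot a v - dot a y)
          = (∑ y ∈ s, w y) * dot a v - ∑ y ∈ s, w y * dot a y := by
        rw [Finset.sum_mul, ← Finset.sum_sub_distrib]
        apply Finset.sum_congr rfl; intros; ring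
      rw [this, hw1, ← hdx, hxv]; ring
    have hzero : ∀ y ∈ s, y ≠ v → w y = 0 := by
      intro y hy hne
      have := (Finset.sum_eq_zero_iff_of_nonneg hterm).1 hsum0 y hy
      rcases mul_eq_zero.1 this with h0 | h0
      · exact h0
      · exact absurd (by linarith : dot a y = dot a v) (fun hh => (h y hy hne).ne hh)
    have hwv : w v = 1 := by
      rw [← hw1, Finset.sum_eq_single v (fun y hy hne => hzero y hy hne) (fun hv' => absurd hv hv')]
    subst hwx
    rw [Finset.sum_eq_single v (fun y hy hne => by rw [hzero y hy hne, zero_smul])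
      (fun hv' => absurd hv hv'), hwv, one_smul]
  rw [mem_extremePoints]
  refine ⟨subset_convexHull ℝ _ hv, ?_⟩
  intro x₁ hx₁ x₂ hx₂ hseg
  obtain ⟨p, q, hp, hq, hpq, hxy⟩ := hseg
  have h1 : dot a x₁ ≤ dot a v := dot_le_hull hle hx₁
  have h2 : dot a x₂ ≤ dot a v := dot_le_hull hle hx₂
  have hdv : dot a v = p * dot a x₁ + q * dot a x₂ := by
    rw [← hxy, (isLinearMap_dot a).map_add, (isLinearMap_dot a).map_smul,
      (isLinearMap_dot a).map_smul]
    rfl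
  have hsplit : p * dot a v + q * dot a v = dot a v := by
    rw [← add_mul, hpq, one_mul]
  have e1 : dot a x₁ = dot a v := by
    by_contra hne
    have hlt : dot a x₁ < dot a v := lt_of_le_of_ne h1 hne
    have t1 := mul_lt_mul_of_pos_left hlt hp
    have t2 := mul_le_mul_of_nonneg_left h2 hq.le
    linarith
  have e2 : dot a x₂ = dot a v := by
    by_contra hne
    have hlt : dot a x₂ < dot a v := lt_of_le_of_ne h2 hne
    have t1 := mul_lt_mul_of_pos_left hlt hq
    have t2 := mul_le_mul_of_nonneg_left h1 hp.le
    linarith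
  exact ⟨key x₁ hx₁ e1, key x₂ hx₂ e2⟩


/-! ### The construction -/

variable (k : ℕ) (L : Fin n)

/-- unit cube vertex with offset `base` -/
def ptc (base : Fin n → ℝ) (c : Fin n → Bool) : Fin n → ℝ :=
  fun i => base i + (if c i then 1 else 0)

/-- offset of the second cube -/
def base2 : Fin n → ℝ := fun i => if i = L then (k : ℝ) else 1

/-- diagonal lattice point -/
def diagP (m : ℝ) : Fin n → ℝ := fun i => if i = L then m else 1

/-- the vertex set -/
noncomputable def VF : Finset (Fin n → ℝ) :=
  ((Finset.univ.image (ptc (0 : Fin n → ℝ))).erase (ptc 0 (fun _ => true))) ∪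
  ((Finset.univ.image (ptc (base2 k L))).erase (ptc (base2 k L) (fun _ => false)))

lemma ptc_injective (base : Fin n → ℝ) : Function.Injective (ptc base) := by
  intro c c' h
  funext i
  have := congrFun h i
  simp only [ptc, add_right_inj] at this
  cases hc : c i <;> cases hc' : c' i <;> simp [hc, hc'] at this <;> tauto

lemma mem_VF_iff {y : Fin n → ℝ} : y ∈ VF k L ↔
    (∃ c, y = ptc 0 c ∧ c ≠ fun _ => true) ∨
    (∃ c, y = ptc (base2 k L) c ∧ c ≠ fun _ => false) := by
  simp only [VF, Finset.mem_union, Finset.mem_erase, Finset.mem_image, Finset.mem_univ,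
    true_and]
  constructor
  · rintro (⟨hne, c, rfl⟩ | ⟨hne, c, rfl⟩)
    · exact Or.inl ⟨c, rfl, fun h => hne (by rw [h])⟩
    · exact Or.inr ⟨c, rfl, fun h => hne (by rw [h])⟩
  · rintro (⟨c, rfl, hne⟩ | ⟨c, rfl, hne⟩)
    · exact Or.inl ⟨fun h => hne (ptc_injective _ h), c, rfl⟩
    · exact Or.inr ⟨fun h => hne (ptc_injective _ h), c, rfl⟩

lemma VF_subset_intLat (hk : 1 ≤ k) : (VF k L : Set (Fin n → ℝ)) ⊆ intLat n := by
  intro y hy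
  rw [Finset.mem_coe, mem_VF_iff] at hy
  intro i
  rcases hy with ⟨c, rfl, -⟩ | ⟨c, rfl, -⟩
  · exact if h : c i then ⟨1, by simp [ptc, h]⟩ else ⟨0, by simp [ptc, h]⟩
  · rcases eq_or_ne i L with rfl | hi
    · exact if h : c i then ⟨(k : ℤ) + 1, by simp [ptc, base2, h]⟩
        else ⟨(k : ℤ), by simp [ptc, base2, h]⟩
    · exact if h : c i then ⟨2, by norm_num [ptc, base2, h, hi]⟩
        else ⟨1, by simp [ptc, base2, h, hi]⟩

lemma VF_card (hn : 2 ≤ n) (hk : 1 ≤ k) : (VF k L).card = 2 ^ (n + 1) - 2 := by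
  have himg : ∀ base : Fin n → ℝ, (Finset.univ.image (ptc base)).card = 2 ^ n := by
    intro base
    rw [Finset.card_image_of_injective _ (ptc_injective base), Finset.card_univ]
    simp [Fintype.card_fun]
  have hmem1 : ptc (0 : Fin n → ℝ) (fun _ => true) ∈ Finset.univ.image (ptc 0) :=
    Finset.mem_image_of_mem _ (Finset.mem_univ _)
  have hmem2 : ptc (base2 k L) (fun _ => false) ∈ Finset.univ.image (ptc (base2 k L)) :=
    Finset.mem_image_of_mem _ (Finset.mem_univ _)
  -- a small index distinct from L
  obtain ⟨j, hj⟩ : ∃ j : Fin n, j ≠ L := by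
    rcases eq_or_ne (⟨0, by omega⟩ : Fin n) L with h0 | h0
    · exact ⟨⟨1, by omega⟩, by rw [← h0]; intro h; simpa using congrArg Fin.val h⟩
    · exact ⟨_, h0⟩
  have hdisj : Disjoint
      ((Finset.univ.image (ptc (0 : Fin n → ℝ))).erase (ptc 0 (fun _ => true)))
      ((Finset.univ.image (ptc (base2 k L))).erase (ptc (base2 k L) (fun _ => false))) := by
    rw [Finset.disjoint_left]
    rintro y hy1 hy2
    rw [Finset.mem_erase, Finset.mem_image] at hy1 hy2
    obtain ⟨hne1, c, -, rfl⟩ := hy1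
    obtain ⟨hne2, c', -, heq⟩ := hy2
    -- all coordinates of ptc 0 c at small indices must be 1, and c L must be true
    have hk1 : (1:ℝ) ≤ (k:ℝ) := by exact_mod_cast hk
    have hcall : ∀ i, c i = true := by
      intro i
      have hi := congrFun heq i
      by_contra hcf
      have hc : c i = false := by simpa using hcf
      have hzero : ptc (0 : Fin n → ℝ) c i = 0 := by simp [ptc, hc]
      rw [hzero] at hi
      rcases eq_or_ne i L with rfl | hiL
      · simp only [ptc, base2, if_pos rfl] at hi
        cases hc' : c' i <;> rw [hc'] at hi <;> simp at hi <;> linarith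
      · simp only [ptc, base2, if_neg hiL] at hi
        cases hc' : c' i <;> rw [hc'] at hi <;> norm_num at hi
    exact hne1 (by rw [show c = (fun _ => true) from funext hcall])
  rw [VF, Finset.card_union_of_disjoint hdisj, Finset.card_erase_of_mem hmem1,
    Finset.card_erase_of_mem hmem2, himg, himg]
  have h2 : 2 ^ (n + 1) = 2 ^ n + 2 ^ n := by ring
  have hpos : 1 ≤ 2 ^ n := Nat.one_le_two_pow
  omega


/-! ### Linear inequalities valid on the hull -/

section Ineqs

variable {k : ℕ} {L : Fin n} (hk : 1 ≤ k)

lemma kR_one (hk : 1 ≤ k) : (1:ℝ) ≤ (k:ℝ) := by exact_mod_cast hk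

lemma ptc0_apply (c : Fin n → Bool) (i : Fin n) :
    ptc (0 : Fin n → ℝ) c i = if c i then 1 else 0 := by simp [ptc]

lemma ptcb2_apply (c : Fin n → Bool) (i : Fin n) :
    ptc (base2 k L) c i = (if i = L then (k:ℝ) else 1) + (if c i then 1 else 0) := rfl

variable {x : Fin n → ℝ} (hx : x ∈ convexHull ℝ ((VF k L : Finset (Fin n → ℝ)) : Set (Fin n → ℝ)))

include hk hx

lemma hull_nonneg (i : Fin n) : 0 ≤ x i := by
  have h := dot_le_hull (a := fun j => if j = i then (-1:ℝ) else 0) (c := 0) ?_ hx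
  · rw [dot_single] at h; linarith
  · intro y hy
    rw [dot_single]
    rw [Finset.mem_coe, mem_VF_iff] at hy
    have h0 : 0 ≤ y i := by
      rcases hy with ⟨c, rfl, -⟩ | ⟨c, rfl, -⟩
      · rw [ptc0_apply]; split <;> norm_num
      · rw [ptcb2_apply]; have := kR_one hk; split <;> split <;> norm_num <;> linarith
    linarith

lemma hull_le_two (i : Fin n) (hi : i ≠ L) : x i ≤ 2 := by
  have h := dot_le_hull (a := fun j => if j = i then (1:ℝ) else 0) (c := 2) ?_ hx
  · rw [dot_single] at h; linarith
  · intro y hy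
    rw [dot_single]
    rw [Finset.mem_coe, mem_VF_iff] at hy
    have h0 : y i ≤ 2 := by
      rcases hy with ⟨c, rfl, -⟩ | ⟨c, rfl, -⟩
      · rw [ptc0_apply]; split <;> norm_num
      · rw [ptcb2_apply, if_neg hi]; split <;> norm_num
    linarith

lemma hull_L_le : x L ≤ (k:ℝ) + 1 := by
  have h := dot_le_hull (a := fun j => if j = L then (1:ℝ) else 0) (c := (k:ℝ) + 1) ?_ hx
  · rw [dot_single] at h; linarith
  · intro y hy
    rw [dot_single]
    rw [Finset.mem_coe, mem_VF_iff] at hy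
    have hk1 := kR_one hk
    have h0 : y L ≤ (k:ℝ) + 1 := by
      rcases hy with ⟨c, rfl, -⟩ | ⟨c, rfl, -⟩
      · rw [ptc0_apply]; split <;> norm_num <;> linarith
      · rw [ptcb2_apply, if_pos rfl]; split <;> norm_num
    linarith

lemma hull_diff_le (i j : Fin n) (hi : i ≠ L) (hj : j ≠ L) (hij : i ≠ j) :
    x i - x j ≤ 1 := by
  have h := dot_le_hull
    (a := fun t => if t = i then (1:ℝ) else if t = j then (-1:ℝ) else 0) (c := 1) ?_ hx
  · rw [dot_pair hij] at h; linarith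
  · intro y hy
    rw [dot_pair hij]
    rw [Finset.mem_coe, mem_VF_iff] at hy
    have h0 : y i - y j ≤ 1 := by
      rcases hy with ⟨c, rfl, -⟩ | ⟨c, rfl, -⟩
      · rw [ptc0_apply, ptc0_apply]; split <;> split <;> norm_num
      · rw [ptcb2_apply, ptcb2_apply, if_neg hi, if_neg hj]; split <;> split <;> norm_num
    linarith

lemma hull_L_le_k_mul (i : Fin n) (hi : i ≠ L) : x L - (k:ℝ) * x i ≤ 1 := by
  have hLi : L ≠ i := fun h => hi h.symm
  have h := dot_le_hull
    (a := fun t => if t = L then (1:ℝ) else if t = i then (-(k:ℝ)) else 0) (c := 1) ?_ hx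
  · rw [dot_pair hLi] at h; linarith
  · intro y hy
    rw [dot_pair hLi]
    rw [Finset.mem_coe, mem_VF_iff] at hy
    have hk1 := kR_one hk
    have h0 : y L - (k:ℝ) * y i ≤ 1 := by
      rcases hy with ⟨c, rfl, -⟩ | ⟨c, rfl, -⟩
      · rw [ptc0_apply, ptc0_apply]; split <;> split <;> norm_num <;> linarith
      · rw [ptcb2_apply, ptcb2_apply, if_pos rfl, if_neg hi]
        split <;> split <;> norm_num <;> linarith
    linarith

lemma hull_k_mul_le_L (i : Fin n) (hi : i ≠ L) : (k:ℝ) * x i - x L ≤ k := by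
  have hiL : i ≠ L := hi
  have h := dot_le_hull
    (a := fun t => if t = i then ((k:ℝ)) else if t = L then (-1:ℝ) else 0) (c := (k:ℝ)) ?_ hx
  · rw [dot_pair hiL] at h; linarith
  · intro y hy
    rw [dot_pair hiL]
    rw [Finset.mem_coe, mem_VF_iff] at hy
    have hk1 := kR_one hk
    have h0 : (k:ℝ) * y i - y L ≤ k := by
      rcases hy with ⟨c, rfl, -⟩ | ⟨c, rfl, -⟩
      · rw [ptc0_apply, ptc0_apply]; split <;> split <;> norm_num <;> linarith
      · rw [ptcb2_apply, ptcb2_apply, if_pos rfl, if_neg hi]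
        split <;> split <;> norm_num <;> linarith
    linarith

end Ineqs


/-! ### Classification of lattice points in the hull -/

lemma lattice_classify {k : ℕ} {L : Fin n} (hn : 2 ≤ n) (hk : 1 ≤ k) {x : Fin n → ℝ}
    (hxI : x ∈ intLat n)
    (hx : x ∈ convexHull ℝ ((VF k L : Finset (Fin n → ℝ)) : Set (Fin n → ℝ))) :
    x ∈ VF k L ∨ ∃ m : ℕ, 1 ≤ m ∧ m ≤ k ∧ x = diagP L (m : ℝ) := by
  choose m hm using hxI
  -- integer inequalities
  have h0 : ∀ i, 0 ≤ m i := by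
    intro i
    have := hull_nonneg hk hx i
    rw [hm i] at this; exact_mod_cast this
  have h2 : ∀ i, i ≠ L → m i ≤ 2 := by
    intro i hi
    have := hull_le_two hk hx i hi
    rw [hm i] at this; exact_mod_cast this
  have hL : m L ≤ (k:ℤ) + 1 := by
    have := hull_L_le hk hx
    rw [hm L] at this; exact_mod_cast this
  have hdiff : ∀ i j, i ≠ L → j ≠ L → m i - m j ≤ 1 := by
    intro i j hi hj
    rcases eq_or_ne i j with rfl | hij
    · omega
    · have := hull_diff_le hk hx i j hi hj hij
      rw [hm i, hm j] at this; exact_mod_cast this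
  have hup : ∀ i, i ≠ L → m L - (k:ℤ) * m i ≤ 1 := by
    intro i hi
    have := hull_L_le_k_mul hk hx i hi
    rw [hm L, hm i] at this; exact_mod_cast this
  have hdown : ∀ i, i ≠ L → (k:ℤ) * m i - m L ≤ k := by
    intro i hi
    have := hull_k_mul_le_L hk hx i hi
    rw [hm L, hm i] at this; exact_mod_cast this
  by_cases hall : ∀ i, i ≠ L → m i = 1
  · -- diagonal point
    have hxd : ∀ i, i ≠ L → x i = 1 := by
      intro i hi; rw [hm i, hall i hi]; norm_num
    rcases eq_or_lt_of_le (h0 L) with hL0 | hL1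
    · -- m L = 0 : bottom vertex
      left
      rw [mem_VF_iff]
      left
      refine ⟨fun i => !(decide (i = L)), funext fun i => ?_, ?_⟩
      · rw [ptc0_apply]
        rcases eq_or_ne i L with rfl | hi
        · simp [hm i, ← hL0]
        · simp [hxd i hi, hi]
      · intro hcontra
        have := congrFun hcontra L
        simp at this
    rcases eq_or_lt_of_le hL with hLk | hLk
    · -- m L = k + 1 : top vertex
      left
      rw [mem_VF_iff]
      right
      refine ⟨fun i => decide (i = L), funext fun i => ?_, ?_⟩
      · rw [ptcb2_apply]
        rcases eq_or_ne i L with rfl | hi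
        · rw [hm i, hLk]; push_cast; simp
        · simp [hxd i hi, hi]
      · intro hcontra
        have := congrFun hcontra L
        simp at this
    · -- diagonal interior
      right
      refine ⟨(m L).toNat, by omega, by omega, funext fun i => ?_⟩
      rcases eq_or_ne i L with rfl | hi
      · rw [hm i, diagP, if_pos rfl]
        congr 1
        omega
      · rw [diagP, if_neg hi]; exact hxd i hi
  · push_neg at hall
    obtain ⟨i₀, hi₀L, hi₀⟩ := hall
    left
    have hi02 : m i₀ = 0 ∨ m i₀ = 2 := by
      have := h0 i₀; have := h2 i₀ hi₀L; omega
    rw [mem_VF_iff]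
    rcases hi02 with hz | ht
    · -- in the bottom cube
      left
      have hsm : ∀ i, i ≠ L → m i = 0 ∨ m i = 1 := by
        intro i hi
        have := hdiff i i₀ hi hi₀L; have := h0 i; omega
      have hLsm : m L = 0 ∨ m L = 1 := by
        have h1 := hup i₀ hi₀L
        rw [hz, mul_zero] at h1
        have := h0 L; omega
      refine ⟨fun i => decide (m i = 1), funext fun i => ?_, ?_⟩
      · rw [ptc0_apply, hm i]
        rcases eq_or_ne i L with rfl | hi
        · rcases hLsm with h | h <;> simp [h]
        · rcases hsm i hi with h | h <;> simp [h]
      · intro hcontra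
        have := congrFun hcontra i₀
        simp [hz] at this
    · -- in the top cube
      right
      have hsm : ∀ i, i ≠ L → m i = 1 ∨ m i = 2 := by
        intro i hi
        have := hdiff i₀ i hi₀L hi; have := h2 i hi; omega
      have hLsm : m L = k ∨ m L = (k:ℤ) + 1 := by
        have h1 := hdown i₀ hi₀L
        rw [ht] at h1
        omega
      refine ⟨fun i => if i = L then decide (m L = (k:ℤ) + 1) else decide (m i = 2),
        funext fun i => ?_, ?_⟩
      · rw [ptcb2_apply, hm i]
        rcases eq_or_ne i L with rfl | hi
        · rw [if_pos rfl, if_pos rfl]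
          rcases hLsm with h | h
          · rw [h]; simp [show ¬ ((k:ℤ) = (k:ℤ)+1) by omega]
          · rw [h]; push_cast; simp
        · rw [if_neg hi, if_neg hi]
          rcases hsm i hi with h | h <;> norm_num [h]
      · intro hcontra
        have := congrFun hcontra i₀
        simp [if_neg hi₀L, ht] at this


/-! ### Extreme point machinery -/

lemma dot_sub (a x y : Fin n → ℝ) : dot a x - dot a y = ∑ i, a i * (x i - y i) := by
  rw [dot, dot, ← Finset.sum_sub_distrib]
  apply Finset.sum_congr rfl
  intros; ring

lemma sum_pos_one {t : Fin n → ℝ} (j : Fin n) (hj : 3 * (n:ℝ) ≤ t j)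
    (h : ∀ i, i ≠ j → -2 ≤ t i) : 0 < ∑ i, t i := by
  rw [← Finset.add_sum_erase _ _ (Finset.mem_univ j)]
  have hb : ∑ i ∈ Finset.univ.erase j, (-2:ℝ) ≤ ∑ i ∈ Finset.univ.erase j, t i :=
    Finset.sum_le_sum fun i hi => h i (Finset.ne_of_mem_erase hi)
  rw [Finset.sum_const, Finset.card_erase_of_mem (Finset.mem_univ j), Finset.card_univ,
    Fintype.card_fin] at hb
  have h1n : 1 ≤ n := j.pos
  have hcast : ((n - 1 : ℕ) : ℝ) = (n:ℝ) - 1 := by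
    push_cast [Nat.cast_sub h1n]; ring
  have hn0 : (0:ℝ) ≤ (n:ℝ) := Nat.cast_nonneg n
  rw [nsmul_eq_mul, hcast] at hb
  linarith

lemma sum_pos_two (k : ℕ) {t : Fin n → ℝ} (j l : Fin n) (hjl : j ≠ l)
    (hj : 3 * (n:ℝ) + k ≤ t j) (hl : -(k:ℝ) ≤ t l)
    (h : ∀ i, i ≠ j → i ≠ l → -2 ≤ t i) : 0 < ∑ i, t i := by
  have hlj : l ∈ Finset.univ.erase j := Finset.mem_erase.2 ⟨hjl.symm, Finset.mem_univ l⟩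
  rw [← Finset.add_sum_erase _ _ (Finset.mem_univ j), ← Finset.add_sum_erase _ _ hlj]
  have hb : ∑ i ∈ (Finset.univ.erase j).erase l, (-2:ℝ)
      ≤ ∑ i ∈ (Finset.univ.erase j).erase l, t i := by
    apply Finset.sum_le_sum
    intro i hi
    exact h i (Finset.ne_of_mem_erase (Finset.mem_of_mem_erase hi)) (Finset.ne_of_mem_erase hi)
  rw [Finset.sum_const, Finset.card_erase_of_mem hlj,
    Finset.card_erase_of_mem (Finset.mem_univ j), Finset.card_univ, Fintype.card_fin] at hb
  have h2n : 2 ≤ n := by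
    have := Fintype.one_lt_card_iff.2 ⟨j, l, hjl⟩
    simp at this; omega
  have hcast : ((n - 1 - 1 : ℕ) : ℝ) = (n:ℝ) - 2 := by
    have : n - 1 - 1 = n - 2 := by omega
    rw [this, Nat.cast_sub h2n]; push_cast; ring
  have hn0 : (0:ℝ) ≤ (n:ℝ) := Nat.cast_nonneg n
  have hk0 : (0:ℝ) ≤ (k:ℝ) := Nat.cast_nonneg k
  rw [nsmul_eq_mul, hcast] at hb
  linarith

lemma same_cube_strict (a base : Fin n → ℝ) {c c' : Fin n → Bool} (hne : c' ≠ c)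
    (ha : ∀ i, if c i = true then 0 < a i else a i < 0) :
    dot a (ptc base c') < dot a (ptc base c) := by
  have hterm : ∀ i, ptc base c i - ptc base c' i
      = (if c i then (1:ℝ) else 0) - (if c' i then 1 else 0) := by
    intro i; simp [ptc]
  have key : 0 < ∑ i, a i * (ptc base c i - ptc base c' i) := by
    apply Finset.sum_pos'
    · intro i _
      rw [hterm i]
      have hai := ha i
      cases hc : c i <;> cases hc' : c' i <;> rw [hc] at hai <;> simp [hc'] at hai ⊢ <;> nlinarith
    · obtain ⟨i, hi⟩ := Function.ne_iff.1 hne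
      refine ⟨i, Finset.mem_univ i, ?_⟩
      rw [hterm i]
      have hai := ha i
      cases hc : c i <;> cases hc' : c' i <;> rw [hc] at hai <;> rw [hc, hc'] at hi <;>
        simp [hc'] at hai hi ⊢ <;> nlinarith
  have hds := dot_sub a (ptc base c) (ptc base c')
  linarith


lemma VF_extreme {k : ℕ} {L : Fin n} (hn : 2 ≤ n) (hk : 1 ≤ k) :
    Set.extremePoints ℝ (convexHull ℝ ((VF k L : Finset (Fin n → ℝ)) : Set (Fin n → ℝ)))
      = ↑(VF k L) := by
  apply Set.Subset.antisymm extremePoints_convexHull_subset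
  intro v hv
  have hk1 : (1:ℝ) ≤ (k:ℝ) := by exact_mod_cast hk
  have hn2 : (2:ℝ) ≤ (n:ℝ) := by exact_mod_cast hn
  rw [Finset.mem_coe, mem_VF_iff] at hv
  rcases hv with ⟨c, rfl, hne⟩ | ⟨c, rfl, hne⟩
  · -- bottom cube vertex
    have hvmem : ptc 0 c ∈ VF k L := (mem_VF_iff k L).2 (Or.inl ⟨c, rfl, hne⟩)
    cases hcL : c L
    · -- c L = false
      set a : Fin n → ℝ := fun i => if i = L then -(3*(n:ℝ)) else (if c i then 1 else -1)
        with ha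
      apply extreme_of_strict _ _ hvmem a
      intro u hu hune
      rw [mem_VF_iff] at hu
      rcases hu with ⟨c', rfl, -⟩ | ⟨c', rfl, -⟩
      · apply same_cube_strict _ _ (fun h => hune (by rw [h]))
        intro i
        rcases eq_or_ne i L with rfl | hi
        · rw [hcL]; simp [ha]; linarith
        · simp only [ha, if_neg hi]; cases hc : c i <;> simp [hc]
      · have hds := dot_sub a (ptc 0 c) (ptc (base2 k L) c')
        have hpos : 0 < ∑ i, a i * (ptc 0 c i - ptc (base2 k L) c' i) := by
          apply sum_pos_one L
          · simp only [ha, if_pos rfl, ptc0_apply, ptcb2_apply, hcL]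
            cases hc' : c' L <;> simp <;> nlinarith
          · intro i hi
            simp only [ha, if_neg hi, ptc0_apply, ptcb2_apply]
            cases hc : c i <;> cases hc' : c' i <;> norm_num [hc, hc']
        have hlt : 0 < dot a (ptc 0 c) - dot a (ptc (base2 k L) c') := by
          rw [hds]; exact hpos
        linarith
    · -- c L = true, so there is a small index with c i₀ = false
      obtain ⟨i₀, hi₀⟩ : ∃ i₀, c i₀ = false := by
        by_contra hcon
        push_neg at hcon
        exact hne (funext fun i => by have := hcon i; simp at this; simp [this])
      have hi₀L : i₀ ≠ L := by intro h; rw [h, hcL] at hi₀; simp at hi₀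
      set a : Fin n → ℝ := fun i => if i = i₀ then -(3*(n:ℝ) + k) else
          if i = L then 1 else (if c i then 1 else -1) with ha
      apply extreme_of_strict _ _ hvmem a
      intro u hu hune
      rw [mem_VF_iff] at hu
      rcases hu with ⟨c', rfl, -⟩ | ⟨c', rfl, -⟩
      · apply same_cube_strict _ _ (fun h => hune (by rw [h]))
        intro i
        rcases eq_or_ne i i₀ with rfl | hii
        · rw [hi₀]; simp [ha]; linarith
        · rcases eq_or_ne i L with rfl | hi
          · rw [hcL]; simp [ha, hii]
          · simp only [ha, if_neg hii, if_neg hi]; cases hc : c i <;> simp [hc]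
      · have hds := dot_sub a (ptc 0 c) (ptc (base2 k L) c')
        have hpos : 0 < ∑ i, a i * (ptc 0 c i - ptc (base2 k L) c' i) := by
          apply sum_pos_two k i₀ L hi₀L
          · simp only [ha, if_pos rfl, ptc0_apply, ptcb2_apply, hi₀, if_neg hi₀L]
            cases hc' : c' i₀ <;> norm_num [hc'] <;> nlinarith
          · simp only [ha, if_neg (Ne.symm hi₀L), if_pos rfl, ptc0_apply, ptcb2_apply, hcL]
            cases hc' : c' L <;> norm_num [hc'] <;> nlinarith
          · intro i hii hi
            simp only [ha, if_neg hii, if_neg hi, ptc0_apply, ptcb2_apply]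
            cases hc : c i <;> cases hc' : c' i <;> norm_num [hc, hc']
        have hlt : 0 < dot a (ptc 0 c) - dot a (ptc (base2 k L) c') := by
          rw [hds]; exact hpos
        linarith
  · -- top cube vertex
    have hvmem : ptc (base2 k L) c ∈ VF k L := (mem_VF_iff k L).2 (Or.inr ⟨c, rfl, hne⟩)
    cases hcL : c L
    · -- c L = false, so there is a small index with c i₀ = true
      obtain ⟨i₀, hi₀⟩ : ∃ i₀, c i₀ = true := by
        by_contra hcon
        push_neg at hcon
        exact hne (funext fun i => by have := hcon i; simp at this; simp [this])
      have hi₀L : i₀ ≠ L := by intro h; rw [h, hcL] at hi₀; simp at hi₀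
      set a : Fin n → ℝ := fun i => if i = i₀ then (3*(n:ℝ) + k) else
          if i = L then -1 else (if c i then 1 else -1) with ha
      apply extreme_of_strict _ _ hvmem a
      intro u hu hune
      rw [mem_VF_iff] at hu
      rcases hu with ⟨c', rfl, -⟩ | ⟨c', rfl, -⟩
      · -- u in bottom cube : cross bound
        have hds := dot_sub a (ptc (base2 k L) c) (ptc 0 c')
        have hpos : 0 < ∑ i, a i * (ptc (base2 k L) c i - ptc 0 c' i) := by
          apply sum_pos_two k i₀ L hi₀L
          · simp only [ha, if_pos rfl, ptc0_apply, ptcb2_apply, hi₀, if_neg hi₀L]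
            cases hc' : c' i₀ <;> norm_num [hc'] <;> nlinarith
          · simp only [ha, if_neg (Ne.symm hi₀L), if_pos rfl, ptc0_apply, ptcb2_apply, hcL]
            cases hc' : c' L <;> norm_num [hc'] <;> nlinarith
          · intro i hii hi
            simp only [ha, if_neg hii, if_neg hi, ptc0_apply, ptcb2_apply]
            cases hc : c i <;> cases hc' : c' i <;> norm_num [hc, hc']
        have hlt : 0 < dot a (ptc (base2 k L) c) - dot a (ptc 0 c') := by
          rw [hds]; exact hpos
        linarith
      · apply same_cube_strict _ _ (fun h => hune (by rw [h]))
        intro i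
        rcases eq_or_ne i i₀ with rfl | hii
        · rw [hi₀]; simp [ha]; linarith
        · rcases eq_or_ne i L with rfl | hi
          · rw [hcL]; simp [ha, hii]
          · simp only [ha, if_neg hii, if_neg hi]; cases hc : c i <;> simp [hc]
    · -- c L = true
      set a : Fin n → ℝ := fun i => if i = L then (3*(n:ℝ)) else (if c i then 1 else -1)
        with ha
      apply extreme_of_strict _ _ hvmem a
      intro u hu hune
      rw [mem_VF_iff] at hu
      rcases hu with ⟨c', rfl, -⟩ | ⟨c', rfl, -⟩
      · have hds := dot_sub a (ptc (base2 k L) c) (ptc 0 c')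
        have hpos : 0 < ∑ i, a i * (ptc (base2 k L) c i - ptc 0 c' i) := by
          apply sum_pos_one L
          · simp only [ha, if_pos rfl, ptc0_apply, ptcb2_apply, hcL]
            cases hc' : c' L <;> simp <;> nlinarith
          · intro i hi
            simp only [ha, if_neg hi, ptc0_apply, ptcb2_apply]
            cases hc : c i <;> cases hc' : c' i <;> norm_num [hc, hc']
        have hlt : 0 < dot a (ptc (base2 k L) c) - dot a (ptc 0 c') := by
          rw [hds]; exact hpos
        linarith
      · apply same_cube_strict _ _ (fun h => hune (by rw [h]))
        intro i
        rcases eq_or_ne i L with rfl | hi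
        · rw [hcL]; simp [ha]; linarith
        · simp only [ha, if_neg hi]; cases hc : c i <;> simp [hc]


/-! ### Diagonal points -/

lemma diag_zero_mem {k : ℕ} {L : Fin n} : diagP L (0:ℝ) ∈ VF k L := by
  rw [mem_VF_iff]
  left
  refine ⟨fun i => !(decide (i = L)), funext fun i => ?_, ?_⟩
  · rw [ptc0_apply, diagP]
    rcases eq_or_ne i L with rfl | hi
    · simp
    · simp [hi]
  · intro h
    have := congrFun h L
    simp at this

lemma diag_top_mem {k : ℕ} {L : Fin n} : diagP L ((k:ℝ)+1) ∈ VF k L := by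
  rw [mem_VF_iff]
  right
  refine ⟨fun i => decide (i = L), funext fun i => ?_, ?_⟩
  · rw [ptcb2_apply, diagP]
    rcases eq_or_ne i L with rfl | hi
    · simp
    · simp [hi]
  · intro h
    have := congrFun h L
    simp at this

lemma diag_mem_hull {k : ℕ} {L : Fin n} (m : ℕ) (hm : m ≤ k + 1) :
    diagP L (m:ℝ) ∈ convexHull ℝ ((VF k L : Finset (Fin n → ℝ)) : Set (Fin n → ℝ)) := by
  have hK : (0:ℝ) < (k:ℝ) + 1 := by positivity
  set b : ℝ := (m:ℝ) / ((k:ℝ)+1) with hb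
  have hb0 : 0 ≤ b := by positivity
  have hb1 : b ≤ 1 := by
    rw [hb, div_le_one hK]
    exact_mod_cast hm
  have hmem := (convex_convexHull ℝ ((VF k L : Finset (Fin n → ℝ)) : Set (Fin n → ℝ)))
    (subset_convexHull ℝ _ (Finset.mem_coe.2 (diag_zero_mem (k := k) (L := L))))
    (subset_convexHull ℝ _ (Finset.mem_coe.2 (diag_top_mem (k := k) (L := L))))
    (by linarith : (0:ℝ) ≤ 1 - b) hb0 (by ring)
  convert hmem using 1
  funext i
  simp only [Pi.add_apply, Pi.smul_apply, smul_eq_mul, diagP]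
  rcases eq_or_ne i L with rfl | hi
  · simp only [if_pos rfl]
    rw [hb]
    field_simp
    rw [if_pos trivial, if_pos trivial, if_pos trivial]; ring
  · simp only [if_neg hi]
    ring

lemma diag_not_mem_VF (hn : 2 ≤ n) {k : ℕ} {L : Fin n} (m : ℕ) (h1 : 1 ≤ m) (h2 : m ≤ k) :
    diagP L (m:ℝ) ∉ VF k L := by
  obtain ⟨j, hj⟩ : ∃ j : Fin n, j ≠ L := by
    rcases eq_or_ne (⟨0, by omega⟩ : Fin n) L with h0 | h0
    · exact ⟨⟨1, by omega⟩, by rw [← h0]; intro h; simpa using congrArg Fin.val h⟩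
    · exact ⟨_, h0⟩
  intro hmem
  rw [mem_VF_iff] at hmem
  rcases hmem with ⟨c, hc, hne⟩ | ⟨c, hc, hne⟩
  · -- bottom cube
    have hLc := congrFun hc L
    rw [diagP, if_pos rfl, ptc0_apply] at hLc
    have hm1 : m = 1 ∧ c L = true := by
      cases hcl : c L
      · rw [hcl] at hLc
        norm_num at hLc
        have : m = 0 := by exact_mod_cast hLc
        omega
      · rw [hcl] at hLc
        norm_num at hLc
        exact ⟨by exact_mod_cast hLc, rfl⟩
    apply hne
    funext i
    rcases eq_or_ne i L with rfl | hi
    · exact hm1.2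
    · have := congrFun hc i
      rw [diagP, if_neg hi, ptc0_apply] at this
      cases hci : c i
      · rw [hci] at this; norm_num at this
      · rfl
  · -- top cube
    have hLc := congrFun hc L
    rw [diagP, if_pos rfl, ptcb2_apply, if_pos rfl] at hLc
    have hmk : c L = false := by
      cases hcl : c L
      · rfl
      · exfalso
        rw [hcl] at hLc
        norm_num at hLc
        have : m = k + 1 := by exact_mod_cast hLc
        omega
    apply hne
    funext i
    rcases eq_or_ne i L with rfl | hi
    · exact hmk
    · have := congrFun hc i
      rw [diagP, if_neg hi, ptcb2_apply, if_neg hi] at this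
      cases hci : c i
      · rfl
      · rw [hci] at this; norm_num at this

lemma diag_injective {L : Fin n} : Function.Injective (fun m : ℕ => diagP L (m:ℝ)) := by
  intro m m' h
  have := congrFun h L
  simp only [diagP, if_pos rfl] at this
  exact_mod_cast this

lemma diag_mem_intLat {L : Fin n} (m : ℕ) : diagP L (m:ℝ) ∈ intLat n := by
  intro i
  rcases eq_or_ne i L with rfl | hi
  · exact ⟨m, by simp [diagP]⟩
  · exact ⟨1, by simp [diagP, hi]⟩

end Stmt1Aux


open Stmt1Aux

/-- For all `n ≥ 2` and `k ≥ 1`, `g(ℤ^n, k) ≥ 2^(n+1) - 2`, i.e. there is a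
polytope with vertices in `ℤ^n` having at least `2^(n+1) - 2` vertices and containing
exactly `k` integer points that are not vertices. -/
theorem stmt1 (n k : ℕ) (hn : 2 ≤ n) (hk : 1 ≤ k) :
    ∃ V : Finset (Fin n → ℝ), ↑V ⊆ intLat n ∧
      Set.extremePoints ℝ (convexHull ℝ (V : Set (Fin n → ℝ))) = ↑V ∧
      ((intLat n ∩ convexHull ℝ (V : Set (Fin n → ℝ))) \ ↑V).Finite ∧
      ((intLat n ∩ convexHull ℝ (V : Set (Fin n → ℝ))) \ ↑V).ncard = k ∧
      2 ^ (n + 1) - 2 ≤ V.card := by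
  classical
  set L : Fin n := ⟨n - 1, by omega⟩ with hL
  have hset : (intLat n ∩ convexHull ℝ ((VF k L : Finset (Fin n → ℝ)) : Set (Fin n → ℝ)))
      \ ↑(VF k L) = (fun m : ℕ => diagP L (m:ℝ)) '' (Set.Icc 1 k) := by
    apply Set.Subset.antisymm
    · rintro x ⟨⟨hxI, hxH⟩, hxV⟩
      rcases lattice_classify hn hk hxI hxH with h | ⟨m, h1, h2, rfl⟩
      · exact absurd (Finset.mem_coe.2 h) hxV
      · exact ⟨m, ⟨h1, h2⟩, rfl⟩
    · rintro x ⟨m, ⟨h1, h2⟩, rfl⟩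
      exact ⟨⟨diag_mem_intLat m, diag_mem_hull m (by omega)⟩,
        fun hx => diag_not_mem_VF hn m h1 h2 (Finset.mem_coe.1 hx)⟩
  refine ⟨VF k L, VF_subset_intLat k L hk, VF_extreme hn hk, ?_, ?_, ?_⟩
  · rw [hset]
    exact (Set.finite_Icc _ _).image _
  · rw [hset, Set.ncard_image_of_injective _ diag_injective, ← Finset.coe_Icc,
      Set.ncard_coe_finset, Nat.card_Icc]
    omega
  · rw [VF_card k L hn hk]
end

section
/- Let S ⊆ R^n be discrete and k ∈ N₀. Then c(S,k) = max{ g(S,ℓ) + ℓ - k : ℓ ∈ {0,...,k}, g(S,ℓ) + ℓ - k ≥ 0 }. -/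
open Set

/-- A set `S ⊆ ℝ^n` is discrete if every bounded subset of it is finite. -/
def DiscreteSet {n : ℕ} (S : Set (Fin n → ℝ)) : Prop :=
  ∀ B : Set (Fin n → ℝ), Bornology.IsBounded B → (S ∩ B).Finite

/-- The Helly-type condition: whenever finitely many convex sets have exactly `k` common
points of `S`, some at most `t` of them already have exactly `k` common points of `S`. -/
def HellyCond {n : ℕ} (S : Set (Fin n → ℝ)) (k t : ℕ) : Prop :=
  ∀ (m : ℕ) (C : Fin m → Set (Fin n → ℝ)), (∀ i, Convex ℝ (C i)) →
    (S ∩ ⋂ i, C i).Finite → (S ∩ ⋂ i, C i).ncard = k →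
    ∃ I : Finset (Fin m), I.card ≤ t ∧ (S ∩ ⋂ i ∈ I, C i).Finite ∧
      (S ∩ ⋂ i ∈ I, C i).ncard = k

/- The quantitative Helly number `c(S,k)` as an extended real number: `⊥` (= -∞) if no
convex set contains exactly `k` points of `S`, `⊤` (= ∞) if no finite `t` works, and
otherwise the smallest `t` satisfying the Helly condition. -/
open Classical in
noncomputable def cER {n : ℕ} (S : Set (Fin n → ℝ)) (k : ℕ) : EReal :=
  if ¬ ∃ C : Set (Fin n → ℝ), Convex ℝ C ∧ (S ∩ C).Finite ∧ (S ∩ C).ncard = k then ⊥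
  else if ∃ t : ℕ, HellyCond S k t then ((sInf {t : ℕ | HellyCond S k t} : ℕ) : EReal)
  else ⊤

/-- `g(S,k)`: the supremum (in `EReal`, so `sSup ∅ = ⊥ = -∞`) of the number of vertices
of a polytope `P` with vertices in `S` such that exactly `k` points of `S ∩ P` are not
vertices of `P`. -/
noncomputable def gER {n : ℕ} (S : Set (Fin n → ℝ)) (k : ℕ) : EReal :=
  sSup {v : EReal | ∃ V : Finset (Fin n → ℝ), ↑V ⊆ S ∧
    Set.extremePoints ℝ (convexHull ℝ (V : Set (Fin n → ℝ))) = ↑V ∧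
    ((S ∩ convexHull ℝ (V : Set (Fin n → ℝ))) \ ↑V).Finite ∧
    ((S ∩ convexHull ℝ (V : Set (Fin n → ℝ))) \ ↑V).ncard = k ∧
    v = (V.card : EReal)}


section Algebra
variable {E : Type*} [AddCommGroup E] [Module ℝ E] [DecidableEq E]

/-- If `t` is a convex combination of points of `B` with weight less than 1 on `t` itself,
then `t` is in the convex hull of `B.erase t`. -/
lemma rescale_mem {B : Finset E} {t : E} (w : E → ℝ) (h0 : ∀ y ∈ B, 0 ≤ w y)
    (h1 : ∑ y ∈ B, w y = 1) (hrep : ∑ y ∈ B, w y • y = t) (htB : t ∈ B) (hwt : w t < 1) :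
    t ∈ convexHull ℝ (↑(B.erase t) : Set E) := by
  have hs : (0:ℝ) < 1 - w t := by linarith
  rw [Finset.mem_convexHull']
  refine ⟨fun y => w y / (1 - w t),
    fun y hy => div_nonneg (h0 y (Finset.mem_of_mem_erase hy)) hs.le, ?_, ?_⟩
  · rw [← Finset.sum_div, Finset.sum_erase_eq_sub htB, h1]
    field_simp
  · have h2 : ∑ y ∈ B.erase t, w y • y = (1 - w t) • t := by
      rw [Finset.sum_erase_eq_sub htB, hrep, sub_smul, one_smul]
    have h3 : ∑ y ∈ B.erase t, (w y / (1 - w t)) • y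
        = (1 - w t)⁻¹ • ∑ y ∈ B.erase t, w y • y := by
      rw [Finset.smul_sum]
      exact Finset.sum_congr rfl fun y _ => by rw [div_eq_inv_mul, mul_smul]
    rw [h3, h2, smul_smul, inv_mul_cancel₀ hs.ne', one_smul]

/-- Exchange lemma: adding a point `y` of the hull of `B` cannot make an "extreme" `p` become
a convex combination of the others. -/
lemma exch {B : Finset E} {p y : E} (hpB : p ∈ B) (hy : y ∈ convexHull ℝ (↑B : Set E))
    (hyB : y ∉ B) (hne : y ≠ p) (hpe : p ∉ convexHull ℝ (↑(B.erase p) : Set E)) :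
    p ∉ convexHull ℝ (↑(insert y (B.erase p)) : Set E) := by
  intro hmem
  rw [Finset.mem_convexHull'] at hmem hy
  obtain ⟨v, hv0, hv1, hvrep⟩ := hmem
  obtain ⟨u, hu0, hu1, hurep⟩ := hy
  have hynB : y ∉ B.erase p := fun h => hyB (Finset.mem_of_mem_erase h)
  rw [Finset.sum_insert hynB] at hv1 hvrep
  have hvy0 : 0 ≤ v y := hv0 y (Finset.mem_insert_self _ _)
  set w : E → ℝ := fun b => v y * u b + (if b = p then 0 else v b) with hw
  have hw0 : ∀ b ∈ B, 0 ≤ w b := by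
    intro b hb
    have h1 : 0 ≤ v y * u b := mul_nonneg hvy0 (hu0 b hb)
    by_cases hbp : b = p
    · subst hbp; simpa [hw] using h1
    · have h2 : 0 ≤ v b := hv0 b (Finset.mem_insert_of_mem (Finset.mem_erase.2 ⟨hbp, hb⟩))
      simp only [hw, if_neg hbp]
      positivity
  have hite : ∀ (g : E → E → ℝ), True := fun _ => trivial
  have hsum2 : ∑ b ∈ B, (if b = p then (0:ℝ) else v b) = ∑ b ∈ B.erase p, v b := by
    rw [← Finset.add_sum_erase _ _ hpB, if_pos rfl, zero_add]
    exact Finset.sum_congr rfl fun b hb => if_neg (Finset.mem_erase.1 hb).1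
  have hsum : ∑ b ∈ B, w b = 1 := by
    simp only [hw, Finset.sum_add_distrib, ← Finset.mul_sum, hu1, hsum2]
    linarith
  have hrep : ∑ b ∈ B, w b • b = p := by
    simp only [hw, add_smul, Finset.sum_add_distrib]
    have e1 : ∑ b ∈ B, (v y * u b) • b = v y • y := by
      rw [← hurep, Finset.smul_sum]
      exact Finset.sum_congr rfl fun b _ => by rw [mul_smul]
    have e2 : ∑ b ∈ B, (if b = p then (0:ℝ) else v b) • b = ∑ b ∈ B.erase p, v b • b := by
      rw [← Finset.add_sum_erase _ _ hpB, if_pos rfl, zero_smul, zero_add]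
      exact Finset.sum_congr rfl fun b hb => by rw [if_neg (Finset.mem_erase.1 hb).1]
    rw [e1, e2]
    linear_combination (norm := module) hvrep
  have hup1 : u p ≤ 1 := by
    have := Finset.single_le_sum hu0 hpB
    linarith
  have hvy1 : v y ≤ 1 := by
    have h4 : 0 ≤ ∑ b ∈ B.erase p, v b :=
      Finset.sum_nonneg fun b hb => hv0 b (Finset.mem_insert_of_mem hb)
    linarith
  by_cases hwp : w p < 1
  · exact hpe (rescale_mem w hw0 hsum hrep hpB hwp)
  · -- w p = v y * u p ≥ 1 forces u p = 1 and then y = p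
    push_neg at hwp
    have hwp' : v y * u p ≥ 1 := by simpa [hw] using hwp
    have hup : u p = 1 := by nlinarith [hu0 p hpB]
    have hothers : ∑ b ∈ B.erase p, u b = 0 := by
      rw [Finset.sum_erase_eq_sub hpB, hu1, hup]; ring
    have hzero : ∀ b ∈ B.erase p, u b = 0 := by
      rw [Finset.sum_eq_zero_iff_of_nonneg
        (fun b hb => hu0 b (Finset.mem_of_mem_erase hb))] at hothers
      exact hothers
    have : y = p := by
      rw [← hurep, ← Finset.add_sum_erase _ _ hpB, hup, one_smul]
      rw [Finset.sum_eq_zero fun b hb => by rw [hzero b hb, zero_smul], add_zero]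
    exact hne this

end Algebra

section Topology
variable {F : Type*} [NormedAddCommGroup F] [NormedSpace ℝ F] [DecidableEq F]

/-- Minkowski's theorem for polytopes: the convex hull of a finite set is the convex hull of
its extreme points. -/
lemma minkowski {A : Set F} (hA : A.Finite) :
    convexHull ℝ (extremePoints ℝ (convexHull ℝ A)) = convexHull ℝ A := by
  have hext : extremePoints ℝ (convexHull ℝ A) ⊆ A := extremePoints_convexHull_subset
  have hclosed : IsClosed (convexHull ℝ (extremePoints ℝ (convexHull ℝ A))) :=
    (hA.subset hext).isClosed_convexHull ℝ
  calc convexHull ℝ (extremePoints ℝ (convexHull ℝ A))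
      = closure (convexHull ℝ (extremePoints ℝ (convexHull ℝ A))) := hclosed.closure_eq.symm
    _ = convexHull ℝ A :=
        closure_convexHull_extremePoints (hA.isCompact_convexHull ℝ) (convex_convexHull ℝ A)

lemma not_extreme_mem_hull_erase {B : Finset F} {t : F} (htB : t ∈ B)
    (h : t ∉ extremePoints ℝ (convexHull ℝ (B : Set F))) :
    t ∈ convexHull ℝ (↑(B.erase t) : Set F) := by
  have h1 : t ∈ convexHull ℝ (extremePoints ℝ (convexHull ℝ (B : Set F))) := by
    rw [minkowski B.finite_toSet]; exact subset_convexHull ℝ _ htB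
  refine convexHull_mono ?_ h1
  intro z hz
  have hzB : z ∈ B := extremePoints_convexHull_subset hz
  exact Finset.mem_coe.2 (Finset.mem_erase.2 ⟨fun he => h (he ▸ hz), hzB⟩)

lemma extreme_of_not_mem_hull_erase {B : Finset F} {t : F} (htB : t ∈ B)
    (h : t ∉ convexHull ℝ (↑(B.erase t) : Set F)) :
    t ∈ extremePoints ℝ (convexHull ℝ (B : Set F)) := by
  by_contra hc
  exact h (not_extreme_mem_hull_erase htB hc)

lemma not_mem_hull_erase_of_extreme {B : Finset F} {t : F}
    (h : t ∈ extremePoints ℝ (convexHull ℝ (B : Set F))) :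
    t ∉ convexHull ℝ (↑(B.erase t) : Set F) := by
  intro hmem
  rw [Finset.mem_convexHull'] at hmem
  obtain ⟨w, hw0, hw1, hwrep⟩ := hmem
  -- find b₀ with positive weight
  obtain ⟨b₀, hb₀, hb₀pos⟩ : ∃ b ∈ B.erase t, 0 < w b := by
    by_contra hcon
    push_neg at hcon
    have : ∑ y ∈ B.erase t, w y = 0 :=
      Finset.sum_eq_zero fun b hb => le_antisymm (hcon b hb) (hw0 b hb)
    rw [hw1] at this; norm_num at this
  have hb₀t : b₀ ≠ t := (Finset.mem_erase.1 hb₀).1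
  rcases eq_or_lt_of_le (by
      have := Finset.single_le_sum hw0 hb₀; rw [hw1] at this; exact this : w b₀ ≤ 1)
    with heq | hlt
  · -- w b₀ = 1 : then t = b₀
    have hothers : ∑ b ∈ (B.erase t).erase b₀, w b = 0 := by
      rw [Finset.sum_erase_eq_sub hb₀, hw1, heq]; ring
    have hzero : ∀ b ∈ (B.erase t).erase b₀, w b = 0 := by
      rw [Finset.sum_eq_zero_iff_of_nonneg
        (fun b hb => hw0 b (Finset.mem_of_mem_erase hb))] at hothers
      exact hothers
    have : t = b₀ := by
      rw [← hwrep, ← Finset.add_sum_erase _ _ hb₀, heq, one_smul,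
        Finset.sum_eq_zero fun b hb => by rw [hzero b hb, zero_smul], add_zero]
    exact hb₀t this.symm
  · -- 0 < w b₀ < 1 : t is interior to a segment from b₀
    set q : F := (1 - w b₀)⁻¹ • ∑ b ∈ (B.erase t).erase b₀, w b • b with hq
    have hs : (0:ℝ) < 1 - w b₀ := by linarith
    have hqmem : q ∈ convexHull ℝ (↑((B.erase t).erase b₀) : Set F) := by
      rw [Finset.mem_convexHull']
      refine ⟨fun b => w b / (1 - w b₀),
        fun b hb => div_nonneg (hw0 b (Finset.mem_of_mem_erase hb)) hs.le, ?_, ?_⟩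
      · rw [← Finset.sum_div, Finset.sum_erase_eq_sub hb₀, hw1]
        field_simp
      · rw [hq, Finset.smul_sum]
        exact Finset.sum_congr rfl fun b _ => by
          show (w b / (1 - w b₀)) • b = _
          rw [div_eq_inv_mul, mul_smul]
    have hqB : q ∈ convexHull ℝ (B : Set F) := by
      refine convexHull_mono ?_ hqmem
      intro z hz
      exact Finset.mem_coe.2 (Finset.mem_of_mem_erase (Finset.mem_of_mem_erase hz))
    have hb₀B : (b₀ : F) ∈ convexHull ℝ (B : Set F) :=
      subset_convexHull ℝ _ (Finset.mem_of_mem_erase hb₀)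
    have hseg : t ∈ openSegment ℝ b₀ q := by
      refine ⟨w b₀, 1 - w b₀, hb₀pos, hs, by ring, ?_⟩
      rw [hq, smul_smul, mul_inv_cancel₀ hs.ne', one_smul]
      rw [← Finset.add_sum_erase _ _ hb₀] at hwrep
      linear_combination (norm := module) hwrep
    rw [mem_extremePoints] at h
    exact hb₀t ((h.2 b₀ hb₀B q hqB hseg).1)

end Topology

section Discrete

variable {d : ℕ} {S : Set (Fin d → ℝ)}

lemma disc_inter_hull_finite (hS : DiscreteSet S) {A : Set (Fin d → ℝ)} (hA : A.Finite) :
    (S ∩ convexHull ℝ A).Finite :=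
  hS _ (hA.isCompact_convexHull ℝ).isBounded

/-- extract the extreme points of the hull of a finite set as a `Finset`. -/
lemma exists_ext_finset (F : Finset (Fin d → ℝ)) :
    ∃ V : Finset (Fin d → ℝ), V ⊆ F ∧
      ↑V = extremePoints ℝ (convexHull ℝ (F : Set (Fin d → ℝ))) := by
  have hfin : (extremePoints ℝ (convexHull ℝ (F : Set (Fin d → ℝ)))).Finite :=
    F.finite_toSet.subset extremePoints_convexHull_subset
  refine ⟨hfin.toFinset, ?_, hfin.coe_toFinset⟩
  intro z hz
  exact extremePoints_convexHull_subset (hfin.mem_toFinset.1 hz)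

/-- From a "saturated" finite subset of `S` one obtains a polytope witness. -/
lemma witness_from_saturated (F : Finset (Fin d → ℝ)) (hFS : ↑F ⊆ S)
    (hsat : S ∩ convexHull ℝ (F : Set (Fin d → ℝ)) = ↑F) :
    ∃ V : Finset (Fin d → ℝ), V ⊆ F ∧
      ↑V = extremePoints ℝ (convexHull ℝ (F : Set (Fin d → ℝ))) ∧
      convexHull ℝ (V : Set (Fin d → ℝ)) = convexHull ℝ (F : Set (Fin d → ℝ)) ∧
      (↑V ⊆ S ∧
        extremePoints ℝ (convexHull ℝ (V : Set (Fin d → ℝ))) = ↑V ∧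
        ((S ∩ convexHull ℝ (V : Set (Fin d → ℝ))) \ ↑V).Finite ∧
        ((S ∩ convexHull ℝ (V : Set (Fin d → ℝ))) \ ↑V).ncard = (F \ V).card) ∧
      V.card + (F \ V).card = F.card := by
  obtain ⟨V, hVF, hVext⟩ := exists_ext_finset F
  have hhull : convexHull ℝ (V : Set (Fin d → ℝ)) = convexHull ℝ (F : Set (Fin d → ℝ)) := by
    rw [hVext]; exact minkowski F.finite_toSet
  have hdiff : (S ∩ convexHull ℝ (V : Set (Fin d → ℝ))) \ ↑V = ↑(F \ V) := by
    rw [hhull, hsat, Finset.coe_sdiff]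
  refine ⟨V, hVF, hVext, hhull, ⟨fun z hz => hFS (hVF hz), ?_, ?_, ?_⟩, ?_⟩
  · rw [hhull, hVext]
  · rw [hdiff]; exact (F \ V).finite_toSet
  · rw [hdiff, Set.ncard_coe_finset]
  · rw [Finset.card_sdiff_of_subset hVF]
    exact Nat.add_sub_cancel' (Finset.card_le_card hVF)

end Discrete

section Key

variable {d : ℕ} {S : Set (Fin d → ℝ)}

/-- The key combinatorial lemma: a critical family of `m` convex sets whose common points of `S`
are exactly the finite set `W` yields a polytope witness with at least `m + |W|` points,
at most `|W|` of which are non-vertices. -/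
lemma key_lemma (hS : DiscreteSet S) :
    ∀ N m : ℕ, ∀ C : Fin m → Set (Fin d → ℝ), (∀ i, Convex ℝ (C i)) →
    ∀ W : Finset (Fin d → ℝ), ↑W ⊆ S → (∀ i, ↑W ⊆ C i) →
    (∀ s ∈ S, (∀ i, s ∈ C i) → s ∈ W) →
    ∀ x : Fin m → (Fin d → ℝ), (∀ i, x i ∈ S) → (∀ i j, i ≠ j → x i ∈ C j) →
    (∀ i, x i ∉ C i) →
    (S ∩ convexHull ℝ (↑W ∪ Set.range x)).ncard ≤ N →
    ∃ (ℓ : ℕ) (V : Finset (Fin d → ℝ)), ℓ ≤ W.card ∧ ↑V ⊆ S ∧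
      extremePoints ℝ (convexHull ℝ (V : Set (Fin d → ℝ))) = ↑V ∧
      ((S ∩ convexHull ℝ (V : Set (Fin d → ℝ))) \ ↑V).Finite ∧
      ((S ∩ convexHull ℝ (V : Set (Fin d → ℝ))) \ ↑V).ncard = ℓ ∧
      m + W.card ≤ V.card + ℓ := by
  intro N
  induction N using Nat.strong_induction_on with
  | _ N IH =>
    intro m C hC W hWS hWC hWmax x hxS hxC hxN hN
    classical
    -- injectivity of x
    have hinj : Function.Injective x := by
      intro i j hij
      by_contra hne
      exact hxN j (hij ▸ hxC i j (fun h => hne h))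
    have hxW : ∀ i, x i ∉ (W : Set (Fin d → ℝ)) := fun i h => hxN i (hWC i h)
    set B : Finset (Fin d → ℝ) := W ∪ Finset.image x Finset.univ with hB
    have hBcoe : (B : Set (Fin d → ℝ)) = ↑W ∪ Set.range x := by
      rw [hB, Finset.coe_union, Finset.coe_image, Finset.coe_univ, Set.image_univ]
    have hBS : (B : Set (Fin d → ℝ)) ⊆ S := by
      rw [hBcoe]
      rintro z (hz | ⟨i, rfl⟩)
      exacts [hWS hz, hxS i]
    set P : Set (Fin d → ℝ) := convexHull ℝ (B : Set (Fin d → ℝ)) with hP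
    have hGfin : (S ∩ P).Finite := disc_inter_hull_finite hS B.finite_toSet
    have hGN : (S ∩ P).ncard ≤ N := by rwa [hP, hBcoe]
    have hBsubP : (B : Set (Fin d → ℝ)) ⊆ P := subset_convexHull ℝ _
    have hBsubG : (B : Set (Fin d → ℝ)) ⊆ S ∩ P := fun z hz => ⟨hBS hz, hBsubP hz⟩
    have hxB : ∀ i, x i ∈ B := fun i => by
      rw [hB]; exact Finset.mem_union_right _ (Finset.mem_image_of_mem x (Finset.mem_univ i))
    have hWB : W ⊆ B := by rw [hB]; exact Finset.subset_union_left
    -- the hull of B minus a vertex x i is inside C i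
    have herase : ∀ i, ((B.erase (x i) : Finset (Fin d → ℝ)) : Set (Fin d → ℝ)) ⊆ C i := by
      intro i z hz
      rw [Finset.mem_coe, Finset.mem_erase] at hz
      obtain ⟨hne, hzB⟩ := hz
      rw [hB, Finset.mem_union] at hzB
      rcases hzB with h | h
      · exact hWC i (Finset.mem_coe.2 h)
      · obtain ⟨j, _, rfl⟩ := Finset.mem_image.1 h
        exact hxC j i (fun hji => hne (by rw [hji]))
    have hxext : ∀ i, x i ∉ convexHull ℝ ((B.erase (x i) : Finset (Fin d → ℝ)) : Set (Fin d → ℝ)) :=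
      fun i h => hxN i (convexHull_min (herase i) (hC i) h)
    by_cases hcase : S ∩ P ⊆ ↑B
    · -- terminal case : no extra points
      have hsat : S ∩ convexHull ℝ (B : Set (Fin d → ℝ)) = ↑B := subset_antisymm hcase hBsubG
      obtain ⟨V, hVB, hVext, hVhull, ⟨hVS, hVext2, hVfin, hVncard⟩, hVcount⟩ :=
        witness_from_saturated B hBS hsat
      refine ⟨(B \ V).card, V, ?_, hVS, hVext2, hVfin, hVncard, ?_⟩
      · -- non-vertices lie in W
        refine Finset.card_le_card fun b hb => ?_
        rw [Finset.mem_sdiff] at hb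
        obtain ⟨hbB, hbV⟩ := hb
        have hbB' := hbB
        rw [hB, Finset.mem_union] at hbB'
        rcases hbB' with h | h
        · exact h
        · obtain ⟨j, _, rfl⟩ := Finset.mem_image.1 h
          exfalso
          apply hbV
          have hxj : x j ∈ extremePoints ℝ (convexHull ℝ (B : Set (Fin d → ℝ))) :=
            extreme_of_not_mem_hull_erase (hxB j) (hxext j)
          rw [← hVext] at hxj
          exact_mod_cast hxj
      · -- counting
        have hdisj : Disjoint W (Finset.image x Finset.univ) := by
          rw [Finset.disjoint_right]
          rintro a ha
          obtain ⟨j, _, rfl⟩ := Finset.mem_image.1 ha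
          exact fun h => hxW j (Finset.mem_coe.2 h)
        have hBcard : B.card = W.card + m := by
          rw [hB, Finset.card_union_of_disjoint hdisj,
            Finset.card_image_of_injective _ hinj, Finset.card_univ, Fintype.card_fin]
        omega
    · -- there is an extra point
      rw [Set.not_subset] at hcase
      obtain ⟨y0, hy0G, hy0B⟩ := hcase
      set Ex : Set (Fin d → ℝ) := (S ∩ P) \ ↑B with hEx
      have hExfin : Ex.Finite := hGfin.diff
      have hExne : Ex.Nonempty := ⟨y0, hy0G, hy0B⟩
      obtain ⟨ys, hysEx, hysmin⟩ :=
        Set.exists_min_image Ex (fun y => (Finset.univ.filter (fun i => y ∉ C i)).card)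
          hExfin hExne
      obtain ⟨hysG, hysB⟩ := hysEx
      have hysS : ys ∈ S := hysG.1
      have hysP : ys ∈ P := hysG.2
      have hysBmem : ys ∉ B := fun h => hysB (Finset.mem_coe.2 h)
      have hysW : ys ∉ W := fun h => hysBmem (hWB h)
      obtain ⟨i₀, hi₀⟩ : ∃ i, ys ∉ C i := by
        by_contra hcon
        push_neg at hcon
        exact hysBmem (hWB (hWmax ys hysS hcon))
      set x' : Fin m → (Fin d → ℝ) := Function.update x i₀ ys with hx'
      have hx'i₀ : x' i₀ = ys := Function.update_self i₀ ys x
      have hx'ne : ∀ j, j ≠ i₀ → x' j = x j := fun j hj => Function.update_of_ne hj ys x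
      set B' : Finset (Fin d → ℝ) := insert ys (B.erase (x i₀)) with hB'
      have hxine : ∀ j, ys ≠ x j := fun j h => hysBmem (h ▸ hxB j)
      have hB'coe : (B' : Set (Fin d → ℝ)) = ↑W ∪ Set.range x' := by
        ext z
        simp only [hB', Finset.coe_insert, Set.mem_insert_iff, Finset.coe_erase,
          Set.mem_diff, Set.mem_union, Set.mem_range, Set.mem_singleton_iff, Finset.mem_coe]
        constructor
        · rintro (rfl | ⟨hzB, hzne⟩)
          · exact Or.inr ⟨i₀, hx'i₀⟩
          · rw [hB, Finset.mem_union] at hzB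
            rcases hzB with h | h
            · exact Or.inl h
            · obtain ⟨j, _, rfl⟩ := Finset.mem_image.1 h
              have hji₀ : j ≠ i₀ := fun hj => hzne (by rw [hj])
              exact Or.inr ⟨j, hx'ne j hji₀⟩
        · rintro (hzW | ⟨j, rfl⟩)
          · exact Or.inr ⟨hWB hzW, fun h => hxW i₀ (h ▸ (Finset.mem_coe.2 hzW))⟩
          · by_cases hj : j = i₀
            · subst hj; rw [hx'i₀]; exact Or.inl rfl
            · rw [hx'ne j hj]
              exact Or.inr ⟨hxB j, fun h => hj (hinj h)⟩
      have hx'inj : Function.Injective x' := by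
        intro a b hab
        by_cases ha : a = i₀ <;> by_cases hb : b = i₀
        · rw [ha, hb]
        · rw [ha, hx'i₀, hx'ne b hb] at hab; exact absurd hab (hxine b)
        · rw [hb, hx'i₀, hx'ne a ha] at hab; exact absurd hab.symm (hxine a)
        · rw [hx'ne a ha, hx'ne b hb] at hab; exact hinj hab
      have hx'B' : ∀ j, x' j ∈ B' := by
        intro j
        by_cases hj : j = i₀
        · subst hj; rw [hx'i₀, hB']; exact Finset.mem_insert_self _ _
        · rw [hx'ne j hj, hB']
          exact Finset.mem_insert_of_mem
            (Finset.mem_erase.2 ⟨fun h => hj (hinj h), hxB j⟩)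
      have hB'P : (B' : Set (Fin d → ℝ)) ⊆ P := by
        rw [hB', Finset.coe_insert]
        rintro z (rfl | hz)
        · exact hysP
        · exact hBsubP (Finset.mem_coe.2 (Finset.mem_of_mem_erase (Finset.mem_coe.1 hz)))
      have hhullB' : convexHull ℝ (B' : Set (Fin d → ℝ)) ⊆ P :=
        convexHull_min hB'P (convex_convexHull ℝ _)
      -- the new family
      set C' : Fin m → Set (Fin d → ℝ) := fun j =>
        if ys ∈ C j then C j
        else convexHull ℝ ((B'.erase (x' j) : Finset (Fin d → ℝ)) : Set (Fin d → ℝ)) with hC'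
      have hC'i₀base : B'.erase (x' i₀) = B.erase (x i₀) := by
        rw [hx'i₀, hB']
        exact Finset.erase_insert (fun h => hysBmem (Finset.mem_of_mem_erase h))
      have hC'i₀ : C' i₀ = convexHull ℝ ((B.erase (x i₀) : Finset (Fin d → ℝ)) : Set (Fin d → ℝ)) := by
        rw [hC']
        simp only [if_neg hi₀]
        rw [hC'i₀base]
      have hC'i₀sub : C' i₀ ⊆ C i₀ := by
        rw [hC'i₀]; exact convexHull_min (herase i₀) (hC i₀)
      have hC'conv : ∀ j, Convex ℝ (C' j) := by
        intro j
        rw [hC']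
        dsimp only
        split_ifs with h
        · exact hC j
        · exact convex_convexHull ℝ _
      have hWC' : ∀ j, ↑W ⊆ C' j := by
        intro j
        rw [hC']
        dsimp only
        split_ifs with h
        · exact hWC j
        · refine subset_trans ?_ (subset_convexHull ℝ _)
          intro z hz
          refine Finset.mem_coe.2 (Finset.mem_erase.2 ⟨?_, ?_⟩)
          · intro hzx
            by_cases hj : j = i₀
            · subst hj; rw [hx'i₀] at hzx; exact hysW (hzx ▸ hz)
            · rw [hx'ne j hj] at hzx; exact hxW j (hzx ▸ hz)
          · rw [hB']
            exact Finset.mem_insert_of_mem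
              (Finset.mem_erase.2 ⟨fun hzx => hxW i₀ (hzx ▸ hz), hWB (Finset.mem_coe.1 hz)⟩)
      -- self-avoidance for the new system
      have hx'N' : ∀ j, x' j ∉ C' j := by
        intro j
        by_cases hj : j = i₀
        · subst hj
          rw [hx'i₀, hC'i₀]
          exact fun h => hi₀ (convexHull_min (herase j) (hC j) h)
        · by_cases hyj : ys ∈ C j
          · rw [hC']; dsimp only; rw [if_pos hyj, hx'ne j hj]; exact hxN j
          · rw [hC']; dsimp only; rw [if_neg hyj, hx'ne j hj]
            -- B'.erase (x j) = insert ys ((B.erase (x i₀)).erase (x j))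
            have hBe : B'.erase (x j) = insert ys ((B.erase (x i₀)).erase (x j)) := by
              rw [hB', Finset.erase_insert_of_ne (hxine j)]
            intro hmem
            have hsub1 : ((insert ys ((B.erase (x i₀)).erase (x j)) : Finset (Fin d → ℝ)) : Set (Fin d → ℝ))
                ⊆ ((insert ys (B.erase (x j)) : Finset (Fin d → ℝ)) : Set (Fin d → ℝ)) := by
              intro z hz
              rw [Finset.coe_insert, Set.mem_insert_iff] at hz ⊢
              rcases hz with rfl | hz
              · exact Or.inl rfl
              · exact Or.inr (Finset.mem_coe.2
                  (Finset.erase_subset_erase _ (Finset.erase_subset _ _)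
                    (Finset.mem_coe.1 hz)))
            rw [hBe] at hmem
            have hmem2 := convexHull_mono hsub1 hmem
            exact exch (hxB j) hysP hysBmem (hxine j) (hxext j) hmem2
      -- cross-membership for the new system
      have hx'C' : ∀ j r, j ≠ r → x' j ∈ C' r := by
        intro j r hjr
        by_cases hyr : ys ∈ C r
        · rw [hC']; dsimp only; rw [if_pos hyr]
          by_cases hj : j = i₀
          · subst hj; rw [hx'i₀]; exact hyr
          · rw [hx'ne j hj]
            by_cases hr : r = i₀
            · subst hr; exact hxC j r hj
            · exact hxC j r hjr
        · rw [hC']; dsimp only; rw [if_neg hyr]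
          refine subset_convexHull ℝ _ (Finset.mem_coe.2 (Finset.mem_erase.2
            ⟨fun h => hjr (hx'inj h), hx'B' j⟩))
      have hx'S : ∀ j, x' j ∈ S := by
        intro j
        by_cases hj : j = i₀
        · subst hj; rw [hx'i₀]; exact hysS
        · rw [hx'ne j hj]; exact hxS j
      -- maximality for the new family
      have hmax' : ∀ s ∈ S, (∀ j, s ∈ C' j) → s ∈ W := by
        intro s hsS hsC'
        have hsCi₀ : s ∈ C i₀ := hC'i₀sub (hsC' i₀)
        have hsP : s ∈ P := by
          have := hsC' i₀
          rw [hC'i₀] at this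
          exact convexHull_mono (fun z hz => Finset.mem_coe.2
            (Finset.mem_of_mem_erase (Finset.mem_coe.1 hz))) this
        have hsC : ∀ j, s ∈ C j := by
          intro j
          by_cases hyj : ys ∈ C j
          · have := hsC' j
            rw [hC'] at this; dsimp only at this; rwa [if_pos hyj] at this
          · by_contra hsCj
            -- then s is an extra point with strictly fewer violations
            have hsB : s ∉ (B : Set (Fin d → ℝ)) := by
              intro hsB
              rw [hBcoe] at hsB
              rcases hsB with h | ⟨l, rfl⟩
              · exact hsCj (hWC j h)
              · by_cases hl : l = i₀
                · subst hl; exact hxN l hsCi₀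
                · have := hsC' l
                  rw [← hx'ne l hl] at this
                  exact hx'N' l this
            have hsEx : s ∈ Ex := ⟨⟨hsS, hsP⟩, hsB⟩
            have hsublt : (Finset.univ.filter (fun i => s ∉ C i)) ⊆
                (Finset.univ.filter (fun i => ys ∉ C i)).erase i₀ := by
              intro r hr
              rw [Finset.mem_filter] at hr
              refine Finset.mem_erase.2 ⟨fun hri₀ => hr.2 (hri₀ ▸ hsCi₀), ?_⟩
              rw [Finset.mem_filter]
              refine ⟨Finset.mem_univ r, fun hyr => ?_⟩
              have := hsC' r
              rw [hC'] at this; dsimp only at this; rw [if_pos hyr] at this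
              exact hr.2 this
            have hlt : (Finset.univ.filter (fun i => s ∉ C i)).card <
                (Finset.univ.filter (fun i => ys ∉ C i)).card := by
              calc (Finset.univ.filter (fun i => s ∉ C i)).card
                  ≤ ((Finset.univ.filter (fun i => ys ∉ C i)).erase i₀).card :=
                    Finset.card_le_card hsublt
                _ < (Finset.univ.filter (fun i => ys ∉ C i)).card := by
                    refine Finset.card_erase_lt_of_mem ?_
                    rw [Finset.mem_filter]
                    exact ⟨Finset.mem_univ i₀, hi₀⟩
            exact absurd (hysmin s hsEx) (by omega)
        exact hWmax s hsS hsC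
      -- the measure strictly decreases
      have hxi₀G : x i₀ ∈ S ∩ P := ⟨hxS i₀, hBsubP (Finset.mem_coe.2 (hxB i₀))⟩
      have hxi₀notB' : x i₀ ∉ convexHull ℝ (B' : Set (Fin d → ℝ)) := by
        rw [hB']
        exact exch (hxB i₀) hysP hysBmem (hxine i₀) (hxext i₀)
      have hsub : S ∩ convexHull ℝ (↑W ∪ Set.range x') ⊆ (S ∩ P) \ {x i₀} := by
        rw [← hB'coe]
        rintro z ⟨hzS, hzhull⟩
        exact ⟨⟨hzS, hhullB' hzhull⟩, fun hz => hxi₀notB' ((Set.mem_singleton_iff.1 hz) ▸ hzhull)⟩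
      have hcard1 : 1 ≤ (S ∩ P).ncard :=
        (Set.ncard_pos hGfin).2 ⟨ys, hysG⟩
      have hNpos : 1 ≤ N := le_trans hcard1 hGN
      have hle : (S ∩ convexHull ℝ (↑W ∪ Set.range x')).ncard ≤ N - 1 := by
        calc (S ∩ convexHull ℝ (↑W ∪ Set.range x')).ncard
            ≤ ((S ∩ P) \ {x i₀}).ncard := Set.ncard_le_ncard hsub (hGfin.diff)
          _ = (S ∩ P).ncard - 1 := Set.ncard_diff_singleton_of_mem hxi₀G
          _ ≤ N - 1 := by omega
      exact IH (N - 1) (by omega) m C' hC'conv W hWS hWC' hmax' x' hx'S hx'C' hx'N' hle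

end Key

section Shell

variable {d : ℕ} {S : Set (Fin d → ℝ)}

/-- From a saturated finite set with at least `k` points one can cut down to a convex set
containing exactly `k` points of `S`. -/
lemma shell : ∀ (c : ℕ) (F : Finset (Fin d → ℝ)), F.card = c → ↑F ⊆ S →
    S ∩ convexHull ℝ (F : Set (Fin d → ℝ)) = ↑F → ∀ k ≤ c,
    ∃ C : Set (Fin d → ℝ), Convex ℝ C ∧ (S ∩ C).Finite ∧ (S ∩ C).ncard = k := by
  intro c
  induction c with
  | zero =>
    intro F hcard hFS hsat k hk
    interval_cases k
    exact ⟨∅, convex_empty, by simp, by simp⟩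
  | succ c ih =>
    intro F hcard hFS hsat k hk
    rcases eq_or_lt_of_le hk with heq | hlt
    · subst heq
      refine ⟨convexHull ℝ (F : Set (Fin d → ℝ)), convex_convexHull ℝ _, ?_, ?_⟩
      · rw [hsat]; exact F.finite_toSet
      · rw [hsat, Set.ncard_coe_finset, hcard]
    · -- remove an extreme point
      have hFne : F.Nonempty := Finset.card_pos.1 (by omega)
      obtain ⟨f₀, hf₀⟩ := hFne
      obtain ⟨e, he⟩ := (F.finite_toSet.isCompact_convexHull ℝ).extremePoints_nonempty
        ⟨f₀, subset_convexHull ℝ _ hf₀⟩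
      have heF : e ∈ F := Finset.mem_coe.1 (extremePoints_convexHull_subset he)
      have hee : e ∉ convexHull ℝ ((F.erase e : Finset (Fin d → ℝ)) : Set (Fin d → ℝ)) :=
        not_mem_hull_erase_of_extreme he
      have hsat' : S ∩ convexHull ℝ ((F.erase e : Finset (Fin d → ℝ)) : Set (Fin d → ℝ))
          = ↑(F.erase e) := by
        apply subset_antisymm
        · rintro z ⟨hzS, hzh⟩
          have hzF : z ∈ (F : Set (Fin d → ℝ)) := by
            rw [← hsat]
            exact ⟨hzS, convexHull_mono (fun w hw =>
              Finset.mem_coe.2 (Finset.mem_of_mem_erase (Finset.mem_coe.1 hw))) hzh⟩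
          have hze : z ≠ e := fun h => hee (h ▸ hzh)
          exact Finset.mem_coe.2 (Finset.mem_erase.2 ⟨hze, Finset.mem_coe.1 hzF⟩)
        · intro z hz
          exact ⟨hFS (Finset.mem_coe.2 (Finset.mem_of_mem_erase (Finset.mem_coe.1 hz))),
            subset_convexHull ℝ _ hz⟩
      exact ih (F.erase e) (by rw [Finset.card_erase_of_mem heF, hcard]; rfl)
        (fun z hz => hFS (Finset.mem_coe.2 (Finset.mem_of_mem_erase (Finset.mem_coe.1 hz))))
        hsat' k (by omega)

end Shell

section Count

variable {d : ℕ} {S : Set (Fin d → ℝ)}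

/-- Lower bound: from `HellyCond S k t` every polytope witness for `ℓ ≤ k` has at most
`t + k - ℓ` vertices. -/
lemma count_le_of_helly {k t : ℕ} (hH : HellyCond S k t) {V : Finset (Fin d → ℝ)} {ℓ : ℕ}
    (hVS : ↑V ⊆ S)
    (hVext : extremePoints ℝ (convexHull ℝ (V : Set (Fin d → ℝ))) = ↑V)
    (hfin : ((S ∩ convexHull ℝ (V : Set (Fin d → ℝ))) \ ↑V).Finite)
    (hncard : ((S ∩ convexHull ℝ (V : Set (Fin d → ℝ))) \ ↑V).ncard = ℓ) (hlk : ℓ ≤ k) :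
    V.card + ℓ ≤ t + k := by
  classical
  by_cases htriv : V.card + ℓ ≤ k
  · omega
  push_neg at htriv
  set m₀ : ℕ := V.card + ℓ - k with hm₀
  have hm₀pos : 1 ≤ m₀ := by omega
  have hm₀V : m₀ ≤ V.card := by omega
  -- the saturated finite set F = S ∩ conv V
  have hFfin : (S ∩ convexHull ℝ (V : Set (Fin d → ℝ))).Finite := by
    have : S ∩ convexHull ℝ (V : Set (Fin d → ℝ)) ⊆
        ↑V ∪ ((S ∩ convexHull ℝ (V : Set (Fin d → ℝ))) \ ↑V) := by
      intro z hz
      by_cases h : z ∈ (V : Set (Fin d → ℝ))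
      · exact Or.inl h
      · exact Or.inr ⟨hz, h⟩
    exact (V.finite_toSet.union hfin).subset this
  set F : Finset (Fin d → ℝ) := hFfin.toFinset with hF
  have hFcoe : (F : Set (Fin d → ℝ)) = S ∩ convexHull ℝ (V : Set (Fin d → ℝ)) :=
    hFfin.coe_toFinset
  have hVF : V ⊆ F := by
    intro z hz
    rw [hF, Set.Finite.mem_toFinset]
    exact ⟨hVS hz, subset_convexHull ℝ _ hz⟩
  have hFS : (F : Set (Fin d → ℝ)) ⊆ S := by rw [hFcoe]; exact Set.inter_subset_left
  have hhullF : convexHull ℝ (F : Set (Fin d → ℝ)) = convexHull ℝ (V : Set (Fin d → ℝ)) := by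
    apply subset_antisymm
    · exact convexHull_min (by rw [hFcoe]; exact Set.inter_subset_right) (convex_convexHull ℝ _)
    · exact convexHull_mono (by exact_mod_cast hVF)
  have hFcard : F.card = V.card + ℓ := by
    have hdisj : Disjoint (V : Set (Fin d → ℝ))
        ((S ∩ convexHull ℝ (V : Set (Fin d → ℝ))) \ ↑V) := Set.disjoint_sdiff_right
    have hunion : (F : Set (Fin d → ℝ)) =
        ↑V ∪ ((S ∩ convexHull ℝ (V : Set (Fin d → ℝ))) \ ↑V) := by
      rw [hFcoe]
      apply subset_antisymm
      · intro z hz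
        by_cases h : z ∈ (V : Set (Fin d → ℝ))
        · exact Or.inl h
        · exact Or.inr ⟨hz, h⟩
      · rintro z (hz | hz)
        · exact ⟨hVS hz, subset_convexHull ℝ _ hz⟩
        · exact hz.1
    have := Set.ncard_union_eq hdisj V.finite_toSet hfin
    rw [← hunion] at this
    rw [← Set.ncard_coe_finset F, this, Set.ncard_coe_finset, hncard]
  -- pick m₀ vertices to cut off
  obtain ⟨T, hTV, hTcard⟩ := Finset.exists_subset_card_eq hm₀V
  -- enumerate T
  have hmT : T.card = m₀ := hTcard
  set ι : Fin m₀ → (Fin d → ℝ) := fun j => (T.equivFin.symm (Fin.cast hmT.symm j) : Fin d → ℝ)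
    with hι
  have hιT : ∀ j, ι j ∈ T := fun j => (T.equivFin.symm (Fin.cast hmT.symm j)).2
  have hιinj : Function.Injective ι := by
    intro a b hab
    have := Subtype.ext hab
    have h2 := T.equivFin.symm.injective this
    simpa using congrArg (Fin.cast hmT) h2
  have hιsurj : ∀ a ∈ T, ∃ j, ι j = a := by
    intro a ha
    refine ⟨Fin.cast hmT (T.equivFin ⟨a, ha⟩), ?_⟩
    rw [hι]
    simp
  -- vertices are extreme, hence not in the hull of the rest
  have hext : ∀ v ∈ V, v ∉ convexHull ℝ ((F.erase v : Finset (Fin d → ℝ)) : Set (Fin d → ℝ)) := by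
    intro v hv
    apply not_mem_hull_erase_of_extreme
    rw [hhullF, hVext]
    exact_mod_cast hv
  -- the cutting family
  set D : Fin m₀ → Set (Fin d → ℝ) := fun j =>
    convexHull ℝ ((F.erase (ι j) : Finset (Fin d → ℝ)) : Set (Fin d → ℝ)) with hD
  have hDconv : ∀ j, Convex ℝ (D j) := fun j => convex_convexHull ℝ _
  have hSD : ∀ j, S ∩ D j = ↑F \ {ι j} := by
    intro j
    apply subset_antisymm
    · rintro z ⟨hzS, hzD⟩
      have hzF : z ∈ (F : Set (Fin d → ℝ)) := by
        rw [hFcoe]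
        refine ⟨hzS, ?_⟩
        rw [← hhullF]
        exact convexHull_mono (fun w hw =>
          Finset.mem_coe.2 (Finset.mem_of_mem_erase (Finset.mem_coe.1 hw))) hzD
      refine ⟨hzF, fun hz => ?_⟩
      rw [Set.mem_singleton_iff] at hz
      subst hz
      exact hext (ι j) (hTV (hιT j)) hzD
    · rintro z ⟨hzF, hzne⟩
      rw [Set.mem_singleton_iff] at hzne
      refine ⟨hFS hzF, subset_convexHull ℝ _ ?_⟩
      exact Finset.mem_coe.2 (Finset.mem_erase.2 ⟨hzne, Finset.mem_coe.1 hzF⟩)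
  have hInter : S ∩ ⋂ j, D j = ↑F \ ↑T := by
    have : Nonempty (Fin m₀) := ⟨⟨0, by omega⟩⟩
    rw [Set.inter_iInter]
    have h1 : ∀ j, S ∩ D j = ↑F \ {ι j} := hSD
    calc ⋂ j, S ∩ D j = ⋂ j, (↑F \ {ι j} : Set (Fin d → ℝ)) := by
          exact Set.iInter_congr h1
      _ = ↑F \ ⋃ j, ({ι j} : Set (Fin d → ℝ)) := (Set.diff_iUnion _ _).symm
      _ = ↑F \ ↑T := by
          congr 1
          apply subset_antisymm
          · rintro z hz
            rw [Set.mem_iUnion] at hz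
            obtain ⟨j, hj⟩ := hz
            rw [Set.mem_singleton_iff] at hj
            exact hj ▸ Finset.mem_coe.2 (hιT j)
          · intro a ha
            obtain ⟨j, hj⟩ := hιsurj a (Finset.mem_coe.1 ha)
            rw [Set.mem_iUnion]
            exact ⟨j, by rw [hj]; exact rfl⟩
  have hTF : T ⊆ F := hTV.trans hVF
  have hInterF : S ∩ ⋂ j, D j = ↑(F \ T) := by rw [hInter, Finset.coe_sdiff]
  have hIfin : (S ∩ ⋂ j, D j).Finite := by rw [hInterF]; exact (F \ T).finite_toSet
  have hIncard : (S ∩ ⋂ j, D j).ncard = k := by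
    rw [hInterF, Set.ncard_coe_finset, Finset.card_sdiff_of_subset hTF, hFcard, hTcard]
    omega
  obtain ⟨I, hIcard, hIfin2, hIncard2⟩ := hH m₀ D hDconv hIfin hIncard
  rcases Finset.eq_empty_or_nonempty I with rfl | hIne
  · -- empty subfamily: S itself has k points, contradiction
    exfalso
    simp only [Finset.notMem_empty, Set.iInter_of_empty, Set.iInter_false,
      Set.iInter_univ, Set.inter_univ] at hIfin2 hIncard2
    have : (F : Set (Fin d → ℝ)).ncard ≤ S.ncard := Set.ncard_le_ncard hFS hIfin2
    rw [Set.ncard_coe_finset, hFcard, hIncard2] at this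
    omega
  · -- nonempty: the intersection is F minus the cut vertices of I
    have hbi : S ∩ ⋂ j ∈ I, D j = ↑F \ ↑(I.image ι) := by
      obtain ⟨j₀, hj₀⟩ := hIne
      apply subset_antisymm
      · rintro z ⟨hzS, hzD⟩
        rw [Set.mem_iInter₂] at hzD
        have hzF : z ∈ (F : Set (Fin d → ℝ)) := by
          have hmem : z ∈ S ∩ D j₀ := ⟨hzS, hzD j₀ hj₀⟩
          rw [hSD j₀] at hmem
          exact hmem.1
        refine ⟨hzF, fun hz => ?_⟩
        rw [Finset.mem_coe, Finset.mem_image] at hz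
        obtain ⟨j, hjI, hji⟩ := hz
        have hmem : z ∈ S ∩ D j := ⟨hzS, hzD j hjI⟩
        rw [hSD j] at hmem
        exact hmem.2 (by rw [hji]; exact rfl)
      · rintro z ⟨hzF, hzn⟩
        refine ⟨hFS hzF, ?_⟩
        rw [Set.mem_iInter₂]
        intro j hjI
        have : z ∈ ↑F \ ({ι j} : Set (Fin d → ℝ)) := by
          refine ⟨hzF, fun hz => ?_⟩
          rw [Set.mem_singleton_iff] at hz
          exact hzn (hz ▸ Finset.mem_coe.2 (Finset.mem_image_of_mem ι hjI))
        rw [← hSD j] at this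
        exact this.2
    have hsubF : I.image ι ⊆ F := by
      intro a ha
      obtain ⟨j, _, rfl⟩ := Finset.mem_image.1 ha
      exact hTF (hιT j)
    have : (S ∩ ⋂ j ∈ I, D j).ncard = F.card - I.card := by
      rw [hbi, ← Finset.coe_sdiff, Set.ncard_coe_finset, Finset.card_sdiff_of_subset hsubF,
        Finset.card_image_of_injective _ hιinj]
    rw [hIncard2] at this
    have hIm₀ : I.card ≤ m₀ := by
      calc I.card ≤ (Finset.univ : Finset (Fin m₀)).card := Finset.card_le_card (Finset.subset_univ I)
        _ = m₀ := by rw [Finset.card_univ, Fintype.card_fin]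
    omega

end Count

section Upper

variable {d : ℕ} {S : Set (Fin d → ℝ)}

/-- Upper bound: if every polytope witness `(V, ℓ)` with `ℓ ≤ k` satisfies
`V.card + ℓ ≤ t + k`, then the Helly condition holds with `t`. -/
lemma helly_of_witness_bound (hS : DiscreteSet S) (k t : ℕ)
    (H : ∀ (ℓ : ℕ) (V : Finset (Fin d → ℝ)), ℓ ≤ k → ↑V ⊆ S →
      extremePoints ℝ (convexHull ℝ (V : Set (Fin d → ℝ))) = ↑V →
      ((S ∩ convexHull ℝ (V : Set (Fin d → ℝ))) \ ↑V).Finite →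
      ((S ∩ convexHull ℝ (V : Set (Fin d → ℝ))) \ ↑V).ncard = ℓ →
      V.card + ℓ ≤ t + k) :
    HellyCond S k t := by
  intro m C hC hfin hk
  classical
  set J : Set (Finset (Fin m)) :=
    {I | (S ∩ ⋂ i ∈ I, C i).Finite ∧ (S ∩ ⋂ i ∈ I, C i).ncard = k} with hJ
  have hunivJ : Finset.univ ∈ J := by
    have heq : ⋂ i ∈ (Finset.univ : Finset (Fin m)), C i = ⋂ i, C i := by simp
    constructor <;> rw [heq] <;> assumption
  obtain ⟨I₀, hI₀J, hI₀min⟩ :=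
    Set.exists_min_image J (fun I => I.card) (Set.toFinite J) ⟨Finset.univ, hunivJ⟩
  refine ⟨I₀, ?_, hI₀J.1, hI₀J.2⟩
  by_contra hgt
  push_neg at hgt
  -- I₀ is a critical family of size > t ; derive a contradiction via the key lemma
  set m' : ℕ := I₀.card with hm'
  have hm'pos : 1 ≤ m' := by omega
  set Wfin := hI₀J.1 with hWfin
  set W : Finset (Fin d → ℝ) := Wfin.toFinset with hW
  have hWcoe : (W : Set (Fin d → ℝ)) = S ∩ ⋂ i ∈ I₀, C i := Wfin.coe_toFinset
  have hWcard : W.card = k := by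
    rw [← Set.ncard_coe_finset, hWcoe, hI₀J.2]
  -- enumerate I₀
  set ι : Fin m' → Fin m := fun j => (I₀.equivFin.symm j : Fin m) with hι
  have hιI₀ : ∀ j, ι j ∈ I₀ := fun j => (I₀.equivFin.symm j).2
  have hιinj : Function.Injective ι := by
    intro a b hab
    exact I₀.equivFin.symm.injective (Subtype.ext hab)
  have hιsurj : ∀ i ∈ I₀, ∃ j, ι j = i := by
    intro i hi
    exact ⟨I₀.equivFin ⟨i, hi⟩, by rw [hι]; simp⟩
  set D : Fin m' → Set (Fin d → ℝ) := fun j => C (ι j) with hD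
  have hbig : ⋂ j, D j = ⋂ i ∈ I₀, C i := by
    apply subset_antisymm
    · intro z hz
      rw [Set.mem_iInter] at hz
      rw [Set.mem_iInter₂]
      intro i hi
      obtain ⟨j, rfl⟩ := hιsurj i hi
      exact hz j
    · intro z hz
      rw [Set.mem_iInter₂] at hz
      rw [Set.mem_iInter]
      exact fun j => hz (ι j) (hιI₀ j)
  have hDconv : ∀ j, Convex ℝ (D j) := fun j => hC (ι j)
  have hWS : (W : Set (Fin d → ℝ)) ⊆ S := by rw [hWcoe]; exact Set.inter_subset_left
  have hWD : ∀ j, (W : Set (Fin d → ℝ)) ⊆ D j := by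
    intro j z hz
    rw [hWcoe] at hz
    have := hz.2
    rw [Set.mem_iInter₂] at this
    exact this (ι j) (hιI₀ j)
  have hWmax : ∀ s ∈ S, (∀ j, s ∈ D j) → s ∈ W := by
    intro s hsS hsD
    rw [← Finset.mem_coe, hWcoe]
    refine ⟨hsS, ?_⟩
    rw [← hbig, Set.mem_iInter]
    exact hsD
  -- criticality : for every j pick a point outside D j but in all others
  have hcrit : ∀ j : Fin m', ∃ z, z ∈ S ∧ (∀ r, r ≠ j → z ∈ D r) ∧ z ∉ D j := by
    intro j
    set I' : Finset (Fin m) := I₀.erase (ι j) with hI'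
    have hI'card : I'.card < I₀.card := Finset.card_erase_lt_of_mem (hιI₀ j)
    have hI'sub : I' ⊆ I₀ := Finset.erase_subset _ _
    have hI'nJ : I' ∉ J := fun h => absurd (hI₀min I' h) (by omega)
    set A' : Set (Fin d → ℝ) := S ∩ ⋂ i ∈ I', C i with hA'
    have hWA' : (W : Set (Fin d → ℝ)) ⊆ A' := by
      intro z hz
      rw [hWcoe] at hz
      refine ⟨hz.1, ?_⟩
      have := hz.2
      rw [Set.mem_iInter₂] at this ⊢
      exact fun i hi => this i (hI'sub hi)
    obtain ⟨z, hzA', hzW⟩ : ∃ z ∈ A', z ∉ (W : Set (Fin d → ℝ)) := by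
      by_contra hcon
      push_neg at hcon
      have heq : A' = (W : Set (Fin d → ℝ)) := subset_antisymm hcon hWA'
      apply hI'nJ
      constructor
      · show (S ∩ ⋂ i ∈ I', C i).Finite
        rw [← hA', heq]; exact W.finite_toSet
      · show (S ∩ ⋂ i ∈ I', C i).ncard = k
        rw [← hA', heq, Set.ncard_coe_finset, hWcard]
    have hzS : z ∈ S := hzA'.1
    have hzI' : ∀ i ∈ I', z ∈ C i := by
      have := hzA'.2
      rw [Set.mem_iInter₂] at this
      exact this
    have hzD : z ∉ D j := by
      refine fun hzDj => hzW (Finset.mem_coe.2 (hWmax z hzS fun r => ?_))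
      by_cases hr : r = j
      · subst hr; exact hzDj
      · exact hzI' (ι r) (Finset.mem_erase.2 ⟨fun h => hr (hιinj h), hιI₀ r⟩)
    refine ⟨z, hzS, fun r hr => ?_, hzD⟩
    exact hzI' (ι r) (Finset.mem_erase.2 ⟨fun h => hr (hιinj h), hιI₀ r⟩)
  choose x hxS hxC hxN using hcrit
  have hxC' : ∀ j r : Fin m', j ≠ r → x j ∈ D r := fun j r hjr => hxC j r (fun h => hjr h.symm)
  obtain ⟨ℓ, V, hℓW, hVS, hVext, hVfin, hVncard, hcount⟩ :=
    key_lemma hS (S ∩ convexHull ℝ (↑W ∪ Set.range x)).ncard m' D hDconv W hWS hWD hWmax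
      x hxS hxC' hxN le_rfl
  have hbound := H ℓ V (by omega) hVS hVext hVfin hVncard
  rw [hWcard] at hcount
  omega

end Upper

section ERealHelpers

lemma castE (p : ℕ) : (p : EReal) = ((p : ℝ) : EReal) := (EReal.coe_coe_eq_natCast p).symm

lemma comboE (r : ℝ) (p q : ℕ) :
    ((r : EReal) + (p : EReal) - (q : EReal)) = ((r + p - q : ℝ) : EReal) := by
  rw [castE p, castE q, ← EReal.coe_add, ← EReal.coe_sub]

lemma mono_step {a b : EReal} (h : a ≤ b) (p q : ℕ) :
    a + (p : EReal) - (q : EReal) ≤ b + (p : EReal) - (q : EReal) :=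
  EReal.sub_le_sub (add_le_add h le_rfl) le_rfl

variable {d : ℕ} {S : Set (Fin d → ℝ)}

lemma gER_ge {ℓ : ℕ} {V : Finset (Fin d → ℝ)} (h1 : ↑V ⊆ S)
    (h2 : Set.extremePoints ℝ (convexHull ℝ (V : Set (Fin d → ℝ))) = ↑V)
    (h3 : ((S ∩ convexHull ℝ (V : Set (Fin d → ℝ))) \ ↑V).Finite)
    (h4 : ((S ∩ convexHull ℝ (V : Set (Fin d → ℝ))) \ ↑V).ncard = ℓ) :
    (V.card : EReal) ≤ gER S ℓ :=
  le_sSup ⟨V, h1, h2, h3, h4, rfl⟩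

lemma gER_le {ℓ : ℕ} {b : EReal}
    (h : ∀ V : Finset (Fin d → ℝ), ↑V ⊆ S →
      Set.extremePoints ℝ (convexHull ℝ (V : Set (Fin d → ℝ))) = ↑V →
      ((S ∩ convexHull ℝ (V : Set (Fin d → ℝ))) \ ↑V).Finite →
      ((S ∩ convexHull ℝ (V : Set (Fin d → ℝ))) \ ↑V).ncard = ℓ →
      (V.card : EReal) ≤ b) :
    gER S ℓ ≤ b := by
  apply sSup_le
  rintro v ⟨V, h1, h2, h3, h4, rfl⟩
  exact h V h1 h2 h3 h4

/-- saturate a witness into a finite saturated subset of `S`. -/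
lemma saturated_of_witness {ℓ : ℕ} {V : Finset (Fin d → ℝ)} (h1 : ↑V ⊆ S)
    (h3 : ((S ∩ convexHull ℝ (V : Set (Fin d → ℝ))) \ ↑V).Finite)
    (h4 : ((S ∩ convexHull ℝ (V : Set (Fin d → ℝ))) \ ↑V).ncard = ℓ) :
    ∃ F : Finset (Fin d → ℝ), ↑F ⊆ S ∧
      S ∩ convexHull ℝ (F : Set (Fin d → ℝ)) = ↑F ∧ F.card = V.card + ℓ := by
  have hFfin : (S ∩ convexHull ℝ (V : Set (Fin d → ℝ))).Finite := by
    have hsub : S ∩ convexHull ℝ (V : Set (Fin d → ℝ)) ⊆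
        ↑V ∪ ((S ∩ convexHull ℝ (V : Set (Fin d → ℝ))) \ ↑V) := by
      intro z hz
      by_cases h : z ∈ (V : Set (Fin d → ℝ))
      · exact Or.inl h
      · exact Or.inr ⟨hz, h⟩
    exact (V.finite_toSet.union h3).subset hsub
  refine ⟨hFfin.toFinset, ?_, ?_, ?_⟩
  · rw [hFfin.coe_toFinset]; exact Set.inter_subset_left
  · have hhull : convexHull ℝ ((hFfin.toFinset : Finset (Fin d → ℝ)) : Set (Fin d → ℝ))
        = convexHull ℝ (V : Set (Fin d → ℝ)) := by
      apply subset_antisymm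
      · refine convexHull_min ?_ (convex_convexHull ℝ _)
        rw [hFfin.coe_toFinset]; exact Set.inter_subset_right
      · apply convexHull_mono
        intro z hz
        rw [hFfin.coe_toFinset]
        exact ⟨h1 hz, subset_convexHull ℝ _ hz⟩
    rw [hhull, hFfin.coe_toFinset]
  · have hdisj : Disjoint (V : Set (Fin d → ℝ))
        ((S ∩ convexHull ℝ (V : Set (Fin d → ℝ))) \ ↑V) := Set.disjoint_sdiff_right
    have hunion : (S ∩ convexHull ℝ (V : Set (Fin d → ℝ))) =
        ↑V ∪ ((S ∩ convexHull ℝ (V : Set (Fin d → ℝ))) \ ↑V) := by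
      apply subset_antisymm
      · intro z hz
        by_cases h : z ∈ (V : Set (Fin d → ℝ))
        · exact Or.inl h
        · exact Or.inr ⟨hz, h⟩
      · rintro z (hz | hz)
        · exact ⟨h1 hz, subset_convexHull ℝ _ hz⟩
        · exact hz.1
    have hcard := Set.ncard_union_eq hdisj V.finite_toSet h3
    rw [← hunion] at hcard
    rw [← Set.ncard_coe_finset hFfin.toFinset, hFfin.coe_toFinset, hcard,
      Set.ncard_coe_finset, h4]

end ERealHelpers

section Main

/-- the right-hand side set of the main theorem. -/
def RHSet {d : ℕ} (S : Set (Fin d → ℝ)) (k : ℕ) : Set EReal :=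
  {v : EReal | ∃ ℓ : ℕ, ℓ ≤ k ∧ v = gER S ℓ + (ℓ : EReal) - (k : EReal) ∧ 0 ≤ v}

variable {d : ℕ} {S : Set (Fin d → ℝ)} {k : ℕ}

lemma RHS_le_of_helly {t : ℕ} (hH : HellyCond S k t) : sSup (RHSet S k) ≤ (t : EReal) := by
  apply sSup_le
  rintro v ⟨ℓ, hℓk, rfl, hv0⟩
  have hg : gER S ℓ ≤ (((t : ℝ) + k - ℓ : ℝ) : EReal) := by
    apply gER_le
    intro V h1 h2 h3 h4
    have hcount := count_le_of_helly hH h1 h2 h3 h4 hℓk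
    rw [castE, EReal.coe_le_coe_iff]
    have hc : (V.card : ℝ) + ℓ ≤ (t : ℝ) + k := by exact_mod_cast hcount
    linarith
  calc gER S ℓ + (ℓ : EReal) - (k : EReal)
      ≤ (((t : ℝ) + k - ℓ : ℝ) : EReal) + (ℓ : EReal) - (k : EReal) := mono_step hg ℓ k
    _ = (t : EReal) := by
        rw [comboE, castE t, EReal.coe_eq_coe_iff]
        ring

lemma RHS_nonempty
    (hP1 : ∃ C : Set (Fin d → ℝ), Convex ℝ C ∧ (S ∩ C).Finite ∧ (S ∩ C).ncard = k) :
    ∃ v : EReal, v ∈ RHSet S k ∧ 0 ≤ v := by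
  classical
  obtain ⟨C0, hconv, hfin, hn⟩ := hP1
  set F : Finset (Fin d → ℝ) := hfin.toFinset with hF
  have hFcoe : (F : Set (Fin d → ℝ)) = S ∩ C0 := hfin.coe_toFinset
  have hFS : (F : Set (Fin d → ℝ)) ⊆ S := by rw [hFcoe]; exact Set.inter_subset_left
  have hsat : S ∩ convexHull ℝ (F : Set (Fin d → ℝ)) = ↑F := by
    apply subset_antisymm
    · rintro z ⟨hzS, hzh⟩
      have : z ∈ C0 := convexHull_min (by rw [hFcoe]; exact Set.inter_subset_right) hconv hzh
      rw [hFcoe]; exact ⟨hzS, this⟩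
    · intro z hz
      exact ⟨hFS hz, subset_convexHull ℝ _ hz⟩
  have hFcard : F.card = k := by
    rw [← Set.ncard_coe_finset F, hFcoe, hn]
  obtain ⟨V, hVF, hVext, hVhull, ⟨hVS, hVe2, hVf, hVn⟩, hVcount⟩ :=
    witness_from_saturated F hFS hsat
  set ℓ₀ : ℕ := (F \ V).card with hℓ₀
  have hℓ₀k : ℓ₀ ≤ k := by
    rw [← hFcard]; exact Finset.card_le_card (Finset.sdiff_subset)
  have hsum : V.card + ℓ₀ = k := by rw [← hFcard]; exact hVcount
  have hzero : ((V.card : EReal) + (ℓ₀ : EReal) - (k : EReal)) = (0 : EReal) := by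
    rw [castE V.card, comboE, ← EReal.coe_zero, EReal.coe_eq_coe_iff]
    have : (V.card : ℝ) + ℓ₀ = k := by exact_mod_cast hsum
    linarith
  have h0 : (0 : EReal) ≤ gER S ℓ₀ + (ℓ₀ : EReal) - (k : EReal) := by
    rw [← hzero]
    exact mono_step (gER_ge hVS hVe2 hVf hVn) ℓ₀ k
  exact ⟨gER S ℓ₀ + (ℓ₀ : EReal) - (k : EReal), ⟨ℓ₀, hℓ₀k, rfl, h0⟩, h0⟩

lemma RHS_attained (hS : DiscreteSet S) (hne : (RHSet S k).Nonempty)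
    (h0 : (0 : EReal) ≤ sSup (RHSet S k)) (hfin : sSup (RHSet S k) ≠ ⊤) :
    ∃ t : ℕ, sSup (RHSet S k) = (t : EReal) ∧ HellyCond S k t := by
  classical
  have hRfin : (RHSet S k).Finite := by
    have hsub : RHSet S k ⊆ (fun ℓ : ℕ => gER S ℓ + (ℓ : EReal) - (k : EReal)) '' (Set.Iic k) := by
      rintro v ⟨ℓ, hℓk, rfl, _⟩
      exact ⟨ℓ, hℓk, rfl⟩
    exact ((Set.finite_Iic k).image _).subset hsub
  have hmem : sSup (RHSet S k) ∈ RHSet S k := Set.Nonempty.csSup_mem hne hRfin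
  obtain ⟨ℓs, hℓsk, heq, h0'⟩ := hmem
  have hgtop : gER S ℓs ≠ ⊤ := by
    intro h
    apply hfin
    rw [heq, h, castE ℓs, castE k, EReal.top_add_coe, EReal.top_sub_coe]
  have hgbot : gER S ℓs ≠ ⊥ := by
    intro h
    rw [heq, h, EReal.bot_add, EReal.bot_sub] at h0'
    exact absurd h0' (by simp)
  obtain ⟨r, hr⟩ : ∃ r : ℝ, gER S ℓs = (r : EReal) :=
    ⟨(gER S ℓs).toReal, (EReal.coe_toReal hgtop hgbot).symm⟩
  set NB : ℕ := ⌈r⌉₊ with hNB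
  have hgsup : gER S ℓs = sSup {v : EReal | ∃ V : Finset (Fin d → ℝ), ↑V ⊆ S ∧
      Set.extremePoints ℝ (convexHull ℝ (V : Set (Fin d → ℝ))) = ↑V ∧
      ((S ∩ convexHull ℝ (V : Set (Fin d → ℝ))) \ ↑V).Finite ∧
      ((S ∩ convexHull ℝ (V : Set (Fin d → ℝ))) \ ↑V).ncard = ℓs ∧
      v = (V.card : EReal)} := rfl
  set gS : Set EReal := {v : EReal | ∃ V : Finset (Fin d → ℝ), ↑V ⊆ S ∧
      Set.extremePoints ℝ (convexHull ℝ (V : Set (Fin d → ℝ))) = ↑V ∧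
      ((S ∩ convexHull ℝ (V : Set (Fin d → ℝ))) \ ↑V).Finite ∧
      ((S ∩ convexHull ℝ (V : Set (Fin d → ℝ))) \ ↑V).ncard = ℓs ∧
      v = (V.card : EReal)} with hgS
  have hgfin : gS.Finite := by
    have hsub : gS ⊆ (fun c : ℕ => (c : EReal)) '' (Set.Iic NB) := by
      rintro v ⟨V, h1, h2, h3, h4, rfl⟩
      have hge := gER_ge h1 h2 h3 h4
      rw [hr, castE, EReal.coe_le_coe_iff] at hge
      have hle2 : (V.card : ℝ) ≤ (NB : ℝ) := le_trans hge (Nat.le_ceil r)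
      exact ⟨V.card, by exact_mod_cast hle2, rfl⟩
    exact ((Set.finite_Iic NB).image _).subset hsub
  have hgne : gS.Nonempty := by
    by_contra h
    rw [Set.not_nonempty_iff_eq_empty] at h
    apply hgbot
    rw [hgsup, h, sSup_empty]
  have hmem2 : sSup gS ∈ gS := Set.Nonempty.csSup_mem hgne hgfin
  rw [← hgsup] at hmem2
  obtain ⟨Vs, hw1, hw2, hw3, hw4, hgeq⟩ := hmem2
  set gs : ℕ := Vs.card with hgs
  have hkle : k ≤ gs + ℓs := by
    rw [heq, hgeq, castE gs, comboE, ← EReal.coe_zero, EReal.coe_le_coe_iff] at h0'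
    have : (k : ℝ) ≤ (gs : ℝ) + ℓs := by linarith
    exact_mod_cast this
  refine ⟨gs + ℓs - k, ?_, ?_⟩
  · rw [heq, hgeq, castE gs, comboE, castE (gs + ℓs - k), EReal.coe_eq_coe_iff]
    have h5 : ((gs + ℓs - k : ℕ) : ℝ) = (gs : ℝ) + ℓs - k := by
      push_cast [hkle]
      ring
    linarith [h5]
  · apply helly_of_witness_bound hS k
    intro ℓ V hℓk h1 h2 h3 h4
    have hge := gER_ge h1 h2 h3 h4
    have hstep : (V.card : EReal) + (ℓ : EReal) - (k : EReal) ≤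
        gER S ℓ + (ℓ : EReal) - (k : EReal) := mono_step hge ℓ k
    have hfinal : (V.card : EReal) + (ℓ : EReal) - (k : EReal) ≤ ((gs + ℓs - k : ℕ) : EReal) := by
      by_cases hv0 : (0 : EReal) ≤ gER S ℓ + (ℓ : EReal) - (k : EReal)
      · have hvR : gER S ℓ + (ℓ : EReal) - (k : EReal) ∈ RHSet S k := ⟨ℓ, hℓk, rfl, hv0⟩
        refine le_trans hstep (le_trans (le_sSup hvR) ?_)
        rw [heq, hgeq, castE gs, comboE, castE (gs + ℓs - k), EReal.coe_le_coe_iff]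
        have h5 : ((gs + ℓs - k : ℕ) : ℝ) = (gs : ℝ) + ℓs - k := by
          push_cast [hkle]
          ring
        linarith [h5]
      · push_neg at hv0
        refine le_trans hstep (le_trans hv0.le ?_)
        rw [castE, ← EReal.coe_zero, EReal.coe_le_coe_iff]
        positivity
    rw [castE V.card, comboE, castE (gs + ℓs - k), EReal.coe_le_coe_iff] at hfinal
    have h6 : (V.card : ℝ) + ℓ ≤ ((gs + ℓs - k : ℕ) : ℝ) + k := by linarith
    exact_mod_cast h6

end Main

/-- Let `S ⊆ ℝ^n` be discrete and `k ∈ ℕ`. Then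
`c(S,k) = max { g(S,ℓ) + ℓ - k : ℓ ∈ {0,...,k}, g(S,ℓ) + ℓ - k ≥ 0 }`
(the maximum of the empty set being `-∞`). -/
theorem stmt4 (n : ℕ) (S : Set (Fin n → ℝ)) (hS : DiscreteSet S) (k : ℕ) :
    cER S k = sSup {v : EReal | ∃ ℓ : ℕ, ℓ ≤ k ∧
      v = gER S ℓ + (ℓ : EReal) - (k : EReal) ∧ 0 ≤ v} := by
  classical
  show cER S k = sSup (RHSet S k)
  by_cases hP1 : ∃ C : Set (Fin n → ℝ), Convex ℝ C ∧ (S ∩ C).Finite ∧ (S ∩ C).ncard = k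
  · obtain ⟨v₀, hv₀R, hv₀0⟩ := RHS_nonempty hP1
    have hRne : (RHSet S k).Nonempty := ⟨v₀, hv₀R⟩
    have hR0 : (0 : EReal) ≤ sSup (RHSet S k) := le_trans hv₀0 (le_sSup hv₀R)
    by_cases hP2 : ∃ t : ℕ, HellyCond S k t
    · have ht0mem : HellyCond S k (sInf {t : ℕ | HellyCond S k t}) := Nat.sInf_mem hP2
      have hle : sSup (RHSet S k) ≤ ((sInf {t : ℕ | HellyCond S k t} : ℕ) : EReal) :=
        RHS_le_of_helly ht0mem
      have hfinTop : sSup (RHSet S k) ≠ ⊤ := by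
        intro h
        rw [h] at hle
        exact (EReal.natCast_ne_top _) (top_le_iff.1 hle)
      obtain ⟨tstar, hts, htsH⟩ := RHS_attained hS hRne hR0 hfinTop
      have hge : ((sInf {t : ℕ | HellyCond S k t} : ℕ) : EReal) ≤ sSup (RHSet S k) := by
        rw [hts, castE, castE, EReal.coe_le_coe_iff]
        exact_mod_cast Nat.sInf_le htsH
      unfold cER
      rw [if_neg (not_not_intro hP1), if_pos hP2]
      exact le_antisymm hle hge |>.symm
    · unfold cER
      rw [if_neg (not_not_intro hP1), if_neg hP2]
      by_contra hne
      have hfinTop : sSup (RHSet S k) ≠ ⊤ := fun h => hne h.symm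
      obtain ⟨tstar, hts, htsH⟩ := RHS_attained hS hRne hR0 hfinTop
      exact hP2 ⟨tstar, htsH⟩
  · unfold cER
    rw [if_pos hP1]
    have hempty : RHSet S k = ∅ := by
      rw [Set.eq_empty_iff_forall_notMem]
      rintro v ⟨ℓ, hℓk, rfl, hv0⟩
      have hex : ∃ V : Finset (Fin n → ℝ), (↑V ⊆ S ∧
          Set.extremePoints ℝ (convexHull ℝ (V : Set (Fin n → ℝ))) = ↑V ∧
          ((S ∩ convexHull ℝ (V : Set (Fin n → ℝ))) \ ↑V).Finite ∧
          ((S ∩ convexHull ℝ (V : Set (Fin n → ℝ))) \ ↑V).ncard = ℓ) ∧ k ≤ V.card + ℓ := by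
        by_contra hcon
        have hgle : gER S ℓ ≤ (((k : ℝ) - ℓ - 1 : ℝ) : EReal) := by
          apply gER_le
          intro V h1 h2 h3 h4
          have hVlt : V.card + ℓ < k := by
            by_contra hge'
            exact hcon ⟨V, ⟨h1, h2, h3, h4⟩, by omega⟩
          rw [castE, EReal.coe_le_coe_iff]
          have hc : (V.card : ℝ) + ℓ + 1 ≤ k := by exact_mod_cast hVlt
          linarith
        have hchain : gER S ℓ + (ℓ : EReal) - (k : EReal) ≤
            (((k : ℝ) - ℓ - 1 : ℝ) : EReal) + (ℓ : EReal) - (k : EReal) := mono_step hgle ℓ k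
        rw [comboE] at hchain
        have hneg : ((k : ℝ) - ℓ - 1 + ℓ - k : ℝ) = -1 := by ring
        rw [hneg] at hchain
        have hcontr := le_trans hv0 hchain
        rw [← EReal.coe_zero, EReal.coe_le_coe_iff] at hcontr
        linarith
      obtain ⟨V, ⟨h1, h2, h3, h4⟩, hkV⟩ := hex
      obtain ⟨F, hFS, hsat, hFcard⟩ := saturated_of_witness h1 h3 h4
      exact hP1 (shell F.card F rfl hFS hsat k (by omega))
    rw [hempty, sSup_empty]
end

section
/- Let S ⊆ R^n be discrete with |S| ≥ 2, and k ∈ N₀. Then c(S,k) ≤ ⌊(k+1)/2⌋·(h(S) - 2) + h(S), where h(S) = c(S,0) is the Helly number of S. -/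
open Set

namespace Stmt6Aux

variable {n : ℕ}

noncomputable def dot (w z : Fin n → ℝ) : ℝ := ∑ i, w i * z i

/-- dot product as a linear map in the first argument. -/
noncomputable def dotL (z : Fin n → ℝ) : (Fin n → ℝ) →ₗ[ℝ] ℝ where
  toFun w := ∑ i, w i * z i
  map_add' x y := by simp [add_mul, Finset.sum_add_distrib]
  map_smul' c x := by simp [Finset.mul_sum, mul_assoc]

lemma dotL_apply (z w : Fin n → ℝ) : dotL z w = dot w z := rfl

lemma dot_self_pos {z : Fin n → ℝ} (hz : z ≠ 0) : 0 < dot z z := by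
  have h1 : ∀ i, 0 ≤ z i * z i := fun i => mul_self_nonneg _
  obtain ⟨i, hi⟩ : ∃ i, z i ≠ 0 := by
    by_contra hc
    push_neg at hc
    exact hz (funext hc)
  exact Finset.sum_pos' (fun i _ => h1 i) ⟨i, Finset.mem_univ i, mul_self_pos.mpr hi⟩

lemma continuous_dot_right (z : Fin n → ℝ) : Continuous (fun w : Fin n → ℝ => dot w z) := by
  unfold dot
  exact continuous_finset_sum _ (fun i _ => (continuous_apply i).mul continuous_const)

/-- Genericity lemma: avoid countably many nonzero orthogonality conditions. -/
lemma exists_generic {Z : Set (Fin n → ℝ)} (hZ : Z.Countable)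
    (h0 : ∀ z ∈ Z, z ≠ 0) : ∃ w : Fin n → ℝ, ∀ z ∈ Z, dot w z ≠ 0 := by
  have : ∀ z : Z, IsOpen {w : Fin n → ℝ | dot w z ≠ 0} ∧ Dense {w : Fin n → ℝ | dot w z ≠ 0} := by
    rintro ⟨z, hz⟩
    constructor
    · exact isOpen_compl_iff.mpr ((isClosed_singleton (x := (0:ℝ))).preimage (continuous_dot_right z))
    · -- complement is the kernel of dotL z, a proper submodule
      rw [dense_iff_inter_open]
      rintro U hU ⟨u, hu⟩
      by_contra hc
      rw [Set.not_nonempty_iff_eq_empty] at hc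
      have hsub : U ⊆ (LinearMap.ker (dotL z) : Set (Fin n → ℝ)) := by
        intro w hw
        by_contra hker
        have hmem : w ∈ U ∩ {w : Fin n → ℝ | dot w z ≠ 0} := by
          refine ⟨hw, ?_⟩
          simp only [Set.mem_setOf_eq]
          intro hdz
          exact hker (by simpa [LinearMap.mem_ker, dotL_apply] using hdz)
        rw [hc] at hmem
        exact hmem
      have hint : (interior ((LinearMap.ker (dotL z)) : Set (Fin n → ℝ))).Nonempty :=
        ⟨u, interior_mono hsub (by rwa [hU.interior_eq])⟩
      have htop := Submodule.eq_top_of_nonempty_interior' _ hint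
      have hzz : dot z z = 0 := by
        have : z ∈ LinearMap.ker (dotL z) := htop ▸ Submodule.mem_top
        simpa [LinearMap.mem_ker, dotL_apply] using this
      exact (ne_of_gt (dot_self_pos (h0 z hz))) hzz
  have hco : Countable Z := hZ.to_subtype
  have hdense : Dense (⋂ z : Z, {w : Fin n → ℝ | dot w (z : Fin n → ℝ) ≠ 0}) :=
    dense_iInter_of_isOpen (fun z => (this z).1) (fun z => (this z).2)
  obtain ⟨w, hw⟩ := hdense.nonempty
  refine ⟨w, fun z hz => ?_⟩
  have := Set.mem_iInter.mp hw ⟨z, hz⟩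
  exact this

/-- A discrete set is countable. -/
lemma countable_of_discrete {S : Set (Fin n → ℝ)}
    (hS : ∀ B : Set (Fin n → ℝ), Bornology.IsBounded B → (S ∩ B).Finite) : S.Countable := by
  have : S = ⋃ r : ℕ, (S ∩ Metric.closedBall 0 r) := by
    ext x
    simp only [Set.mem_iUnion, Set.mem_inter_iff, Metric.mem_closedBall]
    constructor
    · intro hx
      obtain ⟨r, hr⟩ := exists_nat_ge (dist x 0)
      exact ⟨r, hx, hr⟩
    · rintro ⟨r, hx, _⟩; exact hx
  rw [this]
  exact Set.countable_iUnion (fun r => (hS _ Metric.isBounded_closedBall).countable)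


lemma dot_right_comb (w x y z : Fin n → ℝ) (a b c : ℝ) :
    dot w (a • x + b • y + c • z) = a * dot w x + b * dot w y + c * dot w z := by
  have h : ∀ i, w i * (a * x i + b * y i + c * z i)
      = a * (w i * x i) + b * (w i * y i) + c * (w i * z i) := fun i => by ring
  simp only [dot, Pi.add_apply, Pi.smul_apply, smul_eq_mul, h, Finset.sum_add_distrib,
    Finset.mul_sum]

lemma dot_add_right (w x y : Fin n → ℝ) : dot w (x + y) = dot w x + dot w y := by
  have h : ∀ i, w i * (x i + y i) = w i * x i + w i * y i := fun i => by ring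
  simp only [dot, Pi.add_apply, h, Finset.sum_add_distrib]

lemma dot_smul_right (w x : Fin n → ℝ) (a : ℝ) : dot w (a • x) = a * dot w x := by
  have h : ∀ i, w i * (a * x i) = a * (w i * x i) := fun i => by ring
  simp only [dot, Pi.smul_apply, smul_eq_mul, h, Finset.mul_sum]

lemma dot_sub_right (w x y : Fin n → ℝ) : dot w (x - y) = dot w x - dot w y := by
  have h : ∀ i, w i * (x i - y i) = w i * x i - w i * y i := fun i => by ring
  simp only [dot, Pi.sub_apply, h, Finset.sum_sub_distrib]

lemma dot_add_left (u v x : Fin n → ℝ) : dot (u + v) x = dot u x + dot v x := by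
  have h : ∀ i, (u i + v i) * x i = u i * x i + v i * x i := fun i => by ring
  simp only [dot, Pi.add_apply, h, Finset.sum_add_distrib]

lemma dot_smul_left (u x : Fin n → ℝ) (a : ℝ) : dot (a • u) x = a * dot u x := by
  have h : ∀ i, (a * u i) * x i = a * (u i * x i) := fun i => by ring
  simp only [dot, Pi.smul_apply, smul_eq_mul, h, Finset.mul_sum]

lemma dot_neg_left (u x : Fin n → ℝ) : dot (-u) x = - dot u x := by
  have h : ∀ i, (-u i) * x i = -(u i * x i) := fun i => by ring
  simp only [dot, Pi.neg_apply, h, Finset.sum_neg_distrib]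

/-- Convexity of a half-open halfspace (upper version). -/
lemma convex_halfopen_gt (fv g : Fin n → ℝ) (c d : ℝ) :
    Convex ℝ {x | c < dot fv x ∨ (dot fv x = c ∧ dot g x < d)} := by
  rintro x hx y hy a b ha hb hab
  rcases eq_or_lt_of_le ha with ha0 | ha0
  · have hxy : a • x + b • y = y := by
      have hb1 : b = 1 := by linarith
      rw [← ha0, hb1]; simp
    rw [hxy]; exact hy
  rcases eq_or_lt_of_le hb with hb0 | hb0
  · have hxy : a • x + b • y = x := by
      have ha1 : a = 1 := by linarith
      rw [← hb0, ha1]; simp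
    rw [hxy]; exact hx
  have hφ : dot fv (a • x + b • y) = a * dot fv x + b * dot fv y := by
    rw [dot_add_right, dot_smul_right, dot_smul_right]
  have hψ : dot g (a • x + b • y) = a * dot g x + b * dot g y := by
    rw [dot_add_right, dot_smul_right, dot_smul_right]
  have hc' : a * c + b * c = c := by rw [← add_mul, hab, one_mul]
  have hd' : a * d + b * d = d := by rw [← add_mul, hab, one_mul]
  simp only [Set.mem_setOf_eq] at hx hy ⊢
  rcases hx with hx | ⟨hx1, hx2⟩
  · rcases hy with hy | ⟨hy1, hy2⟩
    · left; rw [hφ]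
      have h1 := mul_lt_mul_of_pos_left hx ha0
      have h2 := mul_lt_mul_of_pos_left hy hb0
      linarith
    · left; rw [hφ, hy1]
      have h1 := mul_lt_mul_of_pos_left hx ha0
      linarith
  · rcases hy with hy | ⟨hy1, hy2⟩
    · left; rw [hφ, hx1]
      have h2 := mul_lt_mul_of_pos_left hy hb0
      linarith
    · right
      refine ⟨by rw [hφ, hx1, hy1]; linarith, ?_⟩
      rw [hψ]
      have h1 := mul_lt_mul_of_pos_left hx2 ha0
      have h2 := mul_lt_mul_of_pos_left hy2 hb0
      linarith

/-- Convexity of a half-open halfspace (lower version). -/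
lemma convex_halfopen_lt (fv g : Fin n → ℝ) (c d : ℝ) :
    Convex ℝ {x | dot fv x < c ∨ (dot fv x = c ∧ d < dot g x)} := by
  have h := convex_halfopen_gt (-fv) (-g) (-c) (-d)
  have hset : {x | -c < dot (-fv) x ∨ (dot (-fv) x = -c ∧ dot (-g) x < -d)}
      = {x | dot fv x < c ∨ (dot fv x = c ∧ d < dot g x)} := by
    ext x
    simp only [Set.mem_setOf_eq, dot_neg_left]
    constructor
    · rintro (h1 | ⟨h1, h2⟩)
      · left; linarith
      · right; exact ⟨by linarith, by linarith⟩
    · rintro (h1 | ⟨h1, h2⟩)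
      · left; linarith
      · right; exact ⟨by linarith, by linarith⟩
  rwa [hset] at h

/-- Assembling two exact certificates into one. -/
lemma assemble {m : ℕ} {S : Set (Fin n → ℝ)} {C : Fin m → Set (Fin n → ℝ)}
    {X Y : Set (Fin n → ℝ)} {I₀ I₁ : Finset (Fin m)}
    (hC : ∀ i, Convex ℝ (C i))
    (hcover : ∀ s ∈ S, s ∈ X ∨ s ∈ Y ∨ s ∈ convexHull ℝ (S ∩ ⋂ i, C i))
    (hex0 : S ∩ ((⋂ i ∈ I₀, C i) ∩ X) = S ∩ ((⋂ i, C i) ∩ X))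
    (hex1 : S ∩ ((⋂ i ∈ I₁, C i) ∩ Y) = S ∩ ((⋂ i, C i) ∩ Y)) :
    S ∩ ⋂ i ∈ I₀ ∪ I₁, C i = S ∩ ⋂ i, C i := by
  apply Set.Subset.antisymm
  · rintro z ⟨hzS, hz⟩
    have hz' : ∀ i ∈ I₀ ∪ I₁, z ∈ C i := Set.mem_iInter₂.mp hz
    have hz0 : z ∈ ⋂ i ∈ I₀, C i :=
      Set.mem_iInter₂.mpr (fun i hi => hz' i (Finset.mem_union_left _ hi))
    have hz1 : z ∈ ⋂ i ∈ I₁, C i :=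
      Set.mem_iInter₂.mpr (fun i hi => hz' i (Finset.mem_union_right _ hi))
    rcases hcover z hzS with hX | hY | hhull
    · have : z ∈ S ∩ ((⋂ i, C i) ∩ X) := hex0 ▸ ⟨hzS, hz0, hX⟩
      exact ⟨hzS, this.2.1⟩
    · have : z ∈ S ∩ ((⋂ i, C i) ∩ Y) := hex1 ▸ ⟨hzS, hz1, hY⟩
      exact ⟨hzS, this.2.1⟩
    · refine ⟨hzS, Set.mem_iInter.mpr (fun i => ?_)⟩
      have hsub : convexHull ℝ (S ∩ ⋂ i, C i) ⊆ C i :=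
        convexHull_min (fun p hp => Set.mem_iInter.mp hp.2 i) (hC i)
      exact hsub hhull
  · rintro z ⟨hzS, hz⟩
    exact ⟨hzS, Set.mem_iInter₂.mpr (fun i _ => Set.mem_iInter.mp hz i)⟩

/-- The Helly number of a set with at least two points is at least 2. -/
lemma two_le_helly {S : Set (Fin n → ℝ)} {h : ℕ}
    (hcard : ∃ x ∈ S, ∃ y ∈ S, x ≠ y)
    (hh : IsLeast {t : ℕ | HellyCond S 0 t} h) : 2 ≤ h := by
  obtain ⟨x, hx, y, hy, hxy⟩ := hcard
  by_contra hlt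
  push_neg at hlt
  have hh1 : h ≤ 1 := by omega
  set C : Fin 2 → Set (Fin n → ℝ) := ![{x}, {y}] with hCdef
  have hC0 : C 0 = {x} := rfl
  have hC1 : C 1 = {y} := rfl
  have hCconv : ∀ i, Convex ℝ (C i) := by
    intro i
    fin_cases i
    · exact convex_singleton x
    · exact convex_singleton y
  have hIempty : (S ∩ ⋂ i, C i) = ∅ := by
    ext z
    simp only [Set.mem_inter_iff, Set.mem_iInter, Set.mem_empty_iff_false, iff_false, not_and]
    intro _ hz
    have hz0 := hz 0
    have hz1 := hz 1
    rw [hC0] at hz0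
    rw [hC1] at hz1
    rw [Set.mem_singleton_iff] at hz0 hz1
    exact hxy (hz0 ▸ hz1 ▸ rfl)
  obtain ⟨I, hIcard, hIfin, hIncard⟩ := hh.1 2 C hCconv (by rw [hIempty]; exact Set.finite_empty)
    (by rw [hIempty]; simp)
  have hIe : S ∩ ⋂ i ∈ I, C i = ∅ := (Set.ncard_eq_zero hIfin).mp hIncard
  have hIcard1 : I.card ≤ 1 := le_trans hIcard hh1
  by_cases h0 : (0 : Fin 2) ∈ I
  · by_cases h1 : (1 : Fin 2) ∈ I
    · have hsub : ({0, 1} : Finset (Fin 2)) ⊆ I := by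
        intro i hi
        simp only [Finset.mem_insert, Finset.mem_singleton] at hi
        rcases hi with rfl | rfl
        · exact h0
        · exact h1
      have h2c : ({0, 1} : Finset (Fin 2)).card = 2 := by decide
      have := Finset.card_le_card hsub
      omega
    · have hxmem : x ∈ S ∩ ⋂ i ∈ I, C i := by
        refine ⟨hx, Set.mem_iInter₂.mpr (fun i hi => ?_)⟩
        fin_cases i
        · exact Set.mem_singleton x
        · exact absurd hi h1
      rw [hIe] at hxmem
      exact hxmem
  · have hymem : y ∈ S ∩ ⋂ i ∈ I, C i := by
      refine ⟨hy, Set.mem_iInter₂.mpr (fun i hi => ?_)⟩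
      fin_cases i
      · exact absurd hi h0
      · exact Set.mem_singleton y
    rw [hIe] at hymem
    exact hymem


lemma convex_halfspace_gt' (u : Fin n → ℝ) (c : ℝ) : Convex ℝ {x | c < dot u x} := by
  have h := convex_halfopen_gt u u c c
  have hset : {x | c < dot u x ∨ (dot u x = c ∧ dot u x < c)} = {x | c < dot u x} := by
    ext x
    simp only [Set.mem_setOf_eq]
    constructor
    · rintro (h1 | ⟨h1, h2⟩)
      · exact h1
      · rw [h1] at h2; exact absurd h2 (lt_irrefl _)
    · exact Or.inl
  rwa [hset] at h

lemma convex_halfspace_lt' (u : Fin n → ℝ) (c : ℝ) : Convex ℝ {x | dot u x < c} := by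
  have h := convex_halfopen_lt u u c c
  have hset : {x | dot u x < c ∨ (dot u x = c ∧ c < dot u x)} = {x | dot u x < c} := by
    ext x
    simp only [Set.mem_setOf_eq]
    constructor
    · rintro (h1 | ⟨h1, h2⟩)
      · exact h1
      · rw [h1] at h2; exact absurd h2 (lt_irrefl _)
    · exact Or.inl
  rwa [hset] at h

lemma iInter_snoc {α : Type*} {m : ℕ} (C : Fin m → Set α) (X : Set α) :
    (⋂ i, (Fin.snoc C X : Fin (m + 1) → Set α) i) = (⋂ i, C i) ∩ X := by
  ext z
  simp only [Set.mem_iInter, Set.mem_inter_iff]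
  constructor
  · intro hz
    refine ⟨fun i => ?_, ?_⟩
    · have := hz i.castSucc
      rwa [Fin.snoc_castSucc] at this
    · have := hz (Fin.last m)
      rwa [Fin.snoc_last] at this
  · rintro ⟨h1, h2⟩ i
    refine Fin.lastCases ?_ ?_ i
    · rwa [Fin.snoc_last]
    · intro j; rw [Fin.snoc_castSucc]; exact h1 j

/-- One Helly application: cut with a convex set `X` that drops the count from `k` to `k' < k`;
the certificate must contain `X`, yielding at most `t - 1` original sets whose intersection
with `X` meets `S` exactly in the original trace. -/
lemma app_helper {n m : ℕ} {S : Set (Fin n → ℝ)} {C : Fin m → Set (Fin n → ℝ)}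
    (hC : ∀ i, Convex ℝ (C i)) {X : Set (Fin n → ℝ)} (hX : Convex ℝ X)
    {k k' t : ℕ}
    (hfin : (S ∩ ⋂ i, C i).Finite) (hk : (S ∩ ⋂ i, C i).ncard = k)
    (hk' : (S ∩ ((⋂ i, C i) ∩ X)).ncard = k') (hlt : k' < k)
    (hHelly : HellyCond S k' t) :
    ∃ I₀ : Finset (Fin m), I₀.card + 1 ≤ t ∧
      S ∩ ((⋂ i ∈ I₀, C i) ∩ X) = S ∩ ((⋂ i, C i) ∩ X) := by
  set C' : Fin (m + 1) → Set (Fin n → ℝ) := Fin.snoc C X with hC'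
  have hint : (⋂ i, C' i) = (⋂ i, C i) ∩ X := iInter_snoc C X
  have hconv' : ∀ i, Convex ℝ (C' i) := by
    intro i
    refine Fin.lastCases ?_ ?_ i
    · rw [hC', Fin.snoc_last]; exact hX
    · intro j; rw [hC', Fin.snoc_castSucc]; exact hC j
  have hfin' : (S ∩ ⋂ i, C' i).Finite := by
    rw [hint]
    exact hfin.subset (fun z hz => ⟨hz.1, hz.2.1⟩)
  have hk'' : (S ∩ ⋂ i, C' i).ncard = k' := by rw [hint]; exact hk'
  obtain ⟨J, hJcard, hJfin, hJncard⟩ := hHelly (m + 1) C' hconv' hfin' hk''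
  have hlast : Fin.last m ∈ J := by
    by_contra hnl
    have hPsub : (S ∩ ⋂ i, C i) ⊆ S ∩ ⋂ i ∈ J, C' i := by
      rintro z ⟨hzS, hz⟩
      refine ⟨hzS, ?_⟩
      rw [Set.mem_iInter₂]
      intro i hiJ
      have hne : i ≠ Fin.last m := by rintro rfl; exact hnl hiJ
      obtain ⟨j, rfl⟩ := Fin.exists_castSucc_eq.mpr hne
      rw [hC', Fin.snoc_castSucc]
      exact Set.mem_iInter.mp hz j
    have hle : k ≤ k' := by
      rw [← hk, ← hJncard]
      exact Set.ncard_le_ncard hPsub hJfin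
    omega
  set I₀ : Finset (Fin m) := Finset.univ.filter (fun j : Fin m => j.castSucc ∈ J) with hI₀
  have himg : I₀.image Fin.castSucc = J.erase (Fin.last m) := by
    ext i
    simp only [Finset.mem_image, Finset.mem_erase, hI₀, Finset.mem_filter, Finset.mem_univ,
      true_and]
    constructor
    · rintro ⟨j, hj, rfl⟩
      exact ⟨(Fin.castSucc_lt_last j).ne, hj⟩
    · rintro ⟨hne, hiJ⟩
      obtain ⟨j, rfl⟩ := Fin.exists_castSucc_eq.mpr hne
      exact ⟨j, hiJ, rfl⟩
  have hcard : I₀.card + 1 ≤ t := by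
    have h1 : I₀.card = (J.erase (Fin.last m)).card := by
      rw [← himg]
      exact (Finset.card_image_of_injective _ (Fin.castSucc_injective m)).symm
    rw [h1, Finset.card_erase_of_mem hlast]
    have : 1 ≤ J.card := Finset.card_pos.mpr ⟨_, hlast⟩
    omega
  have hmemI : ∀ j : Fin m, j ∈ I₀ ↔ j.castSucc ∈ J := by
    intro j
    simp [hI₀]
  have hsets : S ∩ ((⋂ i ∈ I₀, C i) ∩ X) = S ∩ ⋂ i ∈ J, C' i := by
    ext z
    simp only [Set.mem_inter_iff, Set.mem_iInter]
    constructor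
    · rintro ⟨hzS, hz1, hz2⟩
      refine ⟨hzS, fun i hiJ => ?_⟩
      refine Fin.lastCases ?_ ?_ i hiJ
      · intro _; rw [hC', Fin.snoc_last]; exact hz2
      · intro j hj
        rw [hC', Fin.snoc_castSucc]
        exact hz1 j ((hmemI j).mpr hj)
    · rintro ⟨hzS, hz⟩
      refine ⟨hzS, fun j hj => ?_, ?_⟩
      · have h2 := hz j.castSucc ((hmemI j).mp hj)
        rwa [hC', Fin.snoc_castSucc] at h2
      · have h2 := hz (Fin.last m) hlast
        rwa [hC', Fin.snoc_last] at h2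
  refine ⟨I₀, hcard, ?_⟩
  have hsub : S ∩ ((⋂ i, C i) ∩ X) ⊆ S ∩ ((⋂ i ∈ I₀, C i) ∩ X) := by
    rintro z ⟨hzS, hz1, hz2⟩
    exact ⟨hzS, Set.mem_iInter₂.mpr (fun i _ => Set.mem_iInter.mp hz1 i), hz2⟩
  have hAfin : (S ∩ ((⋂ i ∈ I₀, C i) ∩ X)).Finite := by rw [hsets]; exact hJfin
  have hAncard : (S ∩ ((⋂ i ∈ I₀, C i) ∩ X)).ncard = k' := by rw [hsets]; exact hJncard
  exact (Set.eq_of_subset_of_ncard_le hsub (by rw [hAncard, hk']) hAfin).symm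


/-- The geometric core of the induction step for `k ≥ 2`. -/
lemma step_core {S : Set (Fin n → ℝ)} {P : Set (Fin n → ℝ)} (hPfin : P.Finite)
    (hPS : P ⊆ S)
    (u w : Fin n → ℝ)
    (huinj : ∀ s ∈ S, ∀ s' ∈ S, dot u s = dot u s' → s = s')
    (hwinj : ∀ s ∈ S, ∀ s' ∈ S, dot w s = dot w s' → s = s')
    (htriple : ∀ v' ∈ S, ∀ q ∈ S, ∀ s ∈ S, dot u q ≠ dot u v' →
      (dot u s - dot u v') * (dot w v' - dot w q)
        - (dot u q - dot u v') * (dot w v' - dot w s) = 0 →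
      ∃ τ : ℝ, s = v' + τ • (q - v'))
    {v : Fin n → ℝ} (hvP : v ∈ P)
    (hvmin : ∀ p ∈ P, dot u v ≤ dot u p)
    (hbelow : ∃ p ∈ P, dot w p < dot w v) :
    ∃ XH XG : Set (Fin n → ℝ), ∃ q : Fin n → ℝ,
      Convex ℝ XH ∧ Convex ℝ XG ∧ q ∈ P ∧ q ≠ v ∧
      P ∩ XH ⊆ P \ {v, q} ∧ P ∩ XG = ∅ ∧
      (∀ s ∈ S, s ∈ XH ∨ s ∈ XG ∨ s ∈ convexHull ℝ P) := by
  classical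
  set Pf := hPfin.toFinset with hPf
  have hmemPf : ∀ p, p ∈ Pf ↔ p ∈ P := fun p => hPfin.mem_toFinset
  have hvlt : ∀ p ∈ P, p ≠ v → dot u v < dot u p := by
    intro p hp hne
    refine (hvmin p hp).lt_of_ne (fun heq => hne ?_)
    exact huinj p (hPS hp) v (hPS hvP) heq.symm
  set D := Pf.filter (fun p => dot w p < dot w v) with hD
  obtain ⟨p₀, hp₀P, hp₀w⟩ := hbelow
  have hDne : D.Nonempty := ⟨p₀, by
    rw [hD, Finset.mem_filter]
    exact ⟨(hmemPf p₀).mpr hp₀P, hp₀w⟩⟩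
  obtain ⟨q, hqD, hqmin⟩ := Finset.exists_min_image D (fun p => (dot u p - dot u v) / (dot w v - dot w p)) hDne
  have hqP : q ∈ P := by
    rw [hD, Finset.mem_filter] at hqD
    exact (hmemPf q).mp hqD.1
  have hqw : dot w q < dot w v := by
    rw [hD, Finset.mem_filter] at hqD
    exact hqD.2
  have hqv : q ≠ v := fun heq => absurd (heq ▸ hqw) (lt_irrefl _)
  have hBpos : 0 < dot u q - dot u v := by
    have := hvlt q hqP hqv; linarith
  have hdenq : 0 < dot w v - dot w q := by linarith
  set t := (dot u q - dot u v) / (dot w v - dot w q) with ht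
  have htpos : 0 < t := div_pos hBpos hdenq
  have hB : dot u q - dot u v = t * (dot w v - dot w q) := by
    rw [ht, div_mul_cancel₀ _ (ne_of_gt hdenq)]
  set fv := u + t • w with hfvdef
  have hfv : ∀ x, dot fv x = dot u x + t * dot w x := by
    intro x; rw [hfvdef, dot_add_left, dot_smul_left]
  set c := dot fv v with hc
  have hsupp : ∀ p ∈ P, c ≤ dot fv p := by
    intro p hp
    by_cases hpv : p = v
    · rw [hpv]
    by_cases hpD : dot w p < dot w v
    · have hle : t ≤ (dot u p - dot u v) / (dot w v - dot w p) := by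
        apply hqmin
        rw [hD, Finset.mem_filter]
        exact ⟨(hmemPf p).mpr hp, hpD⟩
      have hden : 0 < dot w v - dot w p := by linarith
      rw [le_div_iff₀ hden, mul_sub] at hle
      rw [hc, hfv p, hfv v]
      linarith
    · push_neg at hpD
      rcases eq_or_lt_of_le hpD with heq | hlt
      · exact absurd (hwinj p (hPS hp) v (hPS hvP) heq.symm) hpv
      · have hu := hvlt p hp hpv
        have := mul_lt_mul_of_pos_left hlt htpos
        rw [hc, hfv p, hfv v]
        linarith
  have hfq : dot fv q = c := by
    rw [hc, hfv q, hfv v]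
    rw [mul_sub] at hB
    linarith
  set Ef := Pf.filter (fun p => dot fv p = c) with hEf
  have hqEf : q ∈ Ef := by
    rw [hEf, Finset.mem_filter]
    exact ⟨(hmemPf q).mpr hqP, hfq⟩
  obtain ⟨b, hbEf, hbmax⟩ := Finset.exists_max_image Ef (fun p => dot u p) ⟨q, hqEf⟩
  have hbP : b ∈ P := by
    rw [hEf, Finset.mem_filter] at hbEf
    exact (hmemPf b).mp hbEf.1
  have hfb : dot fv b = c := by
    rw [hEf, Finset.mem_filter] at hbEf
    exact hbEf.2
  set β := dot u b with hβ
  have hβq : dot u q ≤ β := hbmax q hqEf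
  refine ⟨{x | c < dot fv x ∨ (dot fv x = c ∧ dot u x < dot u v)},
    {x | dot fv x < c ∨ (dot fv x = c ∧ β < dot u x)}, q,
    convex_halfopen_gt fv u c (dot u v), convex_halfopen_lt fv u c β,
    hqP, hqv, ?_, ?_, ?_⟩
  · -- P ∩ XH ⊆ P \ {v, q}
    rintro p ⟨hp, hpX⟩
    simp only [Set.mem_setOf_eq] at hpX
    refine ⟨hp, ?_⟩
    simp only [Set.mem_insert_iff, Set.mem_singleton_iff]
    rintro (heq | heq)
    · rcases hpX with h1 | ⟨_, h2⟩
      · rw [heq, ← hc] at h1; exact absurd h1 (lt_irrefl _)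
      · rw [heq] at h2; exact absurd h2 (lt_irrefl _)
    · rcases hpX with h1 | ⟨_, h2⟩
      · rw [heq, hfq] at h1; exact absurd h1 (lt_irrefl _)
      · rw [heq] at h2; exact absurd h2 (not_lt.mpr (hvmin q hqP))
  · -- P ∩ XG = ∅
    ext p
    simp only [Set.mem_inter_iff, Set.mem_setOf_eq, Set.mem_empty_iff_false, iff_false, not_and]
    intro hp hpX
    rcases hpX with h1 | ⟨heq, hβlt⟩
    · exact absurd h1 (not_lt.mpr (hsupp p hp))
    · have : p ∈ Ef := by
        rw [hEf, Finset.mem_filter]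
        exact ⟨(hmemPf p).mpr hp, heq⟩
      exact absurd hβlt (not_lt.mpr (hbmax p this))
  · -- cover
    intro s hs
    rcases lt_trichotomy c (dot fv s) with h1 | h1 | h1
    · exact Or.inl (Or.inl h1)
    · -- on the hyperplane
      rcases lt_or_ge (dot u s) (dot u v) with h2 | h2
      · exact Or.inl (Or.inr ⟨h1.symm, h2⟩)
      rcases lt_or_ge β (dot u s) with h3 | h3
      · exact Or.inr (Or.inl (Or.inr ⟨h1.symm, h3⟩))
      right; right
      have hBne : dot u q ≠ dot u v := by
        intro heq; rw [heq, sub_self] at hBpos; exact lt_irrefl (0:ℝ) hBpos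
      have hA : dot u s - dot u v = t * (dot w v - dot w s) := by
        have h1' : dot u v + t * dot w v = dot u s + t * dot w s := by
          rw [← hfv v, ← hfv s, ← hc, h1]
        rw [mul_sub]
        linarith
      have hgs : (dot u s - dot u v) * (dot w v - dot w q)
          - (dot u q - dot u v) * (dot w v - dot w s) = 0 := by
        rw [hA, hB]; ring
      obtain ⟨τ, hsline⟩ := htriple v (hPS hvP) q (hPS hqP) s hs hBne hgs
      have hAb : dot u b - dot u v = t * (dot w v - dot w b) := by
        have h1' : dot u v + t * dot w v = dot u b + t * dot w b := by
          rw [← hfv v, ← hfv b, ← hc, hfb]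
        rw [mul_sub]
        linarith
      have hgb : (dot u b - dot u v) * (dot w v - dot w q)
          - (dot u q - dot u v) * (dot w v - dot w b) = 0 := by
        rw [hAb, hB]; ring
      obtain ⟨τb, hbline⟩ := htriple v (hPS hvP) q (hPS hqP) b (hPS hbP) hBne hgb
      have hud : dot u (q - v) = dot u q - dot u v := dot_sub_right u q v
      have hus : dot u s = dot u v + τ * (dot u q - dot u v) := by
        rw [hsline, dot_add_right, dot_smul_right, hud]
      have hub : dot u b = dot u v + τb * (dot u q - dot u v) := by
        rw [hbline, dot_add_right, dot_smul_right, hud]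
      have hτ0 : 0 ≤ τ := by nlinarith
      have hτb1 : 1 ≤ τb := by nlinarith
      have hττb : τ ≤ τb := by nlinarith
      have hτbpos : 0 < τb := by linarith
      have hbv : b - v = τb • (q - v) := by
        rw [hbline, add_sub_cancel_left]
      have hseg : s = v + (τ / τb) • (b - v) := by
        rw [hbv, smul_smul, div_mul_cancel₀ _ (ne_of_gt hτbpos), hsline]
      have hmem : s ∈ segment ℝ v b := by
        rw [segment_eq_image']
        exact ⟨τ / τb, ⟨div_nonneg hτ0 (le_of_lt hτbpos), (div_le_one hτbpos).mpr hττb⟩,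
          hseg.symm⟩
      exact segment_subset_convexHull hvP hbP hmem
    · exact Or.inr (Or.inl (Or.inl h1))


end Stmt6Aux

open Stmt6Aux

/-- Let `S ⊆ ℝ^n` be discrete with `|S| ≥ 2` and `k ∈ ℕ`. If `h = h(S) =
c(S,0)` is the (finite) Helly number of `S`, then `c(S,k) ≤ ⌊(k+1)/2⌋·(h-2) + h`,
i.e. `t = ⌊(k+1)/2⌋·(h-2) + h` satisfies the Helly condition for `k`. -/
theorem stmt6 (n k : ℕ) (S : Set (Fin n → ℝ)) (hS : DiscreteSet S)
    (hcard : ∃ x ∈ S, ∃ y ∈ S, x ≠ y)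
    (h : ℕ) (hh : IsLeast {t : ℕ | HellyCond S 0 t} h) :
    HellyCond S k ((k + 1) / 2 * (h - 2) + h) := by
  classical
  have hh2 : 2 ≤ h := two_le_helly hcard hh
  have hScount : S.Countable := countable_of_discrete hS
  -- generic direction u, injective on S
  have hZuC : ((fun p : (Fin n → ℝ) × (Fin n → ℝ) => p.1 - p.2) ''
      {p | p.1 ∈ S ∧ p.2 ∈ S ∧ p.1 ≠ p.2}).Countable := by
    apply Set.Countable.image
    exact Set.Countable.mono (fun p hp => Set.mk_mem_prod hp.1 hp.2.1) (hScount.prod hScount)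
  have hZu0 : ∀ z ∈ ((fun p : (Fin n → ℝ) × (Fin n → ℝ) => p.1 - p.2) ''
      {p | p.1 ∈ S ∧ p.2 ∈ S ∧ p.1 ≠ p.2}), z ≠ 0 := by
    rintro z ⟨p, ⟨h1, h2, h3⟩, rfl⟩
    exact sub_ne_zero_of_ne h3
  obtain ⟨u, hu⟩ := exists_generic hZuC hZu0
  have huinj : ∀ s ∈ S, ∀ s' ∈ S, dot u s = dot u s' → s = s' := by
    intro s hs s' hs' heq
    by_contra hne
    have hz : s - s' ∈ ((fun p : (Fin n → ℝ) × (Fin n → ℝ) => p.1 - p.2) ''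
        {p | p.1 ∈ S ∧ p.2 ∈ S ∧ p.1 ≠ p.2}) := ⟨(s, s'), ⟨hs, hs', hne⟩, rfl⟩
    have := hu _ hz
    rw [dot_sub_right] at this
    exact this (by rw [heq]; ring)
  -- generic direction w
  set T3 : Set ((Fin n → ℝ) × (Fin n → ℝ) × (Fin n → ℝ)) :=
    {p | p.1 ∈ S ∧ p.2.1 ∈ S ∧ p.2.2 ∈ S ∧ dot u p.2.1 ≠ dot u p.1 ∧
      ¬∃ τ : ℝ, p.2.2 = p.1 + τ • (p.2.1 - p.1)} with hT3
  set ZW : Set (Fin n → ℝ) := ((fun p : (Fin n → ℝ) × (Fin n → ℝ) => p.1 - p.2) ''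
      {p | p.1 ∈ S ∧ p.2 ∈ S ∧ p.1 ≠ p.2}) ∪
    ((fun p : (Fin n → ℝ) × (Fin n → ℝ) × (Fin n → ℝ) =>
      ((dot u p.2.2 - dot u p.1) - (dot u p.2.1 - dot u p.1)) • p.1
        + (-(dot u p.2.2 - dot u p.1)) • p.2.1 + (dot u p.2.1 - dot u p.1) • p.2.2) '' T3)
    with hZW
  have hZWC : ZW.Countable := by
    have hT3c : T3.Countable := by
      refine Set.Countable.mono (fun p hp => ?_) (hScount.prod (hScount.prod hScount))
      exact Set.mk_mem_prod hp.1 (Set.mk_mem_prod hp.2.1 hp.2.2.1)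
    exact hZuC.union (hT3c.image _)
  have hZW0 : ∀ z ∈ ZW, z ≠ 0 := by
    rintro z (hz | ⟨⟨v', q, s⟩, hp, rfl⟩)
    · exact hZu0 z hz
    · obtain ⟨hp1, hp2, hp3, hB, hline⟩ := hp
      intro hzero
      apply hline
      have hBne : dot u q - dot u v' ≠ 0 := sub_ne_zero_of_ne hB
      refine ⟨(dot u s - dot u v') / (dot u q - dot u v'), ?_⟩
      funext i
      have hi := congrFun hzero i
      simp only [Pi.add_apply, Pi.smul_apply, Pi.neg_apply, Pi.zero_apply, smul_eq_mul] at hi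
      have hgoal : s i = v' i + (dot u s - dot u v') / (dot u q - dot u v') * (q i - v' i) := by
        field_simp
        nlinarith [hi]
      simpa using hgoal
  obtain ⟨w, hw⟩ := exists_generic hZWC hZW0
  have hwinj : ∀ s ∈ S, ∀ s' ∈ S, dot w s = dot w s' → s = s' := by
    intro s hs s' hs' heq
    by_contra hne
    have hz : s - s' ∈ ZW := Or.inl ⟨(s, s'), ⟨hs, hs', hne⟩, rfl⟩
    have := hw _ hz
    rw [dot_sub_right] at this
    exact this (by rw [heq]; ring)
  have htriple : ∀ v' ∈ S, ∀ q ∈ S, ∀ s ∈ S, dot u q ≠ dot u v' →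
      (dot u s - dot u v') * (dot w v' - dot w q)
        - (dot u q - dot u v') * (dot w v' - dot w s) = 0 →
      ∃ τ : ℝ, s = v' + τ • (q - v') := by
    intro v' hv' q hq s hs hB hg
    by_contra hline
    have hz : (((dot u s - dot u v') - (dot u q - dot u v')) • v'
        + (-(dot u s - dot u v')) • q + (dot u q - dot u v') • s) ∈ ZW :=
      Or.inr ⟨(v', q, s), ⟨hv', hq, hs, hB, hline⟩, rfl⟩
    have hne := hw _ hz
    rw [dot_right_comb] at hne
    exact hne (by linear_combination hg)
  -- the negated direction also satisfies the same properties
  have hwinj' : ∀ s ∈ S, ∀ s' ∈ S, dot (-w) s = dot (-w) s' → s = s' := by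
    intro s hs s' hs' heq
    rw [dot_neg_left, dot_neg_left, neg_inj] at heq
    exact hwinj s hs s' hs' heq
  have htriple' : ∀ v' ∈ S, ∀ q ∈ S, ∀ s ∈ S, dot u q ≠ dot u v' →
      (dot u s - dot u v') * (dot (-w) v' - dot (-w) q)
        - (dot u q - dot u v') * (dot (-w) v' - dot (-w) s) = 0 →
      ∃ τ : ℝ, s = v' + τ • (q - v') := by
    intro v' hv' q hq s hs hB hg
    apply htriple v' hv' q hq s hs hB
    simp only [dot_neg_left] at hg
    linarith [hg]
  -- main induction on k
  suffices H : ∀ k, HellyCond S k ((k + 1) / 2 * (h - 2) + h) from H k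
  intro k
  induction k using Nat.strong_induction_on with
  | _ k IH =>
  rcases Nat.eq_zero_or_pos k with rfl | hkpos
  · have hT : (0 + 1) / 2 * (h - 2) + h = h := by norm_num
    rw [hT]
    exact hh.1
  intro m C hC hfin hk
  have hPS : (S ∩ ⋂ i, C i) ⊆ S := fun z hz => hz.1
  have hPne : (S ∩ ⋂ i, C i).Nonempty :=
    Set.nonempty_of_ncard_ne_zero (by rw [hk]; omega)
  obtain ⟨v, hvPf, hvmin'⟩ := Finset.exists_min_image hfin.toFinset (fun p => dot u p)
    (by rwa [Set.Finite.toFinset_nonempty])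
  have hvP : v ∈ S ∩ ⋂ i, C i := hfin.mem_toFinset.mp hvPf
  have hvmin : ∀ p ∈ S ∩ ⋂ i, C i, dot u v ≤ dot u p :=
    fun p hp => hvmin' p (hfin.mem_toFinset.mpr hp)
  have hassoc : ∀ X : Set (Fin n → ℝ),
      S ∩ ((⋂ i, C i) ∩ X) = (S ∩ ⋂ i, C i) ∩ X := fun X => (Set.inter_assoc _ _ _).symm
  rcases Nat.lt_or_ge k 2 with hk2 | hk2
  · -- k = 1
    have hk1 : k = 1 := by omega
    subst hk1
    obtain ⟨v₀, hPsing⟩ := Set.ncard_eq_one.mp hk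
    have hvv : v = v₀ := by rw [hPsing] at hvP; exact hvP
    subst hvv
    -- two halfspace applications
    have hXHe : ({v} : Set (Fin n → ℝ)) ∩ {x | dot u v < dot u x} = ∅ := by
      ext p
      simp only [Set.mem_inter_iff, Set.mem_singleton_iff, Set.mem_setOf_eq,
        Set.mem_empty_iff_false, iff_false, not_and]
      rintro rfl
      exact lt_irrefl _
    have hXGe : ({v} : Set (Fin n → ℝ)) ∩ {x | dot u x < dot u v} = ∅ := by
      ext p
      simp only [Set.mem_inter_iff, Set.mem_singleton_iff, Set.mem_setOf_eq,
        Set.mem_empty_iff_false, iff_false, not_and]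
      rintro rfl
      exact lt_irrefl _
    have hXH0 : (S ∩ ((⋂ i, C i) ∩ {x | dot u v < dot u x})).ncard = 0 := by
      rw [hassoc, hPsing, hXHe, Set.ncard_empty]
    have hXG0 : (S ∩ ((⋂ i, C i) ∩ {x | dot u x < dot u v})).ncard = 0 := by
      rw [hassoc, hPsing, hXGe, Set.ncard_empty]
    obtain ⟨I₀, hI₀c, hI₀e⟩ := app_helper hC (convex_halfspace_gt' u (dot u v))
      hfin hk hXH0 (by omega) hh.1
    obtain ⟨I₁, hI₁c, hI₁e⟩ := app_helper hC (convex_halfspace_lt' u (dot u v))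
      hfin hk hXG0 (by omega) hh.1
    have hcover : ∀ s ∈ S, s ∈ {x | dot u v < dot u x} ∨ s ∈ {x | dot u x < dot u v} ∨
        s ∈ convexHull ℝ (S ∩ ⋂ i, C i) := by
      intro s hs
      rcases lt_trichotomy (dot u v) (dot u s) with h1 | h1 | h1
      · exact Or.inl h1
      · right; right
        have : s = v := huinj s hs v (hPS hvP) h1.symm
        rw [this]
        exact subset_convexHull ℝ _ hvP
      · exact Or.inr (Or.inl h1)
    have hfinal := assemble hC hcover hI₀e hI₁e
    refine ⟨I₀ ∪ I₁, ?_, ?_, ?_⟩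
    · have hcu := Finset.card_union_le I₀ I₁
      have : (1 + 1) / 2 * (h - 2) + h = (h - 2) + h := by norm_num
      rw [this]
      omega
    · rw [hfinal]; exact hfin
    · rw [hfinal]; exact hk
  · -- k ≥ 2
    have hsecond : ∃ q₂ ∈ S ∩ ⋂ i, C i, q₂ ≠ v := by
      by_contra hcon
      push_neg at hcon
      have : (S ∩ ⋂ i, C i) ⊆ {v} := fun p hp => hcon p hp
      have := Set.ncard_le_ncard this (Set.finite_singleton v)
      rw [hk, Set.ncard_singleton] at this
      omega
    obtain ⟨q₂, hq₂P, hq₂v⟩ := hsecond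
    have hwne : dot w q₂ ≠ dot w v := fun heq => hq₂v (hwinj q₂ (hPS hq₂P) v (hPS hvP) heq)
    have hstep : ∃ XH XG : Set (Fin n → ℝ), ∃ q : Fin n → ℝ,
        Convex ℝ XH ∧ Convex ℝ XG ∧ q ∈ (S ∩ ⋂ i, C i) ∧ q ≠ v ∧
        (S ∩ ⋂ i, C i) ∩ XH ⊆ (S ∩ ⋂ i, C i) \ {v, q} ∧ (S ∩ ⋂ i, C i) ∩ XG = ∅ ∧
        (∀ s ∈ S, s ∈ XH ∨ s ∈ XG ∨ s ∈ convexHull ℝ (S ∩ ⋂ i, C i)) := by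
      rcases lt_or_gt_of_ne hwne with hlt | hgt
      · exact step_core hfin hPS u w huinj hwinj htriple hvP hvmin ⟨q₂, hq₂P, hlt⟩
      · refine step_core hfin hPS u (-w) huinj hwinj' htriple' hvP hvmin ⟨q₂, hq₂P, ?_⟩
        rw [dot_neg_left, dot_neg_left]
        linarith
    obtain ⟨XH, XG, q, hXHc, hXGc, hqP, hqv, hXHsub, hXGe, hcover⟩ := hstep
    -- the count drops by at least 2 on XH
    have hk' : (S ∩ ((⋂ i, C i) ∩ XH)).ncard ≤ k - 2 := by
      rw [hassoc]
      calc ((S ∩ ⋂ i, C i) ∩ XH).ncard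
          ≤ ((S ∩ ⋂ i, C i) \ {v, q}).ncard :=
            Set.ncard_le_ncard hXHsub (hfin.diff (t := _))
        _ = k - 2 := by
            have hsub2 : ({v, q} : Set (Fin n → ℝ)) ⊆ S ∩ ⋂ i, C i := by
              intro p hp
              simp only [Set.mem_insert_iff, Set.mem_singleton_iff] at hp
              rcases hp with rfl | rfl
              · exact hvP
              · exact hqP
            rw [Set.ncard_diff hsub2, hk, Set.ncard_pair (Ne.symm hqv)]
    have hk'lt : (S ∩ ((⋂ i, C i) ∩ XH)).ncard < k := by omega
    have hXG0 : (S ∩ ((⋂ i, C i) ∩ XG)).ncard = 0 := by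
      rw [hassoc, hXGe, Set.ncard_empty]
    obtain ⟨I₀, hI₀c, hI₀e⟩ := app_helper hC hXHc hfin hk rfl hk'lt
      (IH _ (by omega))
    obtain ⟨I₁, hI₁c, hI₁e⟩ := app_helper hC hXGc hfin hk hXG0 (by omega) hh.1
    have hfinal := assemble hC hcover hI₀e hI₁e
    refine ⟨I₀ ∪ I₁, ?_, ?_, ?_⟩
    · have hcu := Finset.card_union_le I₀ I₁
      -- arithmetic: T k' + h ≤ T k + 2 for k' ≤ k - 2
      set k' := (S ∩ ((⋂ i, C i) ∩ XH)).ncard with hk'def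
      have hdiv1 : (k' + 1) / 2 ≤ (k - 1) / 2 := Nat.div_le_div_right (by omega)
      have hdiv2 : (k + 1) / 2 = (k - 1) / 2 + 1 := by
        have : k + 1 = (k - 1) + 2 := by omega
        rw [this, Nat.add_div_right _ (by norm_num)]
      have hmul : (k' + 1) / 2 * (h - 2) ≤ (k - 1) / 2 * (h - 2) :=
        Nat.mul_le_mul_right _ hdiv1
      have he : (k + 1) / 2 * (h - 2) = (k - 1) / 2 * (h - 2) + (h - 2) := by
        rw [hdiv2, add_mul, one_mul]
      omega
    · rw [hfinal]; exact hfin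
    · rw [hfinal]; exact hk
end

section
/- Let S ⊆ R^n be discrete, P a polytope with vertices in S such that Q := conv(S ∩ P \ vert(P)) is nonempty and dim(Q) ≤ 1. Then |vert(P)| ≤ 2·h(S) - 2. -/
open Matrix

lemma dot_self_pos {n : ℕ} {v : Fin n → ℝ} (hv : v ≠ 0) : 0 < v ⬝ᵥ v := by
  have h0 : (0:ℝ) ≤ v ⬝ᵥ v := Finset.sum_nonneg fun i _ => mul_self_nonneg _
  rcases h0.lt_or_eq with h | h
  · exact h
  · exact absurd (dotProduct_self_eq_zero.mp h.symm) hv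

lemma exists_perp_single {n : ℕ} (d : Fin n → ℝ) (w : Fin n → ℝ)
    (hw : w ∉ Submodule.span ℝ {d}) : ∃ b : Fin n → ℝ, b ⬝ᵥ d = 0 ∧ b ⬝ᵥ w ≠ 0 := by
  by_cases hd : d = 0
  · refine ⟨w, by simp [hd], ?_⟩
    have hw0 : w ≠ 0 := by
      rintro rfl; exact hw (Submodule.zero_mem _)
    exact (dot_self_pos hw0).ne'
  · set b := (d ⬝ᵥ d) • w - (w ⬝ᵥ d) • d with hb
    have hbd : b ⬝ᵥ d = 0 := by
      simp only [hb, sub_dotProduct, smul_dotProduct, smul_eq_mul]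
      rw [dotProduct_comm w d]; ring
    have hbne : b ≠ 0 := by
      intro h0
      apply hw
      have heq : (d ⬝ᵥ d) • w = (w ⬝ᵥ d) • d := sub_eq_zero.mp (by rw [← hb]; exact h0)
      have hdd : (d ⬝ᵥ d) ≠ 0 := (dot_self_pos hd).ne'
      have h2 : w = ((d ⬝ᵥ d)⁻¹ * (w ⬝ᵥ d)) • d := by
        rw [← smul_smul, ← heq, inv_smul_smul₀ hdd]
      rw [h2]
      exact Submodule.smul_mem _ _ (Submodule.mem_span_singleton_self d)
    have hbb : b ⬝ᵥ b = (d ⬝ᵥ d) * (b ⬝ᵥ w) := by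
      simp only [hb, sub_dotProduct, smul_dotProduct, dotProduct_sub, dotProduct_smul,
        smul_eq_mul]
      rw [dotProduct_comm w d, dotProduct_comm d w]; ring
    refine ⟨b, hbd, ?_⟩
    intro h0
    rw [h0, mul_zero] at hbb
    exact (dot_self_pos hbne).ne' hbb

lemma exists_perp_all {n : ℕ} (d : Fin n → ℝ) (W : Finset (Fin n → ℝ))
    (hW : ∀ w ∈ W, w ∉ Submodule.span ℝ {d}) :
    ∃ a : Fin n → ℝ, a ⬝ᵥ d = 0 ∧ ∀ w ∈ W, a ⬝ᵥ w ≠ 0 := by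
  classical
  induction W using Finset.induction_on with
  | empty => exact ⟨0, by simp, by simp⟩
  | insert w₀ W' hx =>
    obtain ⟨a, had, haW⟩ := ‹_ → _› (fun w hw => hW w (Finset.mem_insert_of_mem hw))
    obtain ⟨b, hbd, hbw⟩ := exists_perp_single d w₀ (hW w₀ (Finset.mem_insert_self _ _))
    obtain ⟨ε, hε⟩ := Infinite.exists_notMem_finset
      (insert (-(a ⬝ᵥ w₀) / (b ⬝ᵥ w₀)) (W'.image (fun w => -(a ⬝ᵥ w) / (b ⬝ᵥ w))) : Finset ℝ)
    refine ⟨a + ε • b, by simp [add_dotProduct, smul_dotProduct, had, hbd], ?_⟩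
    intro w hw
    simp only [add_dotProduct, smul_dotProduct, smul_eq_mul]
    rcases Finset.mem_insert.mp hw with rfl | hw'
    · intro h0
      have hbw0 : b ⬝ᵥ w ≠ 0 := hbw
      apply hε
      have : ε = -(a ⬝ᵥ w) / (b ⬝ᵥ w) := by field_simp; linarith
      rw [this]; exact Finset.mem_insert_self _ _
    · intro h0
      by_cases hbw1 : b ⬝ᵥ w = 0
      · rw [hbw1, mul_zero, add_zero] at h0
        exact haW w hw' h0
      · apply hε
        have : ε = -(a ⬝ᵥ w) / (b ⬝ᵥ w) := by field_simp; linarith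
        rw [this]
        exact Finset.mem_insert_of_mem (Finset.mem_image_of_mem _ hw')

lemma convex_lexGe {n : ℕ} (f g : Fin n → ℝ) (c b : ℝ) :
    Convex ℝ {p : Fin n → ℝ | c ≤ f ⬝ᵥ p ∧ (f ⬝ᵥ p = c → g ⬝ᵥ p ≤ b)} := by
  intro x hx y hy μ ν hμ hν hμν
  have hν' : ν = 1 - μ := by linarith
  subst hν'
  obtain ⟨hfx, hgx⟩ := hx
  obtain ⟨hfy, hgy⟩ := hy
  have hfc : f ⬝ᵥ (μ • x + (1-μ) • y) = μ * (f ⬝ᵥ x) + (1-μ) * (f ⬝ᵥ y) := by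
    simp [dotProduct_add, dotProduct_smul, smul_eq_mul]
  have hgc : g ⬝ᵥ (μ • x + (1-μ) • y) = μ * (g ⬝ᵥ x) + (1-μ) * (g ⬝ᵥ y) := by
    simp [dotProduct_add, dotProduct_smul, smul_eq_mul]
  have hA := mul_le_mul_of_nonneg_left hfx hμ
  have hB := mul_le_mul_of_nonneg_left hfy hν
  constructor
  · rw [hfc]; nlinarith [hA, hB]
  · intro heq
    rw [hfc] at heq
    rw [hgc]
    rcases eq_or_lt_of_le hμ with hμ0 | hμ0
    · rw [← hμ0] at heq ⊢
      have hfy' : f ⬝ᵥ y = c := by linarith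
      have := hgy hfy'
      linarith
    rcases eq_or_lt_of_le hν with hν0 | hν0
    · have hμ1 : μ = 1 := by linarith
      rw [hμ1] at heq ⊢
      have hfx' : f ⬝ᵥ x = c := by linarith
      have := hgx hfx'
      linarith
    · have hfx' : f ⬝ᵥ x = c := by nlinarith
      have hfy' : f ⬝ᵥ y = c := by nlinarith
      have h1 := hgx hfx'
      have h2 := hgy hfy'
      nlinarith [mul_le_mul_of_nonneg_left h1 hμ, mul_le_mul_of_nonneg_left h2 hν]

lemma convex_lexGt {n : ℕ} (f g : Fin n → ℝ) (c b : ℝ) :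
    Convex ℝ {p : Fin n → ℝ | c < f ⬝ᵥ p ∨ (f ⬝ᵥ p = c ∧ g ⬝ᵥ p < b)} := by
  intro x hx y hy μ ν hμ hν hμν
  have hν' : ν = 1 - μ := by linarith
  subst hν'
  have hfc : f ⬝ᵥ (μ • x + (1-μ) • y) = μ * (f ⬝ᵥ x) + (1-μ) * (f ⬝ᵥ y) := by
    simp [dotProduct_add, dotProduct_smul, smul_eq_mul]
  have hgc : g ⬝ᵥ (μ • x + (1-μ) • y) = μ * (g ⬝ᵥ x) + (1-μ) * (g ⬝ᵥ y) := by
    simp [dotProduct_add, dotProduct_smul, smul_eq_mul]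
  rcases eq_or_lt_of_le hμ with hμ0 | hμ0
  · have : μ • x + (1-μ) • y = y := by rw [← hμ0]; simp
    rw [this]; exact hy
  rcases eq_or_lt_of_le hν with hν0 | hν0
  · have hμ1 : μ = 1 := by linarith
    have : μ • x + (1-μ) • y = x := by rw [hμ1]; simp
    rw [this]; exact hx
  rcases hx with hx | ⟨hx1, hx2⟩ <;> rcases hy with hy | ⟨hy1, hy2⟩
  · left; rw [hfc]
    nlinarith [mul_lt_mul_of_pos_left hx hμ0, mul_lt_mul_of_pos_left hy hν0]
  · left; rw [hfc]
    nlinarith [mul_lt_mul_of_pos_left hx hμ0, hy1]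
  · left; rw [hfc]
    nlinarith [mul_lt_mul_of_pos_left hy hν0, hx1]
  · right
    constructor
    · rw [hfc, hx1, hy1]; ring
    · rw [hgc]
      nlinarith [mul_lt_mul_of_pos_left hx2 hμ0, mul_lt_mul_of_pos_left hy2 hν0]

lemma extreme_of_subset {E : Type*} [AddCommGroup E] [Module ℝ E] {A B : Set E}
    (hAB : A ⊆ B) {x : E} (hx : x ∈ Set.extremePoints ℝ B) (hxA : x ∈ A) :
    x ∈ Set.extremePoints ℝ A := by
  rw [mem_extremePoints] at hx ⊢
  exact ⟨hxA, fun y hy z hz hseg => hx.2 y (hAB hy) z (hAB hz) hseg⟩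

lemma extreme_insert_self {E : Type*} [AddCommGroup E] [Module ℝ E] {q : E} {A : Set E}
    (hq : q ∉ convexHull ℝ A) :
    q ∈ Set.extremePoints ℝ (convexHull ℝ (insert q A)) := by
  rcases A.eq_empty_or_nonempty with rfl | hA
  · rw [Set.insert_eq, Set.union_empty, convexHull_singleton]
    rw [mem_extremePoints]
    refine ⟨rfl, ?_⟩
    intro y hy z hz _
    exact ⟨hy, hz⟩
  rw [mem_extremePoints]
  refine ⟨subset_convexHull ℝ _ (Set.mem_insert q A), ?_⟩
  intro y hy z hz hseg
  rw [convexHull_insert hA, mem_convexJoin] at hy hz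
  obtain ⟨qy, hqy, ay, hay, αq, α, hαq, hα, hαs, hyeq⟩ := hy
  obtain ⟨qz, hqz, az, haz, βq, β, hβq, hβ, hβs, hzeq⟩ := hz
  rw [Set.mem_singleton_iff] at hqy hqz
  rw [hqy] at hyeq; rw [hqz] at hzeq
  clear hqy hqz
  obtain ⟨u, u', hu, hu', huu, hqeq⟩ := hseg
  set s := u * α + u' * β with hs
  have hexp : (u*αq + u'*βq) • q + ((u*α) • ay + (u'*β) • az) = q := by
    symm
    conv_lhs => rw [← hqeq, ← hyeq, ← hzeq]
    simp only [smul_add, smul_smul, add_smul]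
    abel
  have hsum : u*αq + u'*βq = 1 - s := by
    rw [hs]; linear_combination u * hαs + u' * hβs + huu
  rcases eq_or_lt_of_le (by positivity : (0:ℝ) ≤ s) with hs0 | hs0
  · -- s = 0 : y = q and z = q
    have huα : u * α = 0 := by nlinarith [mul_nonneg hu.le hα, mul_nonneg hu'.le hβ]
    have huβ : u' * β = 0 := by nlinarith [mul_nonneg hu.le hα, mul_nonneg hu'.le hβ]
    have hα0 : α = 0 := by
      rcases mul_eq_zero.mp huα with h | h
      · exact absurd h hu.ne'
      · exact h
    have hβ0 : β = 0 := by
      rcases mul_eq_zero.mp huβ with h | h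
      · exact absurd h hu'.ne'
      · exact h
    have hαq1 : αq = 1 := by linarith
    have hβq1 : βq = 1 := by linarith
    constructor
    · rw [← hyeq, hα0, hαq1]; simp
    · rw [← hzeq, hβ0, hβq1]; simp
  · -- s > 0 : q ∈ convexHull A, contradiction
    exfalso
    apply hq
    have hkey : s • q = (u*α) • ay + (u'*β) • az := by
      have h2 : (1 - s) • q + ((u*α) • ay + (u'*β) • az) = q := by
        rw [← hsum]; exact hexp
      have hB := eq_sub_of_add_eq' h2
      have hq2 : q - (1-s) • q = s • q := by rw [sub_smul, one_smul]; abel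
      rw [← hq2]; exact hB.symm
    have hmem : (s⁻¹ * (u*α)) • ay + (s⁻¹ * (u'*β)) • az ∈ convexHull ℝ A := by
      apply (convex_convexHull ℝ A) hay haz
      · positivity
      · positivity
      · field_simp; exact hs.symm
    have hqe : q = (s⁻¹ * (u*α)) • ay + (s⁻¹ * (u'*β)) • az := by
      have := congrArg (fun v => s⁻¹ • v) hkey
      simp only [smul_smul, smul_add] at this
      rw [inv_mul_cancel₀ hs0.ne', one_smul] at this
      exact this
    rw [hqe]
    exact hmem

lemma key_lemma_s7 {n : ℕ} {S : Set (Fin n → ℝ)} {h : ℕ}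
    (hh : IsGreatest {t : ℕ | ∃ V' : Finset (Fin n → ℝ), ↑V' ⊆ S ∧
      Set.extremePoints ℝ (convexHull ℝ (V' : Set (Fin n → ℝ))) = ↑V' ∧
      S ∩ convexHull ℝ (V' : Set (Fin n → ℝ)) = ↑V' ∧ V'.card = t} h)
    (V : Finset (Fin n → ℝ)) (hVS : ↑V ⊆ S)
    (hvert : Set.extremePoints ℝ (convexHull ℝ (V : Set (Fin n → ℝ))) = ↑V)
    (f g q : Fin n → ℝ) (hqS : q ∈ S)
    (hqP : q ∈ convexHull ℝ (V : Set (Fin n → ℝ))) (hqV : q ∉ V)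
    (V₁ : Finset (Fin n → ℝ)) (hV₁V : V₁ ⊆ V)
    (hV₁lex : ∀ v ∈ V₁, f ⬝ᵥ q < f ⬝ᵥ v ∨ (f ⬝ᵥ v = f ⬝ᵥ q ∧ g ⬝ᵥ v < g ⬝ᵥ q))
    (hcond : ∀ p ∈ S, p ∈ convexHull ℝ (V : Set (Fin n → ℝ)) → p ∉ V₁ → p ≠ q →
      f ⬝ᵥ p < f ⬝ᵥ q ∨ (f ⬝ᵥ p = f ⬝ᵥ q ∧ g ⬝ᵥ q < g ⬝ᵥ p)) :
    V₁.card + 1 ≤ h := by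
  classical
  set A : Finset (Fin n → ℝ) := insert q V₁ with hA
  have hAcoe : (A : Set (Fin n → ℝ)) = insert q (V₁ : Set (Fin n → ℝ)) := by
    simp [hA]
  have hAV : (A : Set (Fin n → ℝ)) ⊆ convexHull ℝ (V : Set (Fin n → ℝ)) := by
    rw [hAcoe]
    rintro p (rfl | hp)
    · exact hqP
    · exact subset_convexHull ℝ _ (hV₁V (Finset.mem_coe.mp hp))
  have hconvAV : convexHull ℝ (A : Set (Fin n → ℝ)) ⊆ convexHull ℝ (V : Set (Fin n → ℝ)) :=
    convexHull_min hAV (convex_convexHull ℝ _)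
  have hC1 : convexHull ℝ (V₁ : Set (Fin n → ℝ)) ⊆
      {p | f ⬝ᵥ q < f ⬝ᵥ p ∨ (f ⬝ᵥ p = f ⬝ᵥ q ∧ g ⬝ᵥ p < g ⬝ᵥ q)} :=
    convexHull_min (fun v hv => hV₁lex v (Finset.mem_coe.mp hv)) (convex_lexGt f g _ _)
  have hqnot : q ∉ convexHull ℝ (V₁ : Set (Fin n → ℝ)) := by
    intro hmem
    rcases hC1 hmem with h1 | ⟨_, h2⟩
    · exact lt_irrefl _ h1
    · exact lt_irrefl _ h2
  have hC2 : convexHull ℝ (A : Set (Fin n → ℝ)) ⊆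
      {p | f ⬝ᵥ q ≤ f ⬝ᵥ p ∧ (f ⬝ᵥ p = f ⬝ᵥ q → g ⬝ᵥ p ≤ g ⬝ᵥ q)} := by
    apply convexHull_min _ (convex_lexGe f g _ _)
    rw [hAcoe]
    rintro p (rfl | hp)
    · exact ⟨le_rfl, fun _ => le_rfl⟩
    · rcases hV₁lex p (Finset.mem_coe.mp hp) with h1 | ⟨h1, h2⟩
      · exact ⟨h1.le, fun he => absurd he (by linarith)⟩
      · exact ⟨h1.ge, fun _ => h2.le⟩
  have hAvert : Set.extremePoints ℝ (convexHull ℝ (A : Set (Fin n → ℝ))) = ↑A := by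
    apply Set.Subset.antisymm
    · exact extremePoints_convexHull_subset
    · intro p hp
      rw [hAcoe] at hp
      rcases hp with rfl | hp
      · rw [hAcoe]; exact extreme_insert_self hqnot
      · apply extreme_of_subset hconvAV
        · rw [hvert]
          exact Finset.mem_coe.mpr (hV₁V (Finset.mem_coe.mp hp))
        · exact subset_convexHull ℝ _ (by rw [hAcoe]; exact Set.mem_insert_of_mem _ hp)
  have hAS : (A : Set (Fin n → ℝ)) ⊆ S := by
    rw [hAcoe]
    rintro p (rfl | hp)
    · exact hqS
    · exact hVS (Finset.mem_coe.mpr (hV₁V (Finset.mem_coe.mp hp)))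
  have hASint : S ∩ convexHull ℝ (A : Set (Fin n → ℝ)) = ↑A := by
    apply Set.Subset.antisymm
    · rintro p ⟨hpS, hpA⟩
      by_contra hpnA
      have hpV₁ : p ∉ V₁ := by
        intro hc
        exact hpnA (by rw [hAcoe]; exact Set.mem_insert_of_mem _ (Finset.mem_coe.mpr hc))
      have hpq : p ≠ q := by
        rintro rfl
        exact hpnA (by rw [hAcoe]; exact Set.mem_insert _ _)
      have hcd := hcond p hpS (hconvAV hpA) hpV₁ hpq
      have h2 := hC2 hpA
      rcases hcd with h1 | ⟨h1, h1'⟩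
      · linarith [h2.1]
      · linarith [h2.2 h1]
    · intro p hp
      exact ⟨hAS hp, subset_convexHull ℝ _ hp⟩
  have hqV₁ : q ∉ V₁ := fun hc => hqV (hV₁V hc)
  have hmem : A.card ∈ {t : ℕ | ∃ V' : Finset (Fin n → ℝ), ↑V' ⊆ S ∧
      Set.extremePoints ℝ (convexHull ℝ (V' : Set (Fin n → ℝ))) = ↑V' ∧
      S ∩ convexHull ℝ (V' : Set (Fin n → ℝ)) = ↑V' ∧ V'.card = A.card} :=
    ⟨A, hAS, hAvert, hASint, rfl⟩
  have hcard := hh.2 hmem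
  rwa [hA, Finset.card_insert_of_notMem hqV₁] at hcard

/-- Let `S ⊆ ℝ^n` be discrete with finite Helly number `h = h(S)` (the
maximum number of vertices of a polytope `P'` with vertices in `S` satisfying
`S ∩ P' = vert(P')`). If `P` is a polytope with vertices in `S` such that
`Q := conv(S ∩ P \ vert P)` is nonempty of dimension at most `1`, then
`|vert(P)| ≤ 2·h(S) - 2`. -/
theorem stmt7 (n : ℕ) (S : Set (Fin n → ℝ)) (hS : DiscreteSet S)
    (h : ℕ)
    (hh : IsGreatest {t : ℕ | ∃ V' : Finset (Fin n → ℝ), ↑V' ⊆ S ∧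
      Set.extremePoints ℝ (convexHull ℝ (V' : Set (Fin n → ℝ))) = ↑V' ∧
      S ∩ convexHull ℝ (V' : Set (Fin n → ℝ)) = ↑V' ∧ V'.card = t} h)
    (V : Finset (Fin n → ℝ)) (hVS : ↑V ⊆ S)
    (hvert : Set.extremePoints ℝ (convexHull ℝ (V : Set (Fin n → ℝ))) = ↑V)
    (X : Set (Fin n → ℝ))
    (hX : X = (S ∩ convexHull ℝ (V : Set (Fin n → ℝ))) \ ↑V)
    (hXne : X.Nonempty)
    (hdim : Module.finrank ℝ (affineSpan ℝ X).direction ≤ 1) :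
    V.card ≤ 2 * h - 2 := by
  classical
  have hXsub : X ⊆ S ∩ convexHull ℝ (V : Set (Fin n → ℝ)) := by
    rw [hX]; exact Set.diff_subset
  have hXS : ∀ z ∈ X, z ∈ S := fun z hz => (hXsub hz).1
  have hXP : ∀ z ∈ X, z ∈ convexHull ℝ (V : Set (Fin n → ℝ)) := fun z hz => (hXsub hz).2
  have hXV : ∀ z ∈ X, z ∉ V := by
    intro z hz hc
    rw [hX] at hz
    exact hz.2 (Finset.mem_coe.mpr hc)
  have hXfin : X.Finite :=
    ((hS _ (V.finite_toSet.isCompact_convexHull ℝ).isBounded).subset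
      (fun z hz => hXsub hz))
  have hmemX : ∀ p ∈ S, p ∈ convexHull ℝ (V : Set (Fin n → ℝ)) → p ∉ V → p ∈ X := by
    intro p hpS hpP hpV
    rw [hX]
    exact ⟨⟨hpS, hpP⟩, fun hc => hpV (Finset.mem_coe.mp hc)⟩
  obtain ⟨x₁, hx₁⟩ := hXne
  by_cases hone : ∀ z ∈ X, z = x₁
  · -- X = {x₁}
    obtain ⟨f, _, hf⟩ := exists_perp_all (0 : Fin n → ℝ) (V.image (fun v => v - x₁))
      (by
        intro w hw
        obtain ⟨v, hv, rfl⟩ := Finset.mem_image.mp hw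
        rw [Submodule.span_zero_singleton, Submodule.mem_bot, sub_eq_zero]
        rintro rfl
        exact hXV v hx₁ hv)
    have hfv : ∀ v ∈ V, f ⬝ᵥ v ≠ f ⬝ᵥ x₁ := by
      intro v hv
      have := hf _ (Finset.mem_image_of_mem _ hv)
      rwa [dotProduct_sub, sub_ne_zero] at this
    set V₁ := V.filter (fun v => f ⬝ᵥ x₁ < f ⬝ᵥ v) with hV₁
    set V₂ := V.filter (fun v => f ⬝ᵥ v < f ⬝ᵥ x₁) with hV₂
    have h1 : V₁.card + 1 ≤ h := by
      apply key_lemma_s7 hh V hVS hvert f 0 x₁ (hXS _ hx₁) (hXP _ hx₁) (hXV _ hx₁) V₁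
        (Finset.filter_subset _ _)
      · intro v hv
        exact Or.inl (Finset.mem_filter.mp hv).2
      · intro p hpS hpP hpV₁ hpq
        by_cases hpV : p ∈ V
        · left
          have hne := hfv p hpV
          have hnlt : ¬ (f ⬝ᵥ x₁ < f ⬝ᵥ p) := fun hc => hpV₁ (Finset.mem_filter.mpr ⟨hpV, hc⟩)
          exact lt_of_le_of_ne (not_lt.mp hnlt) hne
        · exact absurd (hone p (hmemX p hpS hpP hpV)) hpq
    have h2 : V₂.card + 1 ≤ h := by
      apply key_lemma_s7 hh V hVS hvert (-f) 0 x₁ (hXS _ hx₁) (hXP _ hx₁) (hXV _ hx₁) V₂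
        (Finset.filter_subset _ _)
      · intro v hv
        left
        simp only [neg_dotProduct, neg_lt_neg_iff]
        exact (Finset.mem_filter.mp hv).2
      · intro p hpS hpP hpV₂ hpq
        by_cases hpV : p ∈ V
        · left
          simp only [neg_dotProduct, neg_lt_neg_iff]
          have hne := hfv p hpV
          have hnlt : ¬ (f ⬝ᵥ p < f ⬝ᵥ x₁) := fun hc => hpV₂ (Finset.mem_filter.mpr ⟨hpV, hc⟩)
          exact lt_of_le_of_ne (not_lt.mp hnlt) (Ne.symm hne)
        · exact absurd (hone p (hmemX p hpS hpP hpV)) hpq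
    have hcover : V ⊆ V₁ ∪ V₂ := by
      intro v hv
      rcases lt_or_gt_of_ne (hfv v hv) with hlt | hgt
      · exact Finset.mem_union_right _ (Finset.mem_filter.mpr ⟨hv, hlt⟩)
      · exact Finset.mem_union_left _ (Finset.mem_filter.mpr ⟨hv, hgt⟩)
    have hcard := (Finset.card_le_card hcover).trans (Finset.card_union_le V₁ V₂)
    omega
  · -- line case
    push_neg at hone
    obtain ⟨x₂, hx₂X, hx₂ne⟩ := hone
    set d := x₂ - x₁ with hdd
    have hd0 : d ≠ 0 := sub_ne_zero.mpr hx₂ne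
    have hdir : ∀ z ∈ X, z - x₁ ∈ Submodule.span ℝ {d} := by
      have hdmem : d ∈ (affineSpan ℝ X).direction := by
        have := AffineSubspace.vsub_mem_direction (mem_affineSpan ℝ hx₂X) (mem_affineSpan ℝ hx₁)
        rwa [vsub_eq_sub] at this
      have hle : Submodule.span ℝ {d} ≤ (affineSpan ℝ X).direction := by
        rw [Submodule.span_le, Set.singleton_subset_iff]
        exact hdmem
      have heq : Submodule.span ℝ {d} = (affineSpan ℝ X).direction := by
        apply Submodule.eq_of_le_of_finrank_le hle
        rw [finrank_span_singleton hd0]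
        exact hdim
      intro z hz
      rw [heq]
      have := AffineSubspace.vsub_mem_direction (mem_affineSpan ℝ hz) (mem_affineSpan ℝ hx₁)
      rwa [vsub_eq_sub] at this
    have hcoord : ∀ z, z - x₁ ∈ Submodule.span ℝ {d} → ∃ t : ℝ, z = x₁ + t • d := by
      intro z hz
      obtain ⟨t, ht⟩ := Submodule.mem_span_singleton.mp hz
      refine ⟨t, ?_⟩
      have h2 := sub_eq_iff_eq_add.mp ht.symm
      rw [h2, add_comm]
    have hgd : 0 < d ⬝ᵥ d := dot_self_pos hd0
    have hdot : ∀ (z : Fin n → ℝ) (t : ℝ), d ⬝ᵥ (z + t • d) = d ⬝ᵥ z + t * (d ⬝ᵥ d) := by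
      intro z t
      simp [dotProduct_add, dotProduct_smul]
    have hinj : ∀ z w, z - x₁ ∈ Submodule.span ℝ {d} → w - x₁ ∈ Submodule.span ℝ {d} →
        d ⬝ᵥ z = d ⬝ᵥ w → z = w := by
      intro z w hz hw he
      obtain ⟨t, rfl⟩ := hcoord z hz
      obtain ⟨s, rfl⟩ := hcoord w hw
      rw [hdot, hdot] at he
      have hts : t = s := by
        have : t * (d ⬝ᵥ d) = s * (d ⬝ᵥ d) := by linarith
        exact mul_right_cancel₀ hgd.ne' this
      rw [hts]
    obtain ⟨qm, hqmX, hqmmin⟩ := Set.exists_min_image X (fun z => d ⬝ᵥ z) hXfin ⟨x₁, hx₁⟩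
    obtain ⟨qp, hqpX, hqpmax⟩ := Set.exists_max_image X (fun z => d ⬝ᵥ z) hXfin ⟨x₁, hx₁⟩
    obtain ⟨f, hfd, hf⟩ := exists_perp_all d
      ((V.filter (fun v => v - x₁ ∉ Submodule.span ℝ {d})).image (fun v => v - x₁))
      (by
        intro w hw
        obtain ⟨v, hv, rfl⟩ := Finset.mem_image.mp hw
        exact (Finset.mem_filter.mp hv).2)
    have hfline : ∀ z, z - x₁ ∈ Submodule.span ℝ {d} → f ⬝ᵥ z = f ⬝ᵥ x₁ := by
      intro z hz
      obtain ⟨t, rfl⟩ := hcoord z hz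
      simp [dotProduct_add, dotProduct_smul, hfd]
    have hfoff : ∀ v ∈ V, v - x₁ ∉ Submodule.span ℝ {d} → f ⬝ᵥ v ≠ f ⬝ᵥ x₁ := by
      intro v hv hvl
      have := hf _ (Finset.mem_image_of_mem _ (Finset.mem_filter.mpr ⟨hv, hvl⟩))
      rwa [dotProduct_sub, sub_ne_zero] at this
    have hfX : ∀ z ∈ X, f ⬝ᵥ z = f ⬝ᵥ x₁ := fun z hz => hfline z (hdir z hz)
    set V₁ := V.filter (fun v => f ⬝ᵥ qm < f ⬝ᵥ v ∨ (f ⬝ᵥ v = f ⬝ᵥ qm ∧ d ⬝ᵥ v < d ⬝ᵥ qm))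
      with hV₁
    set V₂ := V.filter (fun v => f ⬝ᵥ v < f ⬝ᵥ qp ∨ (f ⬝ᵥ v = f ⬝ᵥ qp ∧ d ⬝ᵥ qp < d ⬝ᵥ v))
      with hV₂
    have h1 : V₁.card + 1 ≤ h := by
      apply key_lemma_s7 hh V hVS hvert f d qm (hXS _ hqmX) (hXP _ hqmX) (hXV _ hqmX) V₁
        (Finset.filter_subset _ _)
      · intro v hv
        exact (Finset.mem_filter.mp hv).2
      · intro p hpS hpP hpV₁ hpq
        by_cases hpV : p ∈ V
        · have hnot : ¬ (f ⬝ᵥ qm < f ⬝ᵥ p ∨ (f ⬝ᵥ p = f ⬝ᵥ qm ∧ d ⬝ᵥ p < d ⬝ᵥ qm)) :=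
            fun hc => hpV₁ (Finset.mem_filter.mpr ⟨hpV, hc⟩)
          push_neg at hnot
          by_cases hpl : p - x₁ ∈ Submodule.span ℝ {d}
          · right
            have hfp : f ⬝ᵥ p = f ⬝ᵥ qm := (hfline p hpl).trans (hfX qm hqmX).symm
            refine ⟨hfp, ?_⟩
            have hne : d ⬝ᵥ qm ≠ d ⬝ᵥ p := by
              intro he
              exact hpq (hinj p qm hpl (hdir qm hqmX) he.symm)
            exact lt_of_le_of_ne (hnot.2 hfp) hne
          · left
            have hne : f ⬝ᵥ p ≠ f ⬝ᵥ qm := by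
              rw [hfX qm hqmX]
              exact hfoff p hpV hpl
            exact lt_of_le_of_ne hnot.1 hne
        · have hpX := hmemX p hpS hpP hpV
          right
          refine ⟨(hfX p hpX).trans (hfX qm hqmX).symm, ?_⟩
          have hne : d ⬝ᵥ qm ≠ d ⬝ᵥ p := by
            intro he
            exact hpq (hinj p qm (hdir p hpX) (hdir qm hqmX) he.symm)
          exact lt_of_le_of_ne (hqmmin p hpX) hne
    have h2 : V₂.card + 1 ≤ h := by
      apply key_lemma_s7 hh V hVS hvert (-f) (-d) qp (hXS _ hqpX) (hXP _ hqpX) (hXV _ hqpX) V₂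
        (Finset.filter_subset _ _)
      · intro v hv
        have := (Finset.mem_filter.mp hv).2
        simpa only [neg_dotProduct, neg_lt_neg_iff, neg_inj] using this
      · intro p hpS hpP hpV₂ hpq
        simp only [neg_dotProduct, neg_lt_neg_iff, neg_inj]
        by_cases hpV : p ∈ V
        · have hnot : ¬ (f ⬝ᵥ p < f ⬝ᵥ qp ∨ (f ⬝ᵥ p = f ⬝ᵥ qp ∧ d ⬝ᵥ qp < d ⬝ᵥ p)) :=
            fun hc => hpV₂ (Finset.mem_filter.mpr ⟨hpV, hc⟩)
          push_neg at hnot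
          by_cases hpl : p - x₁ ∈ Submodule.span ℝ {d}
          · right
            have hfp : f ⬝ᵥ p = f ⬝ᵥ qp := (hfline p hpl).trans (hfX qp hqpX).symm
            refine ⟨hfp, ?_⟩
            have hne : d ⬝ᵥ p ≠ d ⬝ᵥ qp := by
              intro he
              exact hpq (hinj p qp hpl (hdir qp hqpX) he)
            exact lt_of_le_of_ne (hnot.2 hfp) hne
          · left
            have hne : f ⬝ᵥ qp ≠ f ⬝ᵥ p := by
              rw [hfX qp hqpX]
              exact (hfoff p hpV hpl).symm
            exact lt_of_le_of_ne hnot.1 hne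
        · have hpX := hmemX p hpS hpP hpV
          right
          refine ⟨(hfX p hpX).trans (hfX qp hqpX).symm, ?_⟩
          have hne : d ⬝ᵥ p ≠ d ⬝ᵥ qp := by
            intro he
            exact hpq (hinj p qp (hdir p hpX) (hdir qp hqpX) he)
          exact lt_of_le_of_ne (hqpmax p hpX) hne
    have hcover : V ⊆ V₁ ∪ V₂ := by
      intro v hv
      by_cases hvl : v - x₁ ∈ Submodule.span ℝ {d}
      · have hfv : f ⬝ᵥ v = f ⬝ᵥ x₁ := hfline v hvl
        rcases lt_trichotomy (d ⬝ᵥ v) (d ⬝ᵥ qm) with hlt | heq | hgt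
        · exact Finset.mem_union_left _ (Finset.mem_filter.mpr
            ⟨hv, Or.inr ⟨hfv.trans (hfX qm hqmX).symm, hlt⟩⟩)
        · exact absurd (hinj v qm hvl (hdir qm hqmX) heq) (fun hc => hXV qm hqmX (hc ▸ hv))
        rcases lt_trichotomy (d ⬝ᵥ qp) (d ⬝ᵥ v) with hlt' | heq' | hgt'
        · exact Finset.mem_union_right _ (Finset.mem_filter.mpr
            ⟨hv, Or.inr ⟨hfv.trans (hfX qp hqpX).symm, hlt'⟩⟩)
        · exact absurd (hinj v qp hvl (hdir qp hqpX) heq'.symm)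
            (fun hc => hXV qp hqpX (hc ▸ hv))
        · -- middle: contradiction with extremality
          exfalso
          obtain ⟨tv, hveq⟩ := hcoord v hvl
          obtain ⟨tm, hqmeq⟩ := hcoord qm (hdir qm hqmX)
          obtain ⟨tp, hqpeq⟩ := hcoord qp (hdir qp hqpX)
          have htm : d ⬝ᵥ qm = d ⬝ᵥ x₁ + tm * (d ⬝ᵥ d) := by rw [hqmeq, hdot]
          have htp : d ⬝ᵥ qp = d ⬝ᵥ x₁ + tp * (d ⬝ᵥ d) := by rw [hqpeq, hdot]
          have htv : d ⬝ᵥ v = d ⬝ᵥ x₁ + tv * (d ⬝ᵥ d) := by rw [hveq, hdot]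
          have h1' : tm < tv := by nlinarith
          have h2' : tv < tp := by nlinarith
          have hpos : (0:ℝ) < tp - tm := by linarith
          set a := (tp - tv) / (tp - tm) with ha
          set b := (tv - tm) / (tp - tm) with hb
          have hab : a + b = 1 := by
            rw [ha, hb, ← add_div]
            rw [show tp - tv + (tv - tm) = tp - tm by ring]
            exact div_self hpos.ne'
          have hts : a * tm + b * tp = tv := by
            rw [ha, hb, div_mul_eq_mul_div, div_mul_eq_mul_div, ← add_div,
              eq_comm, eq_div_iff hpos.ne']
            ring
          have hseg : v ∈ openSegment ℝ qm qp := by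
            refine ⟨a, b, div_pos (by linarith) hpos, div_pos (by linarith) hpos, hab, ?_⟩
            calc a • qm + b • qp = (a + b) • x₁ + (a * tm + b * tp) • d := by
                  rw [hqmeq, hqpeq]
                  simp only [smul_add, smul_smul, add_smul]
                  abel
              _ = v := by rw [hab, hts, one_smul, ← hveq]
          have hvext : v ∈ Set.extremePoints ℝ (convexHull ℝ (V : Set (Fin n → ℝ))) := by
            rw [hvert]
            exact Finset.mem_coe.mpr hv
          rw [mem_extremePoints] at hvext
          have := (hvext.2 qm (hXP qm hqmX) qp (hXP qp hqpX) hseg).1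
          exact hXV qm hqmX (this ▸ hv)
      · have hne : f ⬝ᵥ v ≠ f ⬝ᵥ x₁ := hfoff v hv hvl
        rcases lt_or_gt_of_ne hne with hlt | hgt
        · exact Finset.mem_union_right _ (Finset.mem_filter.mpr
            ⟨hv, Or.inl (by rw [hfX qp hqpX]; exact hlt)⟩)
        · exact Finset.mem_union_left _ (Finset.mem_filter.mpr
            ⟨hv, Or.inl (by rw [hfX qm hqmX]; exact hgt)⟩)
    have hcard := (Finset.card_le_card hcover).trans (Finset.card_union_le V₁ V₂)
    omega
end
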